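/- arXiv:2104.02348 — 6 statements merged into one kernel-verified Lean document; each statement's English description precedes it below -/
import Mathlib

section
/- Let T be a trigonometric polynomial of degree at most n, i.e., T(t) = a₀ + Σ_{k=1}^n (a_k cos(kt) + b_k sin(kt)) with real coefficients. Then for every θ ∈ ℝ, |T'(θ)| ≤ n · sup_{t∈ℝ} |T(t)|. -/
open Real Finset

noncomputable def brNode (n j : ℕ) : ℝ := (2*j+1) * Real.pi / (2*n)

lemma brExpSum (n : ℕ) (hn : 1 ≤ n) (r : ℤ) (hr : ¬ ((2*(n:ℤ)) ∣ r)) :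
    ∑ j ∈ Finset.range (2*n), Complex.exp ((r * brNode n j) * Complex.I) = 0 := by
  have hnR : (n:ℝ) ≠ 0 := by positivity
  set w : ℂ := Complex.exp ((r * (Real.pi / n)) * Complex.I) with hw
  have hterm : ∀ j ∈ Finset.range (2*n),
      Complex.exp ((r * brNode n j) * Complex.I)
        = Complex.exp ((r * (Real.pi / (2*n))) * Complex.I) * w ^ j := by
    intro j _
    rw [hw, ← Complex.exp_nat_mul, ← Complex.exp_add]
    congr 1
    have hb : ((brNode n j : ℝ) : ℂ) = (2*(j:ℂ)+1) * (Real.pi:ℂ) / (2*(n:ℂ)) := by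
      simp only [brNode]; push_cast; ring
    rw [hb]
    have h2n : (n:ℂ) ≠ 0 := by exact_mod_cast hnR
    field_simp
    ring
  rw [Finset.sum_congr rfl hterm, ← Finset.mul_sum]
  have hw1 : w ≠ 1 := by
    intro h
    rw [hw, Complex.exp_eq_one_iff] at h
    obtain ⟨m, hm⟩ := h
    have hπ : (Real.pi:ℂ) ≠ 0 := by exact_mod_cast Real.pi_ne_zero
    have hI : Complex.I ≠ 0 := Complex.I_ne_zero
    have h2n : (n:ℂ) ≠ 0 := by exact_mod_cast hnR
    have : (r:ℂ) = 2*n*m := by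
      field_simp at hm
      have := mul_right_cancel₀ hI (by linear_combination (↑Real.pi * Complex.I) * hm : (r:ℂ) * Real.pi * Complex.I = 2*n*m*Real.pi*Complex.I)
      exact mul_right_cancel₀ hπ this
    have : r = 2*n*m := by exact_mod_cast this
    exact hr ⟨m, by omega⟩
  have hw2n : w ^ (2*n) = 1 := by
    rw [hw, ← Complex.exp_nat_mul]
    have : (2*n : ℕ) * ((r:ℂ) * (Real.pi / n) * Complex.I) = r * (2*Real.pi*Complex.I) := by
      have h2n : (n:ℂ) ≠ 0 := by exact_mod_cast hnR
      push_cast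
      field_simp
    rw [this, Complex.exp_int_mul_two_pi_mul_I]
  rw [geom_sum_eq hw1, hw2n]
  simp

lemma brCosSum (n : ℕ) (hn : 1 ≤ n) (r : ℤ) (hr : ¬ ((2*(n:ℤ)) ∣ r)) :
    ∑ j ∈ Finset.range (2*n), Real.cos (r * brNode n j) = 0 := by
  have h := brExpSum n hn r hr
  have h2 : ∀ j : ℕ, ((r:ℂ) * brNode n j) * Complex.I = ((r * brNode n j : ℝ) : ℂ) * Complex.I := by
    intro j; push_cast; ring
  calc ∑ j ∈ Finset.range (2*n), Real.cos (r * brNode n j)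
      = (∑ j ∈ Finset.range (2*n), Complex.exp ((r * brNode n j) * Complex.I)).re := by
        rw [Complex.re_sum]
        refine Finset.sum_congr rfl fun j _ => ?_
        rw [h2 j, Complex.exp_ofReal_mul_I_re]
    _ = 0 := by rw [h]; rfl

lemma brSinSum (n : ℕ) (hn : 1 ≤ n) (r : ℤ) (hr : ¬ ((2*(n:ℤ)) ∣ r)) :
    ∑ j ∈ Finset.range (2*n), Real.sin (r * brNode n j) = 0 := by
  have h := brExpSum n hn r hr
  have h2 : ∀ j : ℕ, ((r:ℂ) * brNode n j) * Complex.I = ((r * brNode n j : ℝ) : ℂ) * Complex.I := by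
    intro j; push_cast; ring
  calc ∑ j ∈ Finset.range (2*n), Real.sin (r * brNode n j)
      = (∑ j ∈ Finset.range (2*n), Complex.exp ((r * brNode n j) * Complex.I)).im := by
        rw [Complex.im_sum]
        refine Finset.sum_congr rfl fun j _ => ?_
        rw [h2 j, Complex.exp_ofReal_mul_I_im]
    _ = 0 := by rw [h]; rfl

lemma brDirichlet (n : ℕ) (hn : 1 ≤ n) (t : ℝ) (h : Real.sin (t/2) ≠ 0) :
    Real.sin (n*t) * (Real.cos (t/2) / Real.sin (t/2))
      = 1 + 2 * ∑ m ∈ Finset.Icc 1 (n-1), Real.cos (m*t) + Real.cos (n*t) := by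
  have h1 : Real.sin t = 2 * Real.sin (t/2) * Real.cos (t/2) := by
    have := Real.sin_two_mul (t/2); rw [show 2*(t/2) = t by ring] at this; linarith
  have h2 : Real.cos t = 2 * Real.cos (t/2)^2 - 1 := by
    have := Real.cos_two_mul (t/2); rw [show 2*(t/2) = t by ring] at this; linarith
  induction n, hn using Nat.le_induction with
  | base =>
      simp only [Nat.cast_one, one_mul]
      rw [show Finset.Icc 1 (1-1) = (∅ : Finset ℕ) by rfl]
      rw [h1, h2]
      field_simp
      ring
  | succ n hn ih =>
      obtain ⟨m, rfl⟩ : ∃ m, n = m+1 := ⟨n-1, by omega⟩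
      have hstep : Real.sin ((((m+1):ℕ)+1:ℝ)*t)
          = Real.sin (((m+1):ℕ)*t) + 2 * Real.sin (t/2) * Real.cos ((((m+1):ℕ):ℝ)*t + t/2) := by
        have := Real.sin_sub_sin ((((m+1):ℕ)+1:ℝ)*t) ((((m+1):ℕ):ℝ)*t)
        have e1 : ((((m+1):ℕ)+1:ℝ)*t - (((m+1):ℕ):ℝ)*t)/2 = t/2 := by push_cast; ring
        have e2 : ((((m+1):ℕ)+1:ℝ)*t + (((m+1):ℕ):ℝ)*t)/2 = (((m+1):ℕ):ℝ)*t + t/2 := by push_cast; ring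
        rw [e1, e2] at this
        linarith
      have hprod : 2 * Real.cos ((((m+1):ℕ):ℝ)*t + t/2) * Real.cos (t/2)
          = Real.cos ((((m+1):ℕ)+1:ℝ)*t) + Real.cos ((((m+1):ℕ):ℝ)*t) := by
        have c1 := Real.cos_add ((((m+1):ℕ):ℝ)*t + t/2) (t/2)
        have c2 := Real.cos_sub ((((m+1):ℕ):ℝ)*t + t/2) (t/2)
        have e1 : (((m+1):ℕ):ℝ)*t + t/2 + t/2 = ((((m+1):ℕ):ℝ)+1)*t := by push_cast; ring
        have e2 : (((m+1):ℕ):ℝ)*t + t/2 - t/2 = (((m+1):ℕ):ℝ)*t := by push_cast; ring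
        rw [e1] at c1; rw [e2] at c2
        linarith
      have hsum : ∑ k ∈ Finset.Icc 1 (m+1), Real.cos ((k:ℝ)*t)
          = ∑ k ∈ Finset.Icc 1 m, Real.cos ((k:ℝ)*t) + Real.cos (((m:ℝ)+1) * t) := by
        rw [Finset.sum_Icc_succ_top (by omega)]
        push_cast; ring_nf
        rw [add_comm]; congr 1; exact Finset.sum_congr rfl fun x _ => by rw [mul_comm]
      simp only [Nat.add_sub_cancel] at ih ⊢
      push_cast at hstep hprod ⊢
      rw [hstep, hsum]
      have key : (Real.sin ((m+1:ℝ) * t) + 2 * Real.sin (t / 2) * Real.cos ((m+1:ℝ) * t + t / 2)) *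
          (Real.cos (t / 2) / Real.sin (t / 2))
          = Real.sin ((m+1:ℝ)*t) * (Real.cos (t/2) / Real.sin (t/2))
            + 2 * Real.cos ((m+1:ℝ)*t + t/2) * Real.cos (t/2) := by
        field_simp
      push_cast at ih
      rw [key, ih]
      linarith

lemma brNode_sin_pos (n : ℕ) (hn : 1 ≤ n) (j : ℕ) (hj : j < 2*n) :
    0 < Real.sin (brNode n j / 2) := by
  apply Real.sin_pos_of_pos_of_lt_pi
  · have h1 : (0:ℝ) < (2*j+1) * Real.pi := by positivity
    have h2 : (0:ℝ) < 2*n := by positivity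
    simp only [brNode]
    positivity
  · simp only [brNode]
    rw [div_div, div_lt_iff₀ (by positivity)]
    have hπ := Real.pi_pos
    have hj' : (j:ℝ) + 1 ≤ 2*(n:ℝ) := by exact_mod_cast hj
    nlinarith

lemma brEps (n : ℕ) (hn : 1 ≤ n) (j : ℕ) :
    Real.sin (n * brNode n j) = (-1:ℝ)^j := by
  have hnR : (n:ℝ) ≠ 0 := by positivity
  have h : (n:ℝ) * brNode n j = Real.pi/2 + j * Real.pi := by
    simp only [brNode]; field_simp; ring
  rw [h, Real.sin_add_nat_mul_pi, Real.sin_pi_div_two, mul_one]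

lemma brNotDvd (n : ℕ) (r : ℤ) (h0 : r ≠ 0) (h : r.natAbs < 2*n) : ¬ ((2*(n:ℤ)) ∣ r) := by
  rintro ⟨c, rfl⟩
  rcases eq_or_ne c 0 with rfl | hc
  · simp at h0
  · have h1 : (2*(n:ℤ)*c).natAbs = 2*n*c.natAbs := by
      simp [Int.natAbs_mul]
    have h2 : 1 ≤ c.natAbs := Int.natAbs_pos.mpr hc
    rw [h1] at h
    nlinarith

lemma brCosProdSplit (n : ℕ) (p q : ℤ) :
    ∑ j ∈ Finset.range (2*n), Real.cos (p * brNode n j) * Real.cos (q * brNode n j)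
      = ((∑ j ∈ Finset.range (2*n), Real.cos ((p+q) * brNode n j))
        + ∑ j ∈ Finset.range (2*n), Real.cos ((p-q) * brNode n j))/2 := by
  rw [← Finset.sum_add_distrib, Finset.sum_div]
  refine Finset.sum_congr rfl fun j _ => ?_
  have c1 := Real.cos_add ((p:ℝ) * brNode n j) ((q:ℝ) * brNode n j)
  have c2 := Real.cos_sub ((p:ℝ) * brNode n j) ((q:ℝ) * brNode n j)
  rw [show (p:ℝ) * brNode n j + (q:ℝ) * brNode n j = ((p:ℝ)+(q:ℝ)) * brNode n j by ring] at c1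
  rw [show (p:ℝ) * brNode n j - (q:ℝ) * brNode n j = ((p:ℝ)-(q:ℝ)) * brNode n j by ring] at c2
  linarith

lemma brCosProdSum (n : ℕ) (hn : 1 ≤ n) (p q : ℤ) (h1 : p + q ≠ 0) (h2 : (p+q).natAbs < 2*n)
    (h3 : p - q ≠ 0) (h4 : (p-q).natAbs < 2*n) :
    ∑ j ∈ Finset.range (2*n), Real.cos (p * brNode n j) * Real.cos (q * brNode n j) = 0 := by
  have e1 := brCosSum n hn (p+q) (brNotDvd n _ h1 h2)
  have e2 := brCosSum n hn (p-q) (brNotDvd n _ h3 h4)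
  push_cast at e1 e2
  rw [brCosProdSplit, e1, e2]
  norm_num

lemma brCosSqSum (n : ℕ) (hn : 1 ≤ n) (p : ℤ) (h1 : p ≠ 0) (h2 : (2*p).natAbs < 2*n) :
    ∑ j ∈ Finset.range (2*n), Real.cos (p * brNode n j) * Real.cos (p * brNode n j) = n := by
  have e1 := brCosSum n hn (p+p) (brNotDvd n _ (by omega) (by omega))
  push_cast at e1
  rw [brCosProdSplit, e1]
  simp

lemma brQ (n : ℕ) (hn : 1 ≤ n) (k : ℕ) (hk : k < n) :
    ∑ j ∈ Finset.range (2*n),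
      (-1:ℝ)^j * (Real.cos (brNode n j/2) / Real.sin (brNode n j/2)) * Real.cos (k * brNode n j)
      = 2*n := by
  have hterm : ∀ j ∈ Finset.range (2*n),
      (-1:ℝ)^j * (Real.cos (brNode n j/2) / Real.sin (brNode n j/2)) * Real.cos (k * brNode n j)
        = Real.cos (k * brNode n j)
          + 2 * ∑ m ∈ Finset.Icc 1 (n-1), (Real.cos (m * brNode n j) * Real.cos (k * brNode n j))
          + Real.cos (n * brNode n j) * Real.cos (k * brNode n j) := by
    intro j hj
    have hs := (brNode_sin_pos n hn j (Finset.mem_range.mp hj)).ne'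
    rw [← brEps n hn j, brDirichlet n hn (brNode n j) hs, ← Finset.sum_mul]
    ring
  rw [Finset.sum_congr rfl hterm, Finset.sum_add_distrib, Finset.sum_add_distrib]
  have hmid : ∑ j ∈ Finset.range (2*n),
      2 * ∑ m ∈ Finset.Icc 1 (n-1), (Real.cos (m * brNode n j) * Real.cos (k * brNode n j))
      = 2 * ∑ m ∈ Finset.Icc 1 (n-1), ∑ j ∈ Finset.range (2*n),
          (Real.cos (m * brNode n j) * Real.cos (k * brNode n j)) := by
    rw [← Finset.mul_sum, Finset.sum_comm]
  rw [hmid]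
  have hA : ∑ j ∈ Finset.range (2*n), Real.cos (k * brNode n j)
      = if k = 0 then (2*n : ℝ) else 0 := by
    rcases eq_or_ne k 0 with rfl | hk0
    · simp
    · have h := brCosSum n hn (k:ℤ) (brNotDvd n _ (by exact_mod_cast hk0) (by simpa using by omega))
      push_cast at h
      simp [hk0, h]
  have hB : ∑ j ∈ Finset.range (2*n), Real.cos (n * brNode n j) * Real.cos (k * brNode n j) = 0 := by
    have h := brCosProdSum n hn (n:ℤ) (k:ℤ) (by omega)
      (by rw [show ((n:ℤ)+(k:ℤ)) = ((n+k : ℕ) : ℤ) by push_cast; ring, Int.natAbs_natCast]; omega)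
      (by omega)
      (by rw [show ((n:ℤ)-(k:ℤ)).natAbs = n - k by omega]; omega)
    push_cast at h
    exact h
  have hC : ∀ m ∈ Finset.Icc 1 (n-1),
      ∑ j ∈ Finset.range (2*n), Real.cos (m * brNode n j) * Real.cos (k * brNode n j)
        = if m = k then (n:ℝ) else 0 := by
    intro m hm
    rw [Finset.mem_Icc] at hm
    rcases eq_or_ne m k with rfl | hmk
    · have h := brCosSqSum n hn (m:ℤ) (by omega) (by rw [show ((2:ℤ)*(m:ℤ)).natAbs = 2*m by omega]; omega)
      push_cast at h
      simp [h]
    · have h := brCosProdSum n hn (m:ℤ) (k:ℤ) (by omega)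
        (by rw [show ((m:ℤ)+(k:ℤ)).natAbs = m + k by omega]; omega)
        (by omega)
        (by omega)
      push_cast at h
      simp [hmk, h]
  rw [Finset.sum_congr rfl hC, Finset.sum_ite_eq' (Finset.Icc 1 (n-1)) k (fun _ => (n:ℝ)), hA, hB]
  rcases eq_or_ne k 0 with rfl | hk0
  · simp
  · have : k ∈ Finset.Icc 1 (n-1) := Finset.mem_Icc.mpr ⟨by omega, by omega⟩
    simp [this, hk0]

lemma brP (n : ℕ) (hn : 1 ≤ n) (k : ℕ) (hk : k ≤ n) :
    ∑ j ∈ Finset.range (2*n),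
      (-1:ℝ)^j * (Real.sin (k * brNode n j) / Real.sin (brNode n j/2)^2)
      = 4*n*k := by
  induction k using Nat.strong_induction_on with
  | _ k ih =>
    match k, hk with
    | 0, _ => simp
    | 1, hk1 =>
        have h := brQ n hn 0 (by omega)
        simp only [Nat.cast_zero, zero_mul, Real.cos_zero, mul_one] at h
        have hterm : ∀ j ∈ Finset.range (2*n),
            (-1:ℝ)^j * (Real.sin ((1:ℕ) * brNode n j) / Real.sin (brNode n j/2)^2)
              = 2 * ((-1:ℝ)^j * (Real.cos (brNode n j/2) / Real.sin (brNode n j/2))) := by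
          intro j hj
          have hs := (brNode_sin_pos n hn j (Finset.mem_range.mp hj)).ne'
          have hsin : Real.sin (brNode n j) = 2 * Real.sin (brNode n j/2) * Real.cos (brNode n j/2) := by
            have := Real.sin_two_mul (brNode n j/2)
            rw [show 2*(brNode n j/2) = brNode n j by ring] at this
            linarith
          rw [Nat.cast_one, one_mul, hsin]
          field_simp
        rw [Finset.sum_congr rfl hterm, ← Finset.mul_sum, h]
        push_cast; ring
    | (k+2), hk2 =>
        have hQ := brQ n hn (k+1) (by omega)
        have hP := ih k (by omega) (by omega)
        have hterm : ∀ j ∈ Finset.range (2*n),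
            (-1:ℝ)^j * (Real.sin ((k+2:ℕ) * brNode n j) / Real.sin (brNode n j/2)^2)
              = (-1:ℝ)^j * (Real.sin ((k:ℕ) * brNode n j) / Real.sin (brNode n j/2)^2)
                + 4 * ((-1:ℝ)^j * (Real.cos (brNode n j/2) / Real.sin (brNode n j/2))
                    * Real.cos ((k+1:ℕ) * brNode n j)) := by
          intro j hj
          have hs := (brNode_sin_pos n hn j (Finset.mem_range.mp hj)).ne'
          have hdiff : Real.sin ((k+2:ℕ) * brNode n j)
              = Real.sin ((k:ℕ) * brNode n j)
                + 2 * Real.sin (brNode n j) * Real.cos ((k+1:ℕ) * brNode n j) := by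
            have h0 := Real.sin_sub_sin ((k+2:ℕ) * brNode n j) ((k:ℕ) * brNode n j)
            rw [show (((k+2:ℕ):ℝ) * brNode n j - ((k:ℕ):ℝ) * brNode n j)/2 = brNode n j by push_cast; ring,
              show (((k+2:ℕ):ℝ) * brNode n j + ((k:ℕ):ℝ) * brNode n j)/2 = ((k+1:ℕ):ℝ) * brNode n j by push_cast; ring] at h0
            linarith
          have hsin : Real.sin (brNode n j) = 2 * Real.sin (brNode n j/2) * Real.cos (brNode n j/2) := by
            have := Real.sin_two_mul (brNode n j/2)
            rw [show 2*(brNode n j/2) = brNode n j by ring] at this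
            linarith
          rw [hdiff, hsin]
          field_simp
          ring
        rw [Finset.sum_congr rfl hterm, Finset.sum_add_distrib, hP, ← Finset.mul_sum, hQ]
        push_cast; ring

lemma brA (n : ℕ) (hn : 1 ≤ n) (k : ℕ) :
    ∑ j ∈ Finset.range (2*n),
      (-1:ℝ)^j * (Real.cos (k * brNode n j) / Real.sin (brNode n j/2)^2) = 0 := by
  refine Finset.sum_involution (fun j _ => 2*n-1-j) ?_ ?_ (fun j hj => by
    have := Finset.mem_range.mp hj
    exact Finset.mem_range.mpr (show 2*n-1-j < 2*n by omega)) ?_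
  · intro j hj
    have hj' : j < 2*n := Finset.mem_range.mp hj
    have hnR : (n:ℝ) ≠ 0 := by positivity
    have hnode : brNode n (2*n-1-j) = 2*Real.pi - brNode n j := by
      simp only [brNode]
      rw [show ((2*n-1-j:ℕ):ℝ) = 2*(n:ℝ) - 1 - j by
        rw [Nat.cast_sub (by omega), Nat.cast_sub (by omega)]; push_cast; ring]
      field_simp
      ring
    have hcos : Real.cos (k * brNode n (2*n-1-j)) = Real.cos (k * brNode n j) := by
      have hc : Real.cos (((2*k:ℕ):ℝ) * Real.pi) = 1 := by
        rw [show ((2*k:ℕ):ℝ)*Real.pi = (k:ℝ)*(2*Real.pi) by push_cast; ring]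
        exact Real.cos_nat_mul_two_pi k
      have hs0 : Real.sin (((2*k:ℕ):ℝ) * Real.pi) = 0 := Real.sin_nat_mul_pi (2*k)
      rw [hnode, show (k:ℝ) * (2*Real.pi - brNode n j) = ((2*k:ℕ):ℝ)*Real.pi - k * brNode n j by push_cast; ring,
        Real.cos_sub, hc, hs0]
      ring
    have hsin : Real.sin (brNode n (2*n-1-j) / 2) = Real.sin (brNode n j / 2) := by
      rw [hnode, show (2*Real.pi - brNode n j)/2 = Real.pi - brNode n j/2 by ring, Real.sin_pi_sub]
    have hpow : (-1:ℝ)^(2*n-1-j) = -(-1:ℝ)^j := by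
      have h1 : (-1:ℝ)^(2*n-1-j) * (-1:ℝ)^j = -1 := by
        rw [← pow_add, show 2*n-1-j+j = 2*n-1 by omega]
        exact Odd.neg_one_pow ⟨n-1, by omega⟩
      have h2 : (-1:ℝ)^j * (-1:ℝ)^j = 1 := by
        rw [← pow_add]; exact Even.neg_one_pow ⟨j, rfl⟩
      calc (-1:ℝ)^(2*n-1-j) = (-1:ℝ)^(2*n-1-j) * ((-1:ℝ)^j * (-1:ℝ)^j) := by rw [h2, mul_one]
        _ = ((-1:ℝ)^(2*n-1-j) * (-1:ℝ)^j) * (-1:ℝ)^j := by ring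
        _ = -(-1:ℝ)^j := by rw [h1]; ring
    rw [hcos, hsin, hpow]
    ring
  · intro j hj _
    have hj' : j < 2*n := Finset.mem_range.mp hj
    show 2*n-1-j ≠ j
    omega
  · intro j hj
    have hj' : j < 2*n := Finset.mem_range.mp hj
    show 2*n-1-(2*n-1-j) = j
    omega

lemma brNorm (n : ℕ) (hn : 1 ≤ n) :
    ∑ j ∈ Finset.range (2*n), (1 / Real.sin (brNode n j/2)^2) = 4*(n:ℝ)*n := by
  have h := brP n hn n le_rfl
  rw [Finset.sum_congr rfl (fun j (hj : j ∈ Finset.range (2*n)) => ?_)] at h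
  · exact h
  · show (-1:ℝ)^j * (Real.sin (n * brNode n j) / Real.sin (brNode n j/2)^2)
      = 1 / Real.sin (brNode n j/2)^2
    rw [brEps n hn j]
    have h2 : (-1:ℝ)^j * (-1:ℝ)^j = 1 := by
      rw [← pow_add]; exact Even.neg_one_pow ⟨j, rfl⟩
    rw [← mul_div_assoc, h2]

lemma brHasDeriv (n : ℕ) (a b : ℕ → ℝ) (T : ℝ → ℝ)
    (hT : ∀ t : ℝ, T t =
      a 0 + ∑ k ∈ Finset.Icc 1 n, (a k * Real.cos (k * t) + b k * Real.sin (k * t)))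
    (θ : ℝ) :
    HasDerivAt T (∑ k ∈ Finset.Icc 1 n, (k:ℝ) * (b k * Real.cos (k*θ) - a k * Real.sin (k*θ))) θ := by
  have hfun : T = fun t => a 0 + ∑ k ∈ Finset.Icc 1 n, (a k * Real.cos (k * t) + b k * Real.sin (k * t)) :=
    funext hT
  rw [hfun]
  have hterm : ∀ k ∈ Finset.Icc 1 n,
      HasDerivAt (fun t : ℝ => a k * Real.cos (k * t) + b k * Real.sin (k * t))
        ((k:ℝ) * (b k * Real.cos (k*θ) - a k * Real.sin (k*θ))) θ := by
    intro k _
    have hlin : HasDerivAt (fun t : ℝ => (k:ℝ) * t) (k:ℝ) θ := by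
      simpa using (hasDerivAt_id θ).const_mul (k:ℝ)
    have hc := (hlin.cos.const_mul (a k))
    have hs := (hlin.sin.const_mul (b k))
    have := hc.add hs
    exact this.congr_deriv (by ring)
  have hsum := HasDerivAt.fun_sum hterm
  have := (hasDerivAt_const θ (a 0)).add hsum
  exact this.congr_deriv (by simp)

lemma brFormula (n : ℕ) (hn : 1 ≤ n) (a b : ℕ → ℝ) (T : ℝ → ℝ)
    (hT : ∀ t : ℝ, T t =
      a 0 + ∑ k ∈ Finset.Icc 1 n, (a k * Real.cos (k * t) + b k * Real.sin (k * t)))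
    (θ : ℝ) :
    deriv T θ = (1/(4*(n:ℝ))) *
      ∑ j ∈ Finset.range (2*n), (-1:ℝ)^j * (T (θ + brNode n j) / Real.sin (brNode n j/2)^2) := by
  have hnR : (n:ℝ) ≠ 0 := by positivity
  have key : ∀ j ∈ Finset.range (2*n),
      (-1:ℝ)^j * (T (θ + brNode n j) / Real.sin (brNode n j/2)^2)
        = a 0 * ((-1:ℝ)^j * (Real.cos ((0:ℕ) * brNode n j) / Real.sin (brNode n j/2)^2))
          + ∑ k ∈ Finset.Icc 1 n,
            ((a k * Real.cos (k*θ) + b k * Real.sin (k*θ))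
                * ((-1:ℝ)^j * (Real.cos (k * brNode n j) / Real.sin (brNode n j/2)^2))
              + (b k * Real.cos (k*θ) - a k * Real.sin (k*θ))
                * ((-1:ℝ)^j * (Real.sin (k * brNode n j) / Real.sin (brNode n j/2)^2))) := by
    intro j _
    rw [hT (θ + brNode n j)]
    rw [Nat.cast_zero, zero_mul, Real.cos_zero]
    have hexp : ∀ k : ℕ,
        a k * Real.cos (k * (θ + brNode n j)) + b k * Real.sin (k * (θ + brNode n j))
        = a k * (Real.cos (k*θ) * Real.cos (k * brNode n j) - Real.sin (k*θ) * Real.sin (k * brNode n j))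
          + b k * (Real.sin (k*θ) * Real.cos (k * brNode n j) + Real.cos (k*θ) * Real.sin (k * brNode n j)) := by
      intro k
      rw [show (k:ℝ) * (θ + brNode n j) = k*θ + k*brNode n j by ring, Real.cos_add, Real.sin_add]
    simp only [hexp]
    rw [add_div, Finset.sum_div, mul_add, Finset.mul_sum]
    congr 1
    · ring
    · exact Finset.sum_congr rfl fun k _ => by ring
  rw [Finset.sum_congr rfl key, Finset.sum_add_distrib, ← Finset.mul_sum, brA n hn 0, mul_zero, zero_add]
  rw [Finset.sum_comm]
  have inner : ∀ k ∈ Finset.Icc 1 n,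
      ∑ j ∈ Finset.range (2*n),
        ((a k * Real.cos (k*θ) + b k * Real.sin (k*θ))
            * ((-1:ℝ)^j * (Real.cos (k * brNode n j) / Real.sin (brNode n j/2)^2))
          + (b k * Real.cos (k*θ) - a k * Real.sin (k*θ))
            * ((-1:ℝ)^j * (Real.sin (k * brNode n j) / Real.sin (brNode n j/2)^2)))
        = (b k * Real.cos (k*θ) - a k * Real.sin (k*θ)) * (4*(n:ℝ)*k) := by
    intro k hk
    rw [Finset.sum_add_distrib, ← Finset.mul_sum, ← Finset.mul_sum,
      brA n hn k, brP n hn k (Finset.mem_Icc.mp hk).2, mul_zero, zero_add]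
  rw [Finset.sum_congr rfl inner, (brHasDeriv n a b T hT θ).deriv, Finset.mul_sum]
  exact Finset.sum_congr rfl fun k _ => by field_simp


/-- Bernstein's inequality for trigonometric polynomials:
if `T(t) = a₀ + ∑_{k=1}^n (aₖ cos(kt) + bₖ sin(kt))`, then
`|T'(θ)| ≤ n · sup_t |T(t)|` for every real `θ`. -/
theorem bernstein_trig_inequality (n : ℕ) (a b : ℕ → ℝ) (T : ℝ → ℝ)
    (hT : ∀ t : ℝ, T t =
      a 0 + ∑ k ∈ Finset.Icc 1 n, (a k * Real.cos (k * t) + b k * Real.sin (k * t)))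
    (θ : ℝ) :
    |deriv T θ| ≤ (n : ℝ) * ⨆ t : ℝ, |T t| := by
  rcases Nat.eq_zero_or_pos n with rfl | hn
  · have hconst : T = fun _ => a 0 := funext fun t => by simpa using hT t
    rw [hconst]
    simp
  · set M := ⨆ t : ℝ, |T t| with hM
    have hBdd : BddAbove (Set.range fun t => |T t|) := by
      refine ⟨|a 0| + ∑ k ∈ Finset.Icc 1 n, (|a k| + |b k|), ?_⟩
      rintro x ⟨t, rfl⟩
      show |T t| ≤ _
      rw [hT t]
      calc |a 0 + ∑ k ∈ Finset.Icc 1 n, (a k * Real.cos (k * t) + b k * Real.sin (k * t))|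
          ≤ |a 0| + |∑ k ∈ Finset.Icc 1 n, (a k * Real.cos (k * t) + b k * Real.sin (k * t))| :=
            abs_add_le _ _
        _ ≤ |a 0| + ∑ k ∈ Finset.Icc 1 n, |a k * Real.cos (k * t) + b k * Real.sin (k * t)| := by
            exact add_le_add_right (Finset.abs_sum_le_sum_abs _ _) _
        _ ≤ |a 0| + ∑ k ∈ Finset.Icc 1 n, (|a k| + |b k|) := by
            refine add_le_add_right (Finset.sum_le_sum fun k _ => ?_) _
            calc |a k * Real.cos (k * t) + b k * Real.sin (k * t)|
                ≤ |a k * Real.cos (k * t)| + |b k * Real.sin (k * t)| := abs_add_le _ _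
              _ ≤ |a k| + |b k| := by
                  rw [abs_mul, abs_mul]
                  have h1 := Real.abs_cos_le_one (k * t)
                  have h2 := Real.abs_sin_le_one (k * t)
                  have := abs_nonneg (a k)
                  have := abs_nonneg (b k)
                  nlinarith
    have hMle : ∀ t, |T t| ≤ M := fun t => le_ciSup hBdd t
    have hM0 : 0 ≤ M := le_trans (abs_nonneg _) (hMle 0)
    rw [brFormula n hn a b T hT θ, abs_mul, abs_of_pos (show (0:ℝ) < 1/(4*(n:ℝ)) by positivity)]
    have hsum : |∑ j ∈ Finset.range (2*n), (-1:ℝ)^j * (T (θ + brNode n j) / Real.sin (brNode n j/2)^2)|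
        ≤ M * (4*(n:ℝ)*n) := by
      calc |∑ j ∈ Finset.range (2*n), (-1:ℝ)^j * (T (θ + brNode n j) / Real.sin (brNode n j/2)^2)|
          ≤ ∑ j ∈ Finset.range (2*n), |(-1:ℝ)^j * (T (θ + brNode n j) / Real.sin (brNode n j/2)^2)| :=
            Finset.abs_sum_le_sum_abs _ _
        _ ≤ ∑ j ∈ Finset.range (2*n), M * (1 / Real.sin (brNode n j/2)^2) := by
            refine Finset.sum_le_sum fun j hj => ?_
            have hc := brNode_sin_pos n hn j (Finset.mem_range.mp hj)
            have hc2 : (0:ℝ) < Real.sin (brNode n j/2)^2 := pow_pos hc 2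
            rw [abs_mul, abs_pow, abs_neg, abs_one, one_pow, one_mul, abs_div,
              abs_of_pos hc2, mul_one_div]
            exact div_le_div_of_nonneg_right (hMle _) hc2.le |>.trans_eq rfl
        _ = M * (4*(n:ℝ)*n) := by rw [← Finset.mul_sum, brNorm n hn]
    calc (1/(4*(n:ℝ))) * |∑ j ∈ Finset.range (2*n), (-1:ℝ)^j * (T (θ + brNode n j) / Real.sin (brNode n j/2)^2)|
        ≤ (1/(4*(n:ℝ))) * (M * (4*(n:ℝ)*n)) := by
          exact mul_le_mul_of_nonneg_left hsum (by positivity)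
      _ = n * M := by
          have hnR : (n:ℝ) ≠ 0 := by positivity
          field_simp
end

section
/- Let a < b be real numbers and let P be a real algebraic polynomial of degree at most n ≥ 1. Then sup_{x∈[a,b]} |P'(x)| ≤ (2n²/(b−a)) · sup_{x∈[a,b]} |P(x)| (Markov's inequality on an arbitrary interval). -/
set_option maxHeartbeats 1000000

open Real Set Polynomial Finset

lemma abs_sin_nat_mul_le (n : ℕ) {θ : ℝ} (h0 : 0 ≤ θ) (h1 : θ ≤ π) :
    |Real.sin (n * θ)| ≤ n * Real.sin θ := by
  induction n with
  | zero => simp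
  | succ m ih =>
    have hs : Real.sin θ ≥ 0 := Real.sin_nonneg_of_nonneg_of_le_pi h0 h1
    have : ((m+1 : ℕ) : ℝ) * θ = m * θ + θ := by push_cast; ring
    rw [this, Real.sin_add]
    calc |Real.sin (m*θ) * Real.cos θ + Real.cos (m*θ) * Real.sin θ|
        ≤ |Real.sin (m*θ) * Real.cos θ| + |Real.cos (m*θ) * Real.sin θ| := abs_add_le _ _
      _ ≤ |Real.sin (m*θ)| * 1 + 1 * Real.sin θ := by
          rw [abs_mul, abs_mul]
          gcongr
          · exact abs_cos_le_one θ
          · exact abs_cos_le_one _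
          · rw [abs_of_nonneg hs]
      _ ≤ m * Real.sin θ + 1 * Real.sin θ := by rw [mul_one]; gcongr
      _ = (m+1 : ℕ) * Real.sin θ := by push_cast; ring

lemma U_abs_le (n : ℕ) (hn : 1 ≤ n) : ∀ x ∈ Icc (-1:ℝ) 1,
    |(Polynomial.Chebyshev.U ℝ ((n:ℤ)-1)).eval x| ≤ n := by
  have hclosed : IsClosed {x : ℝ | |(Polynomial.Chebyshev.U ℝ ((n:ℤ)-1)).eval x| ≤ n} := by
    apply isClosed_le ((Polynomial.continuous _).abs) continuous_const
  have hIoo : Ioo (-1:ℝ) 1 ⊆ {x : ℝ | |(Polynomial.Chebyshev.U ℝ ((n:ℤ)-1)).eval x| ≤ n} := by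
    intro x hx
    have hx1 : -1 ≤ x := le_of_lt hx.1
    have hx2 : x ≤ 1 := le_of_lt hx.2
    set θ := Real.arccos x with hθ
    have hcos : Real.cos θ = x := Real.cos_arccos hx1 hx2
    have hθ0 : 0 < θ := Real.arccos_pos.2 hx.2
    have hθπ : θ < π :=
      lt_of_le_of_ne (Real.arccos_le_pi x) (fun h => absurd (Real.arccos_eq_pi.mp h) (not_le.2 hx.1))
    have hsin : 0 < Real.sin θ := Real.sin_pos_of_pos_of_lt_pi hθ0 hθπ
    have key := Polynomial.Chebyshev.U_real_cos θ ((n:ℤ)-1)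
    rw [hcos] at key
    have : ((((n:ℤ)-1 : ℤ) : ℝ) + 1) * θ = (n : ℝ) * θ := by push_cast; ring
    rw [this] at key
    have hb := abs_sin_nat_mul_le n (le_of_lt hθ0) (le_of_lt hθπ)
    simp only [Set.mem_setOf_eq]
    rw [← mul_le_mul_iff_of_pos_right hsin, ← abs_of_pos hsin, ← abs_mul, key]
    calc |Real.sin (n*θ)| ≤ n * Real.sin θ := hb
      _ = n * |Real.sin θ| := by rw [abs_of_pos hsin]
  intro x hx
  have : Icc (-1:ℝ) 1 = closure (Ioo (-1:ℝ) 1) := (closure_Ioo (by norm_num)).symm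
  rw [this] at hx
  exact (hclosed.closure_subset_iff.2 hIoo) hx

lemma T_natDegree_le : ∀ m : ℕ, (Polynomial.Chebyshev.T ℝ (m:ℤ)).natDegree ≤ m := by
  intro m
  induction m using Nat.strong_induction_on with
  | _ m ih =>
    match m with
    | 0 => simp [Polynomial.Chebyshev.T_zero]
    | 1 => simp [Polynomial.Chebyshev.T_one]
    | (m+2) =>
      have h2 : ((m+2:ℕ):ℤ) = ((m:ℤ)) + 2 := by push_cast; ring
      rw [h2, Polynomial.Chebyshev.T_add_two]
      have e1 : (m:ℤ)+1 = ((m+1:ℕ):ℤ) := by push_cast; ring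
      refine le_trans (natDegree_sub_le _ _) (max_le ?_ ?_)
      · refine le_trans natDegree_mul_le ?_
        have hx : ((2:Polynomial ℝ)*X).natDegree ≤ 1 :=
          le_trans natDegree_mul_le (by simp)
        have ht : (Polynomial.Chebyshev.T ℝ ((m:ℤ)+1)).natDegree ≤ m+1 := by
          rw [e1]; exact ih (m+1) (by omega)
        omega
      · exact le_trans (ih m (by omega)) (by omega)

lemma T_coeff_top : ∀ m : ℕ, (Polynomial.Chebyshev.T ℝ ((m:ℤ)+1)).coeff (m+1) = 2^m := by
  intro m
  induction m using Nat.strong_induction_on with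
  | _ m ih =>
    match m with
    | 0 => norm_num [Polynomial.Chebyshev.T_one]
    | 1 =>
      rw [show ((1:ℕ):ℤ)+1 = 2 by norm_num, Polynomial.Chebyshev.T_two]
      rw [show (2*X^2-1 : Polynomial ℝ) = C 2 * X^2 - C 1 by
        simp [map_ofNat]]
      simp [coeff_X_pow, coeff_one]
    | (m+2) =>
      have h2 : ((m+2:ℕ):ℤ)+1 = ((m+1:ℕ):ℤ) + 2 := by push_cast; ring
      rw [h2, Polynomial.Chebyshev.T_add_two]
      have e1 : ((m+1:ℕ):ℤ)+1 = ((m+2:ℕ):ℤ) := by push_cast; ring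
      rw [coeff_sub]
      have hlow : (Polynomial.Chebyshev.T ℝ ((m+1:ℕ):ℤ)).coeff (m+3) = 0 :=
        coeff_eq_zero_of_natDegree_lt (lt_of_le_of_lt (T_natDegree_le (m+1)) (by omega))
      have hmul : ((2:Polynomial ℝ)*X*Polynomial.Chebyshev.T ℝ (((m+1:ℕ):ℤ)+1)).coeff (m+3)
          = 2 * (Polynomial.Chebyshev.T ℝ (((m+1:ℕ):ℤ)+1)).coeff (m+2) := by
        rw [show ((2:Polynomial ℝ)*X*Polynomial.Chebyshev.T ℝ (((m+1:ℕ):ℤ)+1))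
            = C 2 * (X * Polynomial.Chebyshev.T ℝ (((m+1:ℕ):ℤ)+1)) by
          rw [map_ofNat]; ring]
        rw [coeff_C_mul, show m+3 = (m+2)+1 by omega, coeff_X_mul]
      rw [hmul, hlow, sub_zero, ih (m+1) (by omega)]
      ring

lemma T_sub_lead {n : ℕ} (hn : 1 ≤ n) :
    (Polynomial.Chebyshev.T ℝ (n:ℤ) - C ((2:ℝ)^(n-1)) * X^n).degree < (n : WithBot ℕ) := by
  rw [Polynomial.degree_lt_iff_coeff_zero]
  intro m hm
  rw [coeff_sub, coeff_C_mul, coeff_X_pow]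
  rcases eq_or_lt_of_le hm with h | h
  · obtain ⟨k, rfl⟩ : ∃ k, n = k + 1 := ⟨n-1, by omega⟩
    have := T_coeff_top k
    rw [show ((k+1:ℕ):ℤ) = (k:ℤ)+1 by push_cast; ring]
    rw [← h]
    simp [this]
  · norm_cast at h
    have h1 : (Polynomial.Chebyshev.T ℝ (n:ℤ)).coeff m = 0 :=
      coeff_eq_zero_of_natDegree_lt (lt_of_le_of_lt (T_natDegree_le n) h)
    rw [h1, if_neg (by omega)]
    ring

noncomputable def chebNode (n i : ℕ) : ℝ := Real.cos ((2*i+1)*π/(2*n))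

lemma chebNode_strictAnti {n : ℕ} (hn : 1 ≤ n) {i j : ℕ} (hij : i < j) (hj : j < n) :
    chebNode n j < chebNode n i := by
  have hπ := Real.pi_pos
  have hn' : (0:ℝ) < n := by positivity
  apply Real.cos_lt_cos_of_nonneg_of_le_pi
  · positivity
  · rw [div_le_iff₀ (by positivity)]
    have : (2*(j:ℝ)+1) ≤ 2*n - 1 := by
      have : (j:ℝ) ≤ n - 1 := by
        have : (j:ℝ) + 1 ≤ n := by exact_mod_cast hj
        linarith
      linarith
    nlinarith
  · have hij' : (2*(i:ℝ)+1) < 2*(j:ℝ)+1 := by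
      have : (i:ℝ) < j := by exact_mod_cast hij
      linarith
    have hd : (0:ℝ) < 2*n := by positivity
    rw [div_lt_div_iff₀ hd hd]
    exact mul_lt_mul_of_pos_right (mul_lt_mul_of_pos_right hij' hπ) hd

lemma cheb_factor {n : ℕ} (hn : 1 ≤ n) :
    Polynomial.Chebyshev.T ℝ (n:ℤ) = C ((2:ℝ)^(n-1)) * Lagrange.nodal (range n) (chebNode n) := by
  set v := chebNode n
  set D := Polynomial.Chebyshev.T ℝ (n:ℤ) - C ((2:ℝ)^(n-1)) * Lagrange.nodal (range n) v with hD
  have hinj : Set.InjOn v ↑(Finset.range n) := by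
    intro i hi j hj hij
    by_contra hne
    rcases lt_or_gt_of_ne hne with h | h
    · exact absurd hij (ne_of_gt (chebNode_strictAnti hn h (by simpa using hj)))
    · exact absurd hij (ne_of_lt (chebNode_strictAnti hn h (by simpa using hi)))
  have hdegD : D.degree < (n : WithBot ℕ) := by
    have hsplit : D = (Polynomial.Chebyshev.T ℝ (n:ℤ) - C ((2:ℝ)^(n-1)) * X^n)
        + C ((2:ℝ)^(n-1)) * (X^n - Lagrange.nodal (range n) v) := by
      rw [hD]; ring
    rw [hsplit]
    refine lt_of_le_of_lt (degree_add_le _ _) (max_lt (T_sub_lead hn) ?_)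
    have hXn : ((X:Polynomial ℝ)^n - Lagrange.nodal (range n) v).degree < (n : WithBot ℕ) := by
      have := Polynomial.degree_sub_lt (p := (X:Polynomial ℝ)^n) (q := Lagrange.nodal (range n) v)
        (by rw [degree_X_pow, Lagrange.degree_nodal, Finset.card_range])
        (by exact pow_ne_zero _ X_ne_zero)
        (by rw [(monic_X_pow n).leadingCoeff, (Lagrange.nodal_monic).leadingCoeff])
      rwa [degree_X_pow] at this
    refine lt_of_le_of_lt (degree_mul_le _ _) (lt_of_le_of_lt ?_ hXn)
    calc (C ((2:ℝ)^(n-1))).degree + ((X:Polynomial ℝ)^n - Lagrange.nodal (range n) v).degree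
        ≤ 0 + ((X:Polynomial ℝ)^n - Lagrange.nodal (range n) v).degree :=
          add_le_add degree_C_le le_rfl
      _ = _ := zero_add _
  have heval : ∀ i ∈ range n, D.eval (v i) = 0 := by
    intro i hi
    have hi' : i < n := by simpa using hi
    have hT : (Polynomial.Chebyshev.T ℝ (n:ℤ)).eval (v i) = 0 := by
      have := Polynomial.Chebyshev.T_real_cos ((2*i+1)*π/(2*n)) (n:ℤ)
      have hn0 : (n:ℝ) ≠ 0 := by positivity
      rw [show ((n:ℤ):ℝ) * ((2*(i:ℝ)+1)*π/(2*n)) = i*π + π/2 by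
        push_cast
        field_simp]
        at this
      rw [show v i = Real.cos ((2*i+1)*π/(2*n)) from rfl, this,
        Real.cos_add_pi_div_two, Real.sin_nat_mul_pi, neg_zero]
    rw [hD, eval_sub, eval_mul, hT, Lagrange.eval_nodal_at_node hi, mul_zero, sub_zero]
  by_cases hD0 : D = 0
  · rw [hD] at hD0
    exact sub_eq_zero.mp hD0
  · exfalso
    have hnd : D.natDegree < n := by
      rw [natDegree_lt_iff_degree_lt hD0]
      exact_mod_cast hdegD
    have hcard : ((range n).image v).card = n := by
      rw [Finset.card_image_of_injOn hinj, Finset.card_range]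
    have : D = 0 := by
      apply Polynomial.eq_zero_of_natDegree_lt_card_of_eval_eq_zero' D ((range n).image v)
      · intro y hy
        obtain ⟨i, hi, rfl⟩ := Finset.mem_image.mp hy
        exact heval i hi
      · rw [hcard]; exact hnd
    exact hD0 this

lemma cos_nat_mul_pi : ∀ k : ℕ, Real.cos (k * π) = (-1)^k := by
  intro k
  induction k with
  | zero => simp
  | succ m ih =>
    have : ((m+1:ℕ):ℝ) * π = m*π + π := by push_cast; ring
    rw [this, Real.cos_add_pi, ih]
    ring

lemma exists_q {n : ℕ} {P : Polynomial ℝ} (hdeg : P.natDegree ≤ n) :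
    ∃ q : Polynomial ℂ, q.natDegree ≤ 2*n ∧
      ∀ θ : ℝ, q.eval (Complex.exp (θ * Complex.I)) =
        2^n * Complex.exp (((n*θ:ℝ):ℂ) * Complex.I) * ((P.eval (Real.cos θ) : ℝ) : ℂ) := by
  classical
  refine ⟨∑ k ∈ Finset.range (n+1), C ((P.coeff k : ℂ)) * (X^2+1)^k * (2*X)^(n-k), ?_, ?_⟩
  · apply Polynomial.natDegree_sum_le_of_forall_le
    intro k hk
    have hk' : k ≤ n := by simpa [Nat.lt_succ_iff] using hk
    have h1 : ((X^2+1:Polynomial ℂ)^k).natDegree ≤ 2*k := by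
      refine le_trans natDegree_pow_le ?_
      have h : (X^2+1:Polynomial ℂ).natDegree = 2 := by
        rw [show (X^2+1:Polynomial ℂ) = X^2 + C 1 by simp]
        exact natDegree_X_pow_add_C
      rw [h]
      omega
    have h2 : ((2*X:Polynomial ℂ)^(n-k)).natDegree ≤ n-k := by
      refine le_trans natDegree_pow_le ?_
      have : (2*X:Polynomial ℂ).natDegree ≤ 1 := le_trans natDegree_mul_le (by simp)
      nlinarith [Nat.sub_le n k]
    calc (C ((P.coeff k : ℂ)) * (X^2+1)^k * (2*X)^(n-k)).natDegree
        ≤ (C ((P.coeff k : ℂ)) * (X^2+1)^k).natDegree + ((2*X:Polynomial ℂ)^(n-k)).natDegree :=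
          natDegree_mul_le
      _ ≤ ((C ((P.coeff k : ℂ))).natDegree + ((X^2+1:Polynomial ℂ)^k).natDegree) + (n-k) := by
          gcongr
          exact natDegree_mul_le
      _ ≤ (0 + 2*k) + (n-k) := by
          gcongr
          · exact le_of_eq (natDegree_C _)
      _ ≤ 2*n := by omega
  · intro θ
    set z := Complex.exp ((θ:ℂ) * Complex.I) with hz
    have hz2 : z^2 + 1 = 2 * (Real.cos θ : ℂ) * z := by
      have h1 : (Real.cos θ : ℂ) = Complex.cos θ := Complex.ofReal_cos θ
      have h2 : 2 * Complex.cos (θ:ℂ) = Complex.exp ((θ:ℂ)*Complex.I) + Complex.exp (-(θ:ℂ)*Complex.I) :=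
        Complex.two_cos _
      have h3 : Complex.exp (-(θ:ℂ)*Complex.I) * z = 1 := by
        rw [hz, ← Complex.exp_add]
        rw [show -(θ:ℂ)*Complex.I + (θ:ℂ)*Complex.I = 0 by ring, Complex.exp_zero]
      calc z^2+1 = z*z + Complex.exp (-(θ:ℂ)*Complex.I)*z := by rw [h3]; ring
        _ = (Complex.exp ((θ:ℂ)*Complex.I) + Complex.exp (-(θ:ℂ)*Complex.I)) * z := by
            rw [hz]; ring
        _ = 2*(Real.cos θ:ℂ)*z := by rw [h1, h2]
    have hzn : ∀ m:ℕ, z^m = Complex.exp (((m*θ:ℝ):ℂ)*Complex.I) := by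
      intro m
      rw [hz, ← Complex.exp_nat_mul]
      congr 1
      push_cast
      ring
    rw [Polynomial.eval_finset_sum]
    have hterm : ∀ k ∈ Finset.range (n+1),
        Polynomial.eval z (C ((P.coeff k : ℂ)) * (X^2+1)^k * (2*X)^(n-k))
        = 2^n * Complex.exp (((n*θ:ℝ):ℂ)*Complex.I) * ((P.coeff k : ℂ) * ((Real.cos θ:ℝ):ℂ)^k) := by
      intro k hk
      have hk' : k ≤ n := by simpa [Nat.lt_succ_iff] using hk
      simp only [eval_mul, eval_C, eval_pow, eval_add, eval_one, eval_X, eval_ofNat]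
      rw [hz2, ← hzn n]
      rw [mul_pow, mul_pow, mul_pow]
      have e2 : (2:ℂ)^k * (2:ℂ)^(n-k) = 2^n := by rw [← pow_add]; congr 1; omega
      have ez : z^k * z^(n-k) = z^n := by rw [← pow_add]; congr 1; omega
      rw [← e2, ← ez]
      ring
    rw [Finset.sum_congr rfl hterm, ← Finset.mul_sum]
    have hev : ((P.eval (Real.cos θ) : ℝ) : ℂ) = ∑ k ∈ Finset.range (n+1), (P.coeff k : ℂ) * ((Real.cos θ:ℝ):ℂ)^k := by
      rw [Polynomial.eval_eq_sum_range' (Nat.lt_succ_of_le hdeg)]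
      push_cast
      ring
    rw [hev]


section F3B
variable {n : ℕ} {P : Polynomial ℝ}

lemma bernstein_strict (hn : 1 ≤ n) (hdeg : P.natDegree ≤ n)
    (hP : ∀ x ∈ Set.Icc (-1:ℝ) 1, |P.eval x| < 1) (θ₀ : ℝ)
    (exq : ∃ q : Polynomial ℂ, q.natDegree ≤ 2*n ∧
      ∀ θ : ℝ, q.eval (Complex.exp ((θ:ℂ) * Complex.I)) =
        2^n * Complex.exp (((n*θ:ℝ):ℂ) * Complex.I) * ((P.eval (Real.cos θ) : ℝ) : ℂ)) :
    -((Polynomial.derivative P).eval (Real.cos θ₀) * Real.sin θ₀) ≤ n := by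
  by_contra hcon
  push_neg at hcon
  have hnR : (0:ℝ) < n := by positivity
  have hfb : ∀ θ : ℝ, |P.eval (Real.cos θ)| < 1 := fun θ =>
    hP _ ⟨Real.neg_one_le_cos θ, Real.cos_le_one θ⟩
  have hfb₀ := abs_lt.mp (hfb θ₀)
  set α := Real.arcsin (P.eval (Real.cos θ₀)) with hα
  have hα1 : Real.sin α = P.eval (Real.cos θ₀) :=
    Real.sin_arcsin (by linarith [hfb₀.1]) (by linarith [hfb₀.2])
  have hαu : α < π/2 := Real.arcsin_lt_pi_div_two.2 hfb₀.2
  have hαl : -(π/2) < α := Real.neg_pi_div_two_lt_arcsin.2 hfb₀.1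
  set β := α - n*θ₀ with hβ
  set hF : ℝ → ℝ := fun θ => P.eval (Real.cos θ) - Real.sin (n*θ + β) with hFdef
  have hfd : ∀ θ : ℝ, HasDerivAt (fun θ => P.eval (Real.cos θ))
      ((Polynomial.derivative P).eval (Real.cos θ) * -Real.sin θ) θ := by
    intro θ
    have h1 := (Polynomial.hasDerivAt P (Real.cos θ)).comp θ (Real.hasDerivAt_cos θ)
    simpa [Function.comp_def] using h1
  have hgd : ∀ θ : ℝ, HasDerivAt (fun θ : ℝ => Real.sin (n*θ + β))
      (Real.cos (n*θ + β) * n) θ := by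
    intro θ
    have hlin : HasDerivAt (fun θ : ℝ => (n:ℝ)*θ + β) n θ := by
      simpa using ((hasDerivAt_id θ).const_mul (n:ℝ)).add_const β
    simpa [Function.comp_def] using (Real.hasDerivAt_sin ((n:ℝ)*θ + β)).comp θ hlin
  have hhd : ∀ θ : ℝ, HasDerivAt hF
      ((Polynomial.derivative P).eval (Real.cos θ) * -Real.sin θ - Real.cos (n*θ + β) * n) θ :=
    fun θ => (hfd θ).sub (hgd θ)
  have hargθ₀ : (n:ℝ)*θ₀ + β = α := by rw [hβ]; ring
  have hh0 : hF θ₀ = 0 := by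
    simp only [hFdef, hargθ₀, hα1, sub_self]
  have hd0 : 0 < (Polynomial.derivative P).eval (Real.cos θ₀) * -Real.sin θ₀ - Real.cos (n*θ₀ + β) * n := by
    rw [hargθ₀]
    have h1 : Real.cos α ≤ 1 := Real.cos_le_one α
    nlinarith [hcon]
  set t : ℕ → ℝ := fun k => θ₀ + (π/2 + k*π - α)/n with ht
  have htmono : ∀ k : ℕ, t k < t (k+1) := by
    intro k
    have hπ := Real.pi_pos
    have h1 : (π/2 + (k:ℝ)*π - α) < (π/2 + ((k+1:ℕ):ℝ)*π - α) := by push_cast; linarith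
    have h2 : (π/2 + (k:ℝ)*π - α)/n < (π/2 + ((k+1:ℕ):ℝ)*π - α)/n := by gcongr
    simp only [ht]
    linarith
  have htmono' : StrictMono t := strictMono_nat_of_lt_succ htmono
  have hθ₀t0 : θ₀ < t 0 := by
    have hπ := Real.pi_pos
    have : 0 < (π/2 + (0:ℕ)*π - α)/n := by
      apply div_pos ?_ hnR
      push_cast
      linarith
    simp only [ht]
    push_cast
    push_cast at this
    linarith
  have htlast : t (2*n-1) < θ₀ + 2*π := by
    have hπ := Real.pi_pos
    have hcast : ((2*n-1:ℕ):ℝ) = 2*(n:ℝ) - 1 := by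
      have h1 : (1:ℕ) ≤ 2*n := by omega
      push_cast [h1]
      ring
    have key : (π/2 + ((2*n-1:ℕ):ℝ)*π - α)/n < 2*π := by
      rw [hcast, div_lt_iff₀ hnR]
      nlinarith [hαl]
    simp only [ht]
    linarith
  have hg_t : ∀ k : ℕ, Real.sin (n * t k + β) = (-1)^k := by
    intro k
    have hne : (n:ℝ) ≠ 0 := ne_of_gt hnR
    have harg : (n:ℝ) * t k + β = k*π + π/2 := by
      simp only [ht, hβ]
      field_simp
      ring
    rw [harg, Real.sin_add_pi_div_two, _root_.cos_nat_mul_pi]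
  have hFt : ∀ k : ℕ, Even k → hF (t k) < 0 := by
    intro k hk
    simp only [hFdef]
    rw [hg_t k, hk.neg_one_pow]
    linarith [(abs_lt.mp (hfb (t k))).2]
  have hFt' : ∀ k : ℕ, Odd k → 0 < hF (t k) := by
    intro k hk
    simp only [hFdef]
    rw [hg_t k, hk.neg_one_pow]
    linarith [(abs_lt.mp (hfb (t k))).1]
  have hcont : Continuous hF := by
    rw [hFdef]
    exact ((P.continuous).comp Real.continuous_cos).sub
      (Real.continuous_sin.comp ((continuous_const.mul continuous_id).add continuous_const))
  have hz : ∀ k : ℕ, ∃ w : ℝ, k < 2*n-1 → (w ∈ Set.Ioo (t k) (t (k+1)) ∧ hF w = 0) := by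
    intro k
    by_cases hk : k < 2*n-1
    · rcases Nat.even_or_odd k with he | ho
      · have h1 : hF (t k) < 0 := hFt k he
        have h2 : 0 < hF (t (k+1)) := hFt' (k+1) (Even.add_one he)
        obtain ⟨w, hw, hw0⟩ :=
          intermediate_value_Ioo (le_of_lt (htmono k)) hcont.continuousOn ⟨h1, h2⟩
        exact ⟨w, fun _ => ⟨hw, hw0⟩⟩
      · have h1 : 0 < hF (t k) := hFt' k ho
        have h2 : hF (t (k+1)) < 0 := hFt (k+1) (Odd.add_one ho)
        obtain ⟨w, hw, hw0⟩ :=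
          intermediate_value_Ioo' (le_of_lt (htmono k)) hcont.continuousOn ⟨h2, h1⟩
        exact ⟨w, fun _ => ⟨hw, hw0⟩⟩
    · exact ⟨0, fun h => absurd h hk⟩
  choose zf hzf using hz
  have hzf_mem : ∀ k, k < 2*n-1 → zf k ∈ Set.Ioo (t k) (t (k+1)) := fun k hk => (hzf k hk).1
  have hzf_zero : ∀ k, k < 2*n-1 → hF (zf k) = 0 := fun k hk => (hzf k hk).2
  have hu : ∃ u, u ∈ Set.Ioo θ₀ (t 0) ∧ 0 < hF u := by
    have hslope := hasDerivAt_iff_tendsto_slope.mp (hhd θ₀)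
    have hmono : nhdsWithin θ₀ (Set.Ioi θ₀) ≤ nhdsWithin θ₀ {θ₀}ᶜ :=
      nhdsWithin_mono _ (fun x hx => by simpa using ne_of_gt hx)
    have hev : ∀ᶠ u in nhdsWithin θ₀ (Set.Ioi θ₀), 0 < slope hF θ₀ u :=
      (hslope.mono_left hmono).eventually (eventually_gt_nhds hd0)
    have hIoo : Set.Ioo θ₀ (t 0) ∈ nhdsWithin θ₀ (Set.Ioi θ₀) :=
      Ioo_mem_nhdsGT_of_mem ⟨le_refl _, hθ₀t0⟩
    obtain ⟨u, hu1, hu2⟩ := (hev.and (Filter.eventually_of_mem hIoo (fun x hx => hx))).exists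
    refine ⟨u, hu2, ?_⟩
    rw [slope_def_field, hh0, sub_zero] at hu1
    have h3 : 0 < u - θ₀ := sub_pos.2 hu2.1
    have := mul_pos hu1 h3
    rwa [div_mul_cancel₀ _ (ne_of_gt h3)] at this
  obtain ⟨u, huIoo, huPos⟩ := hu
  obtain ⟨w1, hw1Ioo, hw1z⟩ : ∃ w1, w1 ∈ Set.Ioo u (t 0) ∧ hF w1 = 0 := by
    have h2 : hF (t 0) < 0 := hFt 0 ⟨0, rfl⟩
    obtain ⟨w, hw, hw0⟩ :=
      intermediate_value_Ioo' (le_of_lt huIoo.2) hcont.continuousOn ⟨h2, huPos⟩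
    exact ⟨w, hw, hw0⟩
  set W : ℕ → ℝ := fun j => if j = 0 then θ₀ else if j = 1 then w1 else
    if j ≤ 2*n then zf (j-2) else t (2*n-1) + j with hWdef
  have hW0 : W 0 = θ₀ := by simp [hWdef]
  have hW1 : W 1 = w1 := by simp [hWdef]
  have hWj : ∀ j, 2 ≤ j → j ≤ 2*n → W j = zf (j-2) := by
    intro j h1 h2
    simp only [hWdef]
    rw [if_neg (by omega), if_neg (by omega), if_pos h2]
  have hWbig : ∀ j, 2*n < j → W j = t (2*n-1) + j := by
    intro j h1
    simp only [hWdef]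
    rw [if_neg (by omega), if_neg (by omega), if_neg (by omega)]
  have hWmono : ∀ j, W j < W (j+1) := by
    intro j
    match j with
    | 0 =>
      rw [hW0, hW1]
      exact lt_trans huIoo.1 hw1Ioo.1
    | 1 =>
      rw [hW1, hWj 2 (by omega) (by omega)]
      have h0 : (0:ℕ) < 2*n-1 := by omega
      have := hzf_mem 0 h0
      calc w1 < t 0 := hw1Ioo.2
        _ < zf 0 := this.1
    | (j+2) =>
      by_cases hA : j+3 ≤ 2*n
      · rw [hWj (j+2) (by omega) (by omega), hWj (j+3) (by omega) hA]
        have e1 : j+2-2 = j := by omega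
        have e2 : j+3-2 = j+1 := by omega
        rw [e1, e2]
        have m1 := hzf_mem j (by omega)
        have m2 := hzf_mem (j+1) (by omega)
        exact lt_trans m1.2 m2.1
      · by_cases hB : j+2 ≤ 2*n
        · rw [hWj (j+2) (by omega) hB, hWbig (j+3) (by omega)]
          have e1 : j+2-2 = j := by omega
          rw [e1]
          have m1 := hzf_mem j (by omega)
          have h2 : t (j+1) ≤ t (2*n-1) := htmono'.monotone (by omega)
          have h3 : (0:ℝ) < (j:ℝ)+3 := by positivity
          have := m1.2
          push_cast
          linarith
        · rw [hWbig (j+2) (by omega), hWbig (j+3) (by omega)]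
          push_cast
          linarith
  have hWstrict : StrictMono W := strictMono_nat_of_lt_succ hWmono
  have hW_zero : ∀ j, j ≤ 2*n → hF (W j) = 0 := by
    intro j hj
    match j with
    | 0 => rw [hW0]; exact hh0
    | 1 => rw [hW1]; exact hw1z
    | (j+2) =>
      rw [hWj (j+2) (by omega) hj]
      exact hzf_zero _ (by omega)
  have hW_mem : ∀ j, j ≤ 2*n → W j ∈ Set.Ico θ₀ (θ₀ + 2*π) := by
    intro j hj
    constructor
    · rcases Nat.eq_zero_or_pos j with rfl | hj0
      · rw [hW0]
      · exact le_of_lt (hW0 ▸ hWstrict (by omega : 0 < j))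
    · have h1 : W j ≤ W (2*n) := hWstrict.monotone hj
      have h2 : W (2*n) < θ₀ + 2*π := by
        rw [hWj (2*n) (by omega) (le_refl _)]
        have m := hzf_mem (2*n-2) (by omega)
        have e1 : 2*n-2+1 = 2*n-1 := by omega
        rw [e1] at m
        exact lt_trans m.2 htlast
      linarith
  -- complex polynomial part
  obtain ⟨q, hqdeg, hqev⟩ := exq
  set e : ℝ → ℂ := fun s => Complex.exp ((s:ℂ) * Complex.I) with he
  set r : Polynomial ℂ := q + C ((2:ℂ)^(n-1) * Complex.I * e β) * X^(2*n)
      - C ((2:ℂ)^(n-1) * Complex.I * e (-β)) with hr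
  have hmul : ∀ a b : ℝ, e a * e b = e (a+b) := by
    intro a b
    simp only [he]
    rw [← Complex.exp_add]
    congr 1
    push_cast
    ring
  have hIsq := Complex.I_sq
  have h2n : (2:ℂ)^n = 2 * (2:ℂ)^(n-1) := by
    rw [← pow_succ']
    congr 1
    omega
  have hsinC : ∀ s : ℝ, ((Real.sin s : ℂ)) * (2*Complex.I) = e s - e (-s) := by
    intro s
    rw [Complex.ofReal_sin]
    have h2s := Complex.two_sin ((s:ℂ))
    simp only [he]
    push_cast
    linear_combination Complex.I * h2s
      + (Complex.exp (-(s:ℂ) * Complex.I) - Complex.exp ((s:ℂ)*Complex.I)) * hIsq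
  have hrev : ∀ θ : ℝ, r.eval (Complex.exp ((θ:ℂ) * Complex.I)) = 2^n * e (n*θ) * ((hF θ : ℝ):ℂ) := by
    intro θ
    have hq := hqev θ
    have hpow : Complex.exp ((θ:ℂ)*Complex.I)^(2*n) = e (2*n*θ) := by
      rw [← Complex.exp_nat_mul]
      simp only [he]
      congr 1
      push_cast
      ring
    have h1 : e (n*θ) * e (-(n*θ+β)) = e (-β) := by rw [hmul]; congr 1; ring
    have h2 : e (n*θ) * e (n*θ+β) = e β * e (2*n*θ) := by rw [hmul, hmul]; congr 1; ring
    have hs := hsinC (n*θ+β)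
    simp only [hr, eval_sub, eval_add, eval_mul, eval_C, eval_pow, eval_X]
    rw [hq, hpow]
    simp only [hFdef, he] at *
    push_cast at h1 h2 hs ⊢
    linear_combination (-((2:ℂ)^(n-1) * Complex.I)) * h2 + ((2:ℂ)^(n-1) * Complex.I) * h1
      + (-((2:ℂ)^(n-1) * Complex.I * Complex.exp ((n:ℂ)*(θ:ℂ)*Complex.I))) * hs
      + (2*(2:ℂ)^(n-1) * Complex.exp ((n:ℂ)*(θ:ℂ)*Complex.I) * (Complex.sin ((n:ℂ)*(θ:ℂ)+(β:ℂ)))) * hIsq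
      + (Complex.exp ((n:ℂ)*(θ:ℂ)*Complex.I) * (Complex.sin ((n:ℂ)*(θ:ℂ)+(β:ℂ)))) * h2n
  have hrne : r ≠ 0 := by
    intro h0
    have hzero : ∀ θ : ℝ, hF θ = 0 := by
      intro θ
      have hth := hrev θ
      rw [h0, eval_zero] at hth
      have hne1 : ((2:ℂ)^n : ℂ) ≠ 0 := pow_ne_zero _ two_ne_zero
      have hne2 : e (n*θ) ≠ 0 := Complex.exp_ne_zero _
      have h2 : ((hF θ : ℝ):ℂ) = 0 := by
        rcases mul_eq_zero.mp hth.symm with h | h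
        · rcases mul_eq_zero.mp h with h' | h'
          · exact absurd h' hne1
          · exact absurd h' hne2
        · exact h
      exact_mod_cast h2
    have hFzero : hF = (fun _ : ℝ => (0:ℝ)) := funext hzero
    have hder := hhd θ₀
    rw [hFzero] at hder
    have := hder.unique (hasDerivAt_const θ₀ 0)
    linarith [hd0]
  have hrdeg : r.natDegree ≤ 2*n := by
    rw [hr]
    refine le_trans (natDegree_sub_le _ _) (max_le (le_trans (natDegree_add_le _ _) (max_le hqdeg ?_)) ?_)
    · refine le_trans natDegree_mul_le ?_
      rw [natDegree_C, natDegree_X_pow]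
      omega
    · rw [natDegree_C]
      omega
  have hinjW : Set.InjOn (fun j => Complex.exp (((W j):ℂ) * Complex.I)) ↑(Finset.range (2*n+1)) := by
    intro j1 h1 j2 h2 heq
    simp only [Finset.coe_range, Set.mem_Iio] at h1 h2
    have hm1 := hW_mem j1 (by omega)
    have hm2 := hW_mem j2 (by omega)
    obtain ⟨m, hm⟩ := Complex.exp_eq_exp_iff_exists_int.mp heq
    have hfac : ((W j1 : ℂ) - (W j2 : ℂ) - (m:ℂ) * (2*(π:ℂ))) * Complex.I = 0 := by
      linear_combination hm
    have hI := Complex.I_ne_zero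
    have hsub : (W j1 : ℂ) - (W j2 : ℂ) - (m:ℂ) * (2*(π:ℂ)) = 0 :=
      by rcases mul_eq_zero.mp hfac with h | h; exact h; exact absurd h hI
    have hreal : W j1 - W j2 - (m:ℝ) * (2*π) = 0 := by exact_mod_cast hsub
    have hπ := Real.pi_pos
    have hm0 : m = 0 := by
      rcases lt_trichotomy m 0 with h | h | h
      · exfalso
        have hm' : (m:ℝ) ≤ -1 := by exact_mod_cast (by omega : m ≤ -1)
        have hkey : (m:ℝ) * (2*π) ≤ (-1) * (2*π) :=
          mul_le_mul_of_nonneg_right hm' (by linarith)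
        linarith [hm1.1, hm1.2, hm2.1, hm2.2]
      · exact h
      · exfalso
        have hm' : (1:ℝ) ≤ (m:ℝ) := by exact_mod_cast (by omega : (1:ℤ) ≤ m)
        have hkey : (1:ℝ) * (2*π) ≤ (m:ℝ) * (2*π) :=
          mul_le_mul_of_nonneg_right hm' (by linarith)
        linarith [hm1.1, hm1.2, hm2.1, hm2.2]
    rw [hm0] at hreal
    have : W j1 = W j2 := by push_cast at hreal; linarith
    exact hWstrict.injective this
  set sC : Finset ℂ := (Finset.range (2*n+1)).image (fun j => Complex.exp (((W j):ℂ) * Complex.I)) with hsC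
  have hcard : sC.card = 2*n+1 := by
    rw [hsC, Finset.card_image_of_injOn hinjW, Finset.card_range]
  have hr0 : r = 0 := by
    apply Polynomial.eq_zero_of_natDegree_lt_card_of_eval_eq_zero' r sC
    · intro y hy
      obtain ⟨j, hj, rfl⟩ := Finset.mem_image.mp hy
      have hj' : j ≤ 2*n := by simpa [Nat.lt_succ_iff] using hj
      rw [hrev (W j), hW_zero j hj']
      push_cast
      ring
    · rw [hcard]
      omega
  exact hrne hr0

end F3B

lemma bernstein_strict' {n : ℕ} {P : Polynomial ℝ} (hn : 1 ≤ n) (hdeg : P.natDegree ≤ n)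
    (hP : ∀ x ∈ Set.Icc (-1:ℝ) 1, |P.eval x| < 1) (θ₀ : ℝ) :
    -((Polynomial.derivative P).eval (Real.cos θ₀) * Real.sin θ₀) ≤ n :=
  bernstein_strict hn hdeg hP θ₀ (exists_q hdeg)

lemma bernstein_poly {n : ℕ} (hn : 1 ≤ n) {P : Polynomial ℝ} (hdeg : P.natDegree ≤ n)
    {S : ℝ} (hS : ∀ x ∈ Set.Icc (-1:ℝ) 1, |P.eval x| ≤ S) (θ : ℝ) :
    |(Polynomial.derivative P).eval (Real.cos θ) * Real.sin θ| ≤ n * S := by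
  have hnR : (0:ℝ) < n := by positivity
  have hS0 : 0 ≤ S := le_trans (abs_nonneg _) (hS 1 (by norm_num))
  have key : ∀ ε : ℝ, 0 < ε → |(Polynomial.derivative P).eval (Real.cos θ) * Real.sin θ| ≤ n * (S + ε) := by
    intro ε hε
    have hpos : (0:ℝ) < S + ε := by linarith
    set Q := C (S+ε)⁻¹ * P with hQ
    have hQdeg : Q.natDegree ≤ n := le_trans (natDegree_C_mul_le _ _) hdeg
    have hQb : ∀ x ∈ Set.Icc (-1:ℝ) 1, |Q.eval x| < 1 := by
      intro x hx
      rw [hQ, eval_mul, eval_C, abs_mul, abs_inv, abs_of_pos hpos]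
      calc (S+ε)⁻¹ * |P.eval x| = |P.eval x| / (S+ε) := by ring
        _ ≤ S / (S+ε) := by
            gcongr
            exact hS x hx
        _ < 1 := (div_lt_one hpos).2 (by linarith)
    have h1 := bernstein_strict' hn hQdeg hQb θ
    have h2 := bernstein_strict' hn hQdeg hQb (-θ)
    rw [Real.cos_neg, Real.sin_neg] at h2
    have hQd : (Polynomial.derivative Q).eval (Real.cos θ)
        = (S+ε)⁻¹ * (Polynomial.derivative P).eval (Real.cos θ) := by
      rw [hQ, derivative_C_mul, eval_mul, eval_C]
    rw [hQd] at h1 h2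
    have hinv : (S+ε) * (S+ε)⁻¹ = 1 := mul_inv_cancel₀ (ne_of_gt hpos)
    rw [abs_le]
    constructor
    · have h1' := mul_le_mul_of_nonneg_left h1 hpos.le
      have hDs : (S+ε) * -((S+ε)⁻¹ * (Polynomial.derivative P).eval (Real.cos θ) * Real.sin θ)
          = -((Polynomial.derivative P).eval (Real.cos θ) * Real.sin θ) := by
        linear_combination (-((Polynomial.derivative P).eval (Real.cos θ) * Real.sin θ)) * hinv
      rw [hDs] at h1'
      linarith
    · have h2' := mul_le_mul_of_nonneg_left h2 hpos.le
      have hDs : (S+ε) * -((S+ε)⁻¹ * (Polynomial.derivative P).eval (Real.cos θ) * -Real.sin θ)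
          = ((Polynomial.derivative P).eval (Real.cos θ) * Real.sin θ) := by
        linear_combination ((Polynomial.derivative P).eval (Real.cos θ) * Real.sin θ) * hinv
      rw [hDs] at h2'
      linarith
  have key2 : ∀ ε : ℝ, 0 < ε → |(Polynomial.derivative P).eval (Real.cos θ) * Real.sin θ| ≤ n * S + ε := by
    intro ε hε
    have := key (ε/n) (by positivity)
    calc |(Polynomial.derivative P).eval (Real.cos θ) * Real.sin θ|
        ≤ (n:ℝ) * (S + ε/n) := this
      _ = n*S + ε := by
          field_simp
  exact le_of_forall_pos_le_add key2

section F4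
variable {n : ℕ} {P : Polynomial ℝ} {S : ℝ}

lemma theta_mem {n i : ℕ} (hn : 1 ≤ n) (hi : i < n) :
    0 < (2*(i:ℝ)+1)*π/(2*(n:ℝ)) ∧ (2*(i:ℝ)+1)*π/(2*(n:ℝ)) < π := by
  have hπ := Real.pi_pos
  have hnR : (0:ℝ) < n := by positivity
  constructor
  · positivity
  · rw [div_lt_iff₀ (by positivity)]
    have : (i:ℝ) ≤ (n:ℝ) - 1 := by
      have : (i:ℝ) + 1 ≤ n := by exact_mod_cast hi
      linarith
    nlinarith

lemma chebNode_injOn {n : ℕ} (hn : 1 ≤ n) : Set.InjOn (chebNode n) ↑(Finset.range n) := by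
  intro i hi j hj hij
  by_contra hne
  rcases lt_or_gt_of_ne hne with h | h
  · exact absurd hij (ne_of_gt (chebNode_strictAnti hn h (by simpa using hj)))
  · exact absurd hij (ne_of_lt (chebNode_strictAnti hn h (by simpa using hi)))

-- |U_{n-1}(chebNode n i)| * sin θ_i = 1
lemma U_at_node {n i : ℕ} (hn : 1 ≤ n) (hi : i < n) :
    |(Polynomial.Chebyshev.U ℝ ((n:ℤ)-1)).eval (chebNode n i)|
      * Real.sin ((2*(i:ℝ)+1)*π/(2*(n:ℝ))) = 1 := by
  have hθ := theta_mem hn hi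
  have hsin : 0 < Real.sin ((2*(i:ℝ)+1)*π/(2*(n:ℝ))) :=
    Real.sin_pos_of_pos_of_lt_pi hθ.1 hθ.2
  have key := Polynomial.Chebyshev.U_real_cos ((2*(i:ℝ)+1)*π/(2*(n:ℝ))) ((n:ℤ)-1)
  have hnR : (0:ℝ) < n := by positivity
  have harg : ((((n:ℤ)-1 : ℤ):ℝ) + 1) * ((2*(i:ℝ)+1)*π/(2*(n:ℝ))) = i*π + π/2 := by
    push_cast
    field_simp
    ring
  rw [harg] at key
  have hval : Real.sin ((i:ℝ)*π + π/2) = Real.cos ((i:ℝ)*π) := Real.sin_add_pi_div_two _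
  have hcos : |Real.cos ((i:ℝ)*π)| = 1 := by
    rw [show Real.cos ((i:ℝ)*π) = (-1:ℝ)^i from _root_.cos_nat_mul_pi i]
    rw [abs_pow, abs_neg, abs_one, one_pow]
  have : chebNode n i = Real.cos ((2*(i:ℝ)+1)*π/(2*(n:ℝ))) := by
    unfold chebNode
    norm_num
  rw [this, ← abs_of_pos hsin, ← abs_mul, key, hval, hcos]

-- eval of basis in product form
lemma eval_basis_eq {F : Type*} [Field F] {ι : Type*} [DecidableEq ι]
    (s : Finset ι) (v : ι → F) (i : ι) (x : F) :
    (Lagrange.basis s v i).eval x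
      = Lagrange.nodalWeight s v i * (Lagrange.nodal (s.erase i) v).eval x := by
  rw [Lagrange.basis, Polynomial.eval_prod, Lagrange.nodalWeight, Lagrange.eval_nodal,
    ← Finset.prod_mul_distrib]
  apply Finset.prod_congr rfl
  intro j hj
  rw [Lagrange.basisDivisor]
  simp [Polynomial.eval_mul]

lemma markov_edge (hn : 1 ≤ n) (hdeg : P.natDegree ≤ n) (hS0 : 0 ≤ S)
    (hS : ∀ x ∈ Set.Icc (-1:ℝ) 1, |P.eval x| ≤ S) :
    ∀ y, Real.cos (π/(2*n)) ≤ y → y ≤ 1 →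
      |(Polynomial.derivative P).eval y| ≤ (n:ℝ)^2 * S := by
  intro y hy1 hy2
  classical
  have hnR : (0:ℝ) < n := by positivity
  set v := chebNode n with hv
  set s := Finset.range n with hs
  have hinj : Set.InjOn v ↑s := chebNode_injOn hn
  have hsne : s.Nonempty := by rw [hs]; exact Finset.nonempty_range_iff.mpr (by omega)
  -- degree of P' < n
  have hdeg' : (Polynomial.derivative P).degree < (s.card : WithBot ℕ) := by
    rw [hs, Finset.card_range]
    by_cases hP0 : P = 0
    · rw [hP0]
      simp only [derivative_zero, degree_zero]
      exact WithBot.bot_lt_coe n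
    · refine lt_of_lt_of_le (Polynomial.degree_derivative_lt hP0) ?_
      exact le_trans (Polynomial.degree_le_natDegree) (by exact_mod_cast hdeg)
  have hinterp := Lagrange.eq_interpolate hinj hdeg'
  -- nodal derivative value and weights
  have hfac := cheb_factor hn
  have hTd : Polynomial.derivative (Polynomial.Chebyshev.T ℝ (n:ℤ))
      = (n:Polynomial ℝ) * Polynomial.Chebyshev.U ℝ ((n:ℤ)-1) := by
    have := Polynomial.Chebyshev.T_derivative_eq_U (R := ℝ) (n:ℤ)
    simpa using this
  have hderiv_nodal : ∀ x : ℝ, (Polynomial.derivative (Lagrange.nodal s v)).eval x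
      = (n:ℝ) * (Polynomial.Chebyshev.U ℝ ((n:ℤ)-1)).eval x / (2:ℝ)^(n-1) := by
    intro x
    have h1 : Polynomial.derivative (Polynomial.Chebyshev.T ℝ (n:ℤ))
        = C ((2:ℝ)^(n-1)) * Polynomial.derivative (Lagrange.nodal s v) := by
      rw [hfac, Polynomial.derivative_C_mul]
    rw [hTd] at h1
    have h2 := congrArg (Polynomial.eval x) h1
    simp only [Polynomial.eval_mul, Polynomial.eval_C, Polynomial.eval_natCast] at h2
    have h2ne : ((2:ℝ)^(n-1)) ≠ 0 := by positivity
    field_simp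
    linarith [h2]
  -- sin values at nodes
  have hsinθ : ∀ i ∈ s, 0 < Real.sin ((2*(i:ℝ)+1)*π/(2*(n:ℝ))) := by
    intro i hi
    have hi' : i < n := by rw [hs] at hi; simpa using hi
    have hθ := theta_mem hn hi'
    exact Real.sin_pos_of_pos_of_lt_pi hθ.1 hθ.2
  -- |P'(v i)| bound from Bernstein
  have hnode_bound : ∀ i ∈ s, |(Polynomial.derivative P).eval (v i)|
      * Real.sin ((2*(i:ℝ)+1)*π/(2*(n:ℝ))) ≤ n * S := by
    intro i hi
    have := bernstein_poly hn hdeg hS ((2*(i:ℝ)+1)*π/(2*(n:ℝ)))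
    rw [abs_mul, abs_of_pos (hsinθ i hi)] at this
    have hvi : v i = Real.cos ((2*(i:ℝ)+1)*π/(2*(n:ℝ))) := by
      rw [hv]; unfold chebNode; norm_num
    rw [hvi]
    exact this
  -- |nodalWeight| value
  have hweight : ∀ i ∈ s, |Lagrange.nodalWeight s v i|
      = (2:ℝ)^(n-1) * Real.sin ((2*(i:ℝ)+1)*π/(2*(n:ℝ))) / n := by
    intro i hi
    have hi' : i < n := by rw [hs] at hi; simpa using hi
    rw [Lagrange.nodalWeight_eq_eval_derivative_nodal hi]
    rw [hderiv_nodal (v i)]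
    have hU := U_at_node hn hi'
    have hsin := hsinθ i hi
    rw [abs_inv, abs_div, abs_mul]
    rw [abs_of_pos hnR, abs_of_pos (by positivity : (0:ℝ) < (2:ℝ)^(n-1))]
    have hUv : |(Polynomial.Chebyshev.U ℝ ((n:ℤ)-1)).eval (v i)|
        = 1 / Real.sin ((2*(i:ℝ)+1)*π/(2*(n:ℝ))) := by
      field_simp at hU ⊢
      linarith [hU]
    rw [hUv]
    field_simp
  -- nonnegativity of nodal erase at y
  have hv0 : v 0 = Real.cos (π/(2*(n:ℝ))) := by
    rw [hv]; unfold chebNode; norm_num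
  have hy_node : ∀ j ∈ s, v j ≤ y := by
    intro j hj
    have hj' : j < n := by rw [hs] at hj; simpa using hj
    have hle0 : v j ≤ v 0 := by
      rcases Nat.eq_zero_or_pos j with rfl | hj0
      · exact le_refl _
      · exact le_of_lt (chebNode_strictAnti hn hj0 hj')
    calc v j ≤ v 0 := hle0
      _ = Real.cos (π/(2*(n:ℝ))) := hv0
      _ ≤ y := hy1
  have hπpos : ∀ i ∈ s, 0 ≤ (Lagrange.nodal (s.erase i) v).eval y := by
    intro i hi
    rw [Lagrange.eval_nodal]
    apply Finset.prod_nonneg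
    intro j hj
    have := hy_node j (Finset.mem_of_mem_erase hj)
    linarith
  -- main chain
  have hyIcc : y ∈ Set.Icc (-1:ℝ) 1 := by
    constructor
    · refine le_trans ?_ hy1
      exact Real.neg_one_le_cos _
    · exact hy2
  have hUy := U_abs_le n hn y hyIcc
  have expand : (Polynomial.derivative P).eval y
      = ∑ i ∈ s, (Polynomial.derivative P).eval (v i) * (Lagrange.basis s v i).eval y := by
    conv_lhs => rw [hinterp]
    rw [Lagrange.interpolate_apply, Polynomial.eval_finset_sum]
    apply Finset.sum_congr rfl
    intro i hi
    rw [Polynomial.eval_mul, Polynomial.eval_C]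
  rw [expand]
  calc |∑ i ∈ s, (Polynomial.derivative P).eval (v i) * (Lagrange.basis s v i).eval y|
      ≤ ∑ i ∈ s, |(Polynomial.derivative P).eval (v i) * (Lagrange.basis s v i).eval y| :=
        Finset.abs_sum_le_sum_abs _ _
    _ ≤ ∑ i ∈ s, S * (2:ℝ)^(n-1) * (Lagrange.nodal (s.erase i) v).eval y := by
        apply Finset.sum_le_sum
        intro i hi
        rw [eval_basis_eq, abs_mul, abs_mul]
        rw [abs_of_nonneg (hπpos i hi), hweight i hi]
        have h1 := hnode_bound i hi
        have h2 := hsinθ i hi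
        have h3 := hπpos i hi
        -- |P'(v i)| * (2^{n-1} sin /n) ≤ S 2^{n-1}
        have h4 : |(Polynomial.derivative P).eval (v i)|
            * ((2:ℝ)^(n-1) * Real.sin ((2*(i:ℝ)+1)*π/(2*(n:ℝ))) / n) ≤ S * (2:ℝ)^(n-1) := by
          rw [div_eq_mul_inv]
          have h5 : 0 < ((n:ℝ))⁻¹ := by positivity
          have h6 : (0:ℝ) < (2:ℝ)^(n-1) := by positivity
          calc |(Polynomial.derivative P).eval (v i)|
              * ((2:ℝ)^(n-1) * Real.sin ((2*(i:ℝ)+1)*π/(2*(n:ℝ))) * ((n:ℝ))⁻¹)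
              = (|(Polynomial.derivative P).eval (v i)|
                * Real.sin ((2*(i:ℝ)+1)*π/(2*(n:ℝ)))) * ((2:ℝ)^(n-1) * ((n:ℝ))⁻¹) := by ring
            _ ≤ (n * S) * ((2:ℝ)^(n-1) * ((n:ℝ))⁻¹) := by
                apply mul_le_mul_of_nonneg_right h1
                positivity
            _ = S * (2:ℝ)^(n-1) := by field_simp
        calc |(Polynomial.derivative P).eval (v i)|
            * ((2:ℝ)^(n-1) * Real.sin ((2*(i:ℝ)+1)*π/(2*(n:ℝ))) / n
              * (Lagrange.nodal (s.erase i) v).eval y)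
            = (|(Polynomial.derivative P).eval (v i)|
              * ((2:ℝ)^(n-1) * Real.sin ((2*(i:ℝ)+1)*π/(2*(n:ℝ))) / n))
              * (Lagrange.nodal (s.erase i) v).eval y := by ring
          _ ≤ S * (2:ℝ)^(n-1) * (Lagrange.nodal (s.erase i) v).eval y :=
              mul_le_mul_of_nonneg_right h4 h3
    _ = S * (2:ℝ)^(n-1) * ∑ i ∈ s, (Lagrange.nodal (s.erase i) v).eval y := by
        rw [Finset.mul_sum]
    _ = S * (2:ℝ)^(n-1) * (Polynomial.derivative (Lagrange.nodal s v)).eval y := by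
        rw [Lagrange.derivative_nodal, Polynomial.eval_finset_sum]
    _ ≤ (n:ℝ)^2 * S := by
        rw [hderiv_nodal y]
        have h6 : ((2:ℝ)^(n-1)) ≠ 0 := by positivity
        have heq : S * (2:ℝ)^(n-1)
            * ((n:ℝ) * (Polynomial.Chebyshev.U ℝ ((n:ℤ)-1)).eval y / (2:ℝ)^(n-1))
            = S * ((n:ℝ) * (Polynomial.Chebyshev.U ℝ ((n:ℤ)-1)).eval y) := by
          field_simp
        rw [heq]
        have h8 : (Polynomial.Chebyshev.U ℝ ((n:ℤ)-1)).eval y ≤ (n:ℝ) :=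
          le_trans (le_abs_self _) hUy
        have h9 := mul_le_mul_of_nonneg_left h8 (mul_nonneg hS0 hnR.le)
        nlinarith [h9]

lemma markov_core (hn : 1 ≤ n) (hdeg : P.natDegree ≤ n) (hS0 : 0 ≤ S)
    (hS : ∀ x ∈ Set.Icc (-1:ℝ) 1, |P.eval x| ≤ S) :
    ∀ y ∈ Set.Icc (-1:ℝ) 1, |(Polynomial.derivative P).eval y| ≤ (n:ℝ)^2 * S := by
  intro y hy
  have hnR : (0:ℝ) < n := by positivity
  have hπ := Real.pi_pos
  set c := Real.cos (π/(2*n)) with hc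
  rcases lt_or_ge c y with hyc | hyc
  · exact markov_edge hn hdeg hS0 hS y hyc.le hy.2
  rcases lt_or_ge y (-c) with hcy | hcy
  · -- left edge: reflect
    set Q := P.comp (-X) with hQ
    have hQdeg : Q.natDegree ≤ n := by
      rw [hQ, Polynomial.natDegree_comp]
      rw [show ((-X : Polynomial ℝ)).natDegree = 1 by
        rw [Polynomial.natDegree_neg, Polynomial.natDegree_X]]
      simpa using hdeg
    have hQS : ∀ x ∈ Set.Icc (-1:ℝ) 1, |Q.eval x| ≤ S := by
      intro x hx
      rw [hQ, Polynomial.eval_comp]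
      simp only [Polynomial.eval_neg, Polynomial.eval_X]
      exact hS (-x) ⟨by linarith [hx.2], by linarith [hx.1]⟩
    have hQd : (Polynomial.derivative Q).eval (-y) = -((Polynomial.derivative P).eval y) := by
      rw [hQ, Polynomial.derivative_comp]
      simp [Polynomial.eval_comp]
    have := markov_edge hn hQdeg hS0 hQS (-y) (by linarith) (by linarith [hy.1])
    rw [hQd, abs_neg] at this
    exact this
  · -- middle: Bernstein + Jordan
    set θ := Real.arccos y with hθ
    have hcos : Real.cos θ = y := Real.cos_arccos hy.1 hy.2
    have hhalf : π/(2*(n:ℝ)) ≤ π/2 := by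
      rw [div_le_div_iff₀ (by positivity) (by norm_num)]
      have : (1:ℝ) ≤ (n:ℝ) := by exact_mod_cast hn
      nlinarith
    have hJ := Real.mul_le_sin (x := π/(2*(n:ℝ))) (by positivity) hhalf
    have hJ' : (1:ℝ)/(n:ℝ) ≤ Real.sin (π/(2*(n:ℝ))) := by
      have he : 2/π * (π/(2*(n:ℝ))) = 1/(n:ℝ) := by
        field_simp
      rw [he] at hJ
      exact hJ
    have hsin_eq : Real.sin (π/(2*(n:ℝ))) = Real.sqrt (1 - c^2) := by
      rw [hc, ← Real.sqrt_sq (Real.sin_nonneg_of_nonneg_of_le_pi (by positivity)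
        (by linarith)), Real.sin_sq]
    have hy2c2 : y^2 ≤ c^2 := sq_le_sq' (by linarith) hyc
    have hsinθ_eq : Real.sin θ = Real.sqrt (1 - y^2) := Real.sin_arccos y
    have hsin_ge : Real.sin (π/(2*(n:ℝ))) ≤ Real.sin θ := by
      rw [hsin_eq, hsinθ_eq]
      exact Real.sqrt_le_sqrt (by linarith)
    have hsin1n : (1:ℝ)/(n:ℝ) ≤ Real.sin θ := le_trans hJ' hsin_ge
    have hsin_pos : 0 < Real.sin θ := lt_of_lt_of_le (by positivity) hsin1n
    have hbern := bernstein_poly hn hdeg hS θ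
    rw [hcos, abs_mul, abs_of_pos hsin_pos] at hbern
    set D := |(Polynomial.derivative P).eval y| with hD
    have h2 : D * ((1:ℝ)/(n:ℝ)) ≤ D * Real.sin θ :=
      mul_le_mul_of_nonneg_left hsin1n (abs_nonneg _)
    have t1 : D * ((1:ℝ)/(n:ℝ)) ≤ (n:ℝ) * S := le_trans h2 hbern
    have t2 : D * ((1:ℝ)/(n:ℝ)) * (n:ℝ) ≤ ((n:ℝ) * S) * (n:ℝ) :=
      mul_le_mul_of_nonneg_right t1 hnR.le
    have t3 : D * ((1:ℝ)/(n:ℝ)) * (n:ℝ) = D := by field_simp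
    rw [t3] at t2
    calc D ≤ ((n:ℝ)*S)*(n:ℝ) := t2
      _ = (n:ℝ)^2 * S := by ring

end F4


theorem markov_inequality_interval_aux (a b : ℝ) (hab : a < b) (n : ℕ) (hn : 1 ≤ n)
    (P : Polynomial ℝ) (hP : P.degree ≤ n) :
    (⨆ x : Set.Icc a b, |(Polynomial.derivative P).eval ↑x|) ≤
      (2 * (n : ℝ) ^ 2 / (b - a)) * ⨆ x : Set.Icc a b, |P.eval ↑x| := by
  have hdegP : P.natDegree ≤ n := Polynomial.natDegree_le_iff_degree_le.mpr hP
  haveI : Nonempty (Set.Icc a b) := ⟨⟨a, Set.left_mem_Icc.2 hab.le⟩⟩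
  set S := ⨆ x : Set.Icc a b, |P.eval (x:ℝ)| with hs
  have hbdd : BddAbove (Set.range fun x : Set.Icc a b => |P.eval (x:ℝ)|) := by
    have hcomp : IsCompact (Set.Icc a b) := isCompact_Icc
    have himg : (Set.range fun x : Set.Icc a b => |P.eval (x:ℝ)|)
        = (fun y => |P.eval y|) '' (Set.Icc a b) := by
      ext z
      constructor
      · rintro ⟨⟨w, hw⟩, rfl⟩
        exact ⟨w, hw, rfl⟩
      · rintro ⟨w, hw, rfl⟩
        exact ⟨⟨w, hw⟩, rfl⟩
    rw [himg]
    exact (hcomp.image_of_continuousOn ((P.continuous).abs.continuousOn)).bddAbove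
  have hle : ∀ y ∈ Set.Icc a b, |P.eval y| ≤ S := by
    intro y hy
    exact le_ciSup hbdd ⟨y, hy⟩
  have hS0 : 0 ≤ S := le_trans (abs_nonneg _) (hle a (Set.left_mem_Icc.2 hab.le))
  set Q := P.comp (C ((b-a)/2) * X + C ((a+b)/2)) with hQ
  have hlin_deg : (C ((b-a)/2) * X + C ((a+b)/2) : Polynomial ℝ).natDegree = 1 := by
    apply Polynomial.natDegree_linear
    intro h
    have : b - a = 0 := by linarith [h]
    linarith
  have hQdeg : Q.natDegree ≤ n := by
    rw [hQ, Polynomial.natDegree_comp, hlin_deg, mul_one]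
    exact hdegP
  have hlin_eval : ∀ x : ℝ, (C ((b-a)/2) * X + C ((a+b)/2) : Polynomial ℝ).eval x
      = (b-a)/2 * x + (a+b)/2 := by
    intro x
    simp
  have hQS : ∀ x ∈ Set.Icc (-1:ℝ) 1, |Q.eval x| ≤ S := by
    intro x hx
    rw [hQ, Polynomial.eval_comp, hlin_eval]
    apply hle
    constructor
    · nlinarith [hx.1, hx.2]
    · nlinarith [hx.1, hx.2]
  have hQd : Polynomial.derivative Q
      = C ((b-a)/2) * (Polynomial.derivative P).comp (C ((b-a)/2) * X + C ((a+b)/2)) := by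
    rw [hQ, Polynomial.derivative_comp]
    congr 1
    simp
  have hcore := markov_core hn hQdeg hS0 hQS
  apply ciSup_le
  rintro ⟨y, hy⟩
  simp only
  set x := (2*y - (a+b))/(b-a) with hx
  have hxIcc : x ∈ Set.Icc (-1:ℝ) 1 := by
    rw [hx]
    constructor
    · rw [le_div_iff₀ (by linarith)]
      linarith [hy.1]
    · rw [div_le_iff₀ (by linarith)]
      linarith [hy.2]
  have hlx : (b-a)/2 * x + (a+b)/2 = y := by
    have hba : b - a ≠ 0 := by linarith
    rw [hx]
    field_simp
    ring
  have hQdy : (Polynomial.derivative Q).eval x = (b-a)/2 * (Polynomial.derivative P).eval y := by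
    rw [hQd]
    simp only [Polynomial.eval_mul, Polynomial.eval_C, Polynomial.eval_comp]
    rw [hlin_eval, hlx]
  have hb := hcore x hxIcc
  rw [hQdy, abs_mul, abs_of_pos (by linarith : (0:ℝ) < (b-a)/2)] at hb
  rw [div_mul_eq_mul_div, le_div_iff₀ (by linarith : (0:ℝ) < b - a)]
  nlinarith [hb]

/-- Markov's inequality on an arbitrary interval `[a,b]`:
`‖P'‖_{[a,b]} ≤ (2n²/(b−a)) · ‖P‖_{[a,b]}` for `P` of degree at most `n ≥ 1`. -/
theorem markov_inequality_interval (a b : ℝ) (hab : a < b) (n : ℕ) (hn : 1 ≤ n)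
    (P : Polynomial ℝ) (hP : P.degree ≤ n) :
    (⨆ x : Set.Icc a b, |(Polynomial.derivative P).eval ↑x|) ≤
      (2 * (n : ℝ) ^ 2 / (b - a)) * ⨆ x : Set.Icc a b, |P.eval ↑x| := by
  exact markov_inequality_interval_aux a b hab n hn P hP
end

section
/- Let 0 < β < π and let T be a trigonometric polynomial of degree at most n, i.e., T(t) = a₀ + Σ_{k=1}^n (a_k cos(kt) + b_k sin(kt)) with real coefficients. Then for every θ ∈ (−β, β), |T'(θ)| ≤ n · (cos(θ/2) / √(sin²(β/2) − sin²(θ/2))) · sup_{t∈[−β,β]} |T(t)| (Videnskii's inequality). -/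
open Real Finset Set


open Real Finset Set Polynomial

noncomputable section

/-- `f` is (the real restriction of) a trigonometric polynomial of degree ≤ N,
encoded as `f u = exp(-N i u) * Q(exp(i u))` with `Q` of degree ≤ 2N. -/
def IsTP (N : ℕ) (f : ℝ → ℝ) : Prop :=
  ∃ Q : Polynomial ℂ, Q.natDegree ≤ 2 * N ∧
    ∀ u : ℝ, (f u : ℂ) = Complex.exp (-(N : ℂ) * Complex.I * u) * Q.eval (Complex.exp (Complex.I * u))

namespace IsTP

lemma const (N : ℕ) (c : ℝ) : IsTP N (fun _ => c) := by
  refine ⟨Polynomial.C (c : ℂ) * Polynomial.X ^ N, ?_, ?_⟩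
  · calc (Polynomial.C (c:ℂ) * Polynomial.X ^ N).natDegree
        ≤ (Polynomial.C (c:ℂ)).natDegree + (Polynomial.X ^ N : Polynomial ℂ).natDegree :=
          Polynomial.natDegree_mul_le
      _ ≤ 2 * N := by simp [Polynomial.natDegree_X_pow]; omega
  · intro u
    simp only [Polynomial.eval_mul, Polynomial.eval_C, Polynomial.eval_pow, Polynomial.eval_X]
    rw [← Complex.exp_nat_mul, ← mul_assoc, mul_comm (Complex.exp _) ((c:ℂ)), mul_assoc,
      ← Complex.exp_add]
    ring_nf
    simp

lemma mono {N M : ℕ} {f : ℝ → ℝ} (h : IsTP N f) (hNM : N ≤ M) : IsTP M f := by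
  obtain ⟨Q, hdeg, heval⟩ := h
  refine ⟨Polynomial.X ^ (M - N) * Q, ?_, ?_⟩
  · calc (Polynomial.X ^ (M-N) * Q).natDegree ≤ (M - N) + Q.natDegree := by
          simpa [Polynomial.natDegree_X_pow] using
            (Polynomial.natDegree_mul_le (p := (Polynomial.X : Polynomial ℂ) ^ (M-N)) (q := Q))
      _ ≤ 2 * M := by omega
  · intro u
    rw [heval u]
    simp only [Polynomial.eval_mul, Polynomial.eval_pow, Polynomial.eval_X]
    rw [← Complex.exp_nat_mul, ← mul_assoc, ← Complex.exp_add]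
    congr 2
    have : ((M - N : ℕ) : ℂ) = (M : ℂ) - (N : ℂ) := by
      push_cast [Nat.cast_sub hNM]; ring
    rw [this]
    ring

lemma add {N : ℕ} {f g : ℝ → ℝ} (hf : IsTP N f) (hg : IsTP N g) :
    IsTP N (fun u => f u + g u) := by
  obtain ⟨Q, hQ, hQe⟩ := hf
  obtain ⟨R, hR, hRe⟩ := hg
  refine ⟨Q + R, le_trans (Polynomial.natDegree_add_le _ _) (by omega), fun u => ?_⟩
  push_cast
  rw [hQe u, hRe u, Polynomial.eval_add]; ring

lemma const_mul {N : ℕ} {f : ℝ → ℝ} (hf : IsTP N f) (c : ℝ) :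
    IsTP N (fun u => c * f u) := by
  obtain ⟨Q, hQ, hQe⟩ := hf
  refine ⟨Polynomial.C (c:ℂ) * Q, ?_, fun u => ?_⟩
  · exact le_trans Polynomial.natDegree_mul_le (by simp; omega)
  · push_cast
    rw [hQe u]; simp only [Polynomial.eval_mul, Polynomial.eval_C]; ring

lemma neg {N : ℕ} {f : ℝ → ℝ} (hf : IsTP N f) : IsTP N (fun u => -(f u)) := by
  simpa [neg_mul, one_mul] using hf.const_mul (-1)

lemma sub {N : ℕ} {f g : ℝ → ℝ} (hf : IsTP N f) (hg : IsTP N g) :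
    IsTP N (fun u => f u - g u) := by
  simpa [sub_eq_add_neg] using hf.add hg.neg

lemma mul {N M : ℕ} {f g : ℝ → ℝ} (hf : IsTP N f) (hg : IsTP M g) :
    IsTP (N + M) (fun u => f u * g u) := by
  obtain ⟨Q, hQ, hQe⟩ := hf
  obtain ⟨R, hR, hRe⟩ := hg
  refine ⟨Q * R, le_trans Polynomial.natDegree_mul_le (by omega), fun u => ?_⟩
  push_cast
  rw [hQe u, hRe u, Polynomial.eval_mul]
  rw [show (-((N:ℂ) + (M:ℂ))) * Complex.I * u
      = (-(N:ℂ) * Complex.I * u) + (-(M:ℂ) * Complex.I * u) by push_cast; ring,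
    Complex.exp_add]
  ring

lemma sum {N : ℕ} {ι : Type*} (s : Finset ι) (f : ι → ℝ → ℝ)
    (h : ∀ i ∈ s, IsTP N (f i)) : IsTP N (fun u => ∑ i ∈ s, f i u) := by
  classical
  induction s using Finset.induction with
  | empty => simpa using IsTP.const N 0
  | insert c s' hx ih =>
      simp only [Finset.sum_insert hx]
      exact (h c (Finset.mem_insert_self c s')).add
        (ih (fun i hi => h i (Finset.mem_insert_of_mem hi)))

lemma cos_linear (m : ℕ) (α : ℝ) : IsTP m (fun u => Real.cos (m * u + α)) := by
  refine ⟨Polynomial.C (Complex.exp ((α:ℂ) * Complex.I) / 2) * Polynomial.X ^ (2*m)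
      + Polynomial.C (Complex.exp (-(α:ℂ) * Complex.I) / 2), ?_, fun u => ?_⟩
  · refine le_trans (Polynomial.natDegree_add_le _ _) ?_
    simp only [Polynomial.natDegree_C, max_le_iff]
    constructor
    · exact le_trans Polynomial.natDegree_mul_le (by simp)
    · omega
  · simp only [Polynomial.eval_add, Polynomial.eval_mul, Polynomial.eval_C, Polynomial.eval_pow,
      Polynomial.eval_X]
    rw [← Complex.exp_nat_mul]
    have h1 : ((Real.cos ((m:ℝ) * u + α) : ℝ) : ℂ) = Complex.cos (((m:ℝ)*u + α : ℝ) : ℂ) := by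
      rw [Complex.ofReal_cos]
    rw [h1]
    have key : ∀ z : ℂ, Complex.cos z = (Complex.exp (z * Complex.I) + Complex.exp (-z * Complex.I)) / 2 := by
      intro z
      rw [Complex.exp_mul_I, Complex.exp_mul_I]
      simp [Complex.cos_neg, Complex.sin_neg]
      ring
    rw [key]
    have A : Complex.exp (-(m:ℂ)*Complex.I*u) * Complex.exp ((α:ℂ)*Complex.I)
        * Complex.exp (((2*m:ℕ):ℂ)*(Complex.I*u))
        = Complex.exp (((((m:ℝ)*u+α) : ℝ):ℂ) * Complex.I) := by
      rw [← Complex.exp_add, ← Complex.exp_add]; congr 1; push_cast; ring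
    have B : Complex.exp (-(m:ℂ)*Complex.I*u) * Complex.exp (-(α:ℂ)*Complex.I)
        = Complex.exp (-((((m:ℝ)*u+α) : ℝ):ℂ) * Complex.I) := by
      rw [← Complex.exp_add]; congr 1; push_cast; ring
    rw [← A, ← B]
    ring

end IsTP
end
noncomputable section

lemma sum_count_le {α : Type*} [DecidableEq α] (s : Finset α) (R : Multiset α) :
    (∑ x ∈ s, R.count x) ≤ Multiset.card R := by
  classical
  induction s using Finset.induction generalizing R with
  | empty => simp
  | @insert a s' ha ih =>
      rw [Finset.sum_insert ha]
      have hsplit : Multiset.card (R.filter (a = ·)) + Multiset.card (R.filter (¬ a = ·)) =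
          Multiset.card R := by
        rw [← Multiset.card_add, Multiset.filter_add_not]
      have hcount : R.count a = Multiset.card (R.filter (a = ·)) :=
        Multiset.count_eq_card_filter_eq R a
      have hsum : (∑ x ∈ s', R.count x) = ∑ x ∈ s', (R.filter (¬ a = ·)).count x := by
        refine Finset.sum_congr rfl fun x hx => ?_
        rw [Multiset.count_filter, if_pos (show ¬ a = x from fun hax => ha (hax ▸ hx))]
      rw [hcount, hsum]
      have := ih (R.filter (¬ a = ·))
      omega

lemma exp_I_eq_exp_I {z z' : ℝ}
    (h : Complex.exp (Complex.I * z) = Complex.exp (Complex.I * z')) :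
    ∃ k : ℤ, z = z' + k * (2*π) := by
  rw [Complex.exp_eq_exp_iff_exists_int] at h
  obtain ⟨k, hk⟩ := h
  refine ⟨k, ?_⟩
  have h2 : Complex.I * ((z : ℂ) - (z' : ℂ)) = Complex.I * ((k : ℂ) * (2*π)) := by
    rw [mul_sub, hk]; ring
  have h3 : ((z : ℂ) - z') = ((k:ℂ) * (2*π)) := mul_left_cancel₀ Complex.I_ne_zero h2
  have h4 : (z : ℝ) - z' = k * (2*π) := by exact_mod_cast h3
  linarith

lemma exp_inj_on_Ioo {e₀ : ℝ} {z z' : ℝ} (hz : z ∈ Set.Ioo e₀ (e₀ + 2*π))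
    (hz' : z' ∈ Set.Ioo e₀ (e₀ + 2*π))
    (h : Complex.exp (Complex.I * z) = Complex.exp (Complex.I * z')) : z = z' := by
  obtain ⟨k, h4'⟩ := exp_I_eq_exp_I h
  have h4 : z - z' = k * (2*π) := by linarith
  have hπ := Real.pi_pos
  have hb : |(z:ℝ) - z'| < 2*π := by
    rw [abs_lt]; constructor <;> nlinarith [hz.1, hz.2, hz'.1, hz'.2]
  have : k = 0 := by
    by_contra hk0
    have : (1:ℝ) ≤ |(k:ℝ)| := by
      rw [← Int.cast_abs]
      exact_mod_cast Int.one_le_abs hk0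
    rw [h4, abs_mul] at hb
    have : |(2*π)| = 2*π := abs_of_pos (by linarith)
    nlinarith [abs_nonneg ((k:ℝ))]
  rw [this] at h4; push_cast at h4; linarith

/-- Core zero-counting lemma: if `u ↦ h u * h (u+π)` is a trig poly of degree ≤ N,
nonzero somewhere, and `h` vanishes on a finset `Z` inside an open interval of
length `2π`, then `Z.card ≤ N`. -/
lemma core_count (N : ℕ) (h : ℝ → ℝ) (hdiff : Differentiable ℝ h)
    (hper : ∀ u, h (u + 2*π) = h u)
    (hW : IsTP N (fun u => h u * h (u + π)))
    (u₁ : ℝ) (hne : h u₁ * h (u₁ + π) ≠ 0)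
    (e₀ : ℝ) (Z : Finset ℝ) (hZsub : ∀ z ∈ Z, z ∈ Set.Ioo e₀ (e₀ + 2*π))
    (hZzero : ∀ z ∈ Z, h z = 0) : Z.card ≤ N := by
  classical
  obtain ⟨Q, hQdeg, hQe⟩ := hW
  set W : ℝ → ℝ := fun u => h u * h (u + π) with hWdef
  set φ : ℝ → ℂ := fun z => Complex.exp (Complex.I * z) with hφdef
  -- h is periodic with any integer multiple of 2π
  have hperk : ∀ (k : ℤ) (u : ℝ), h (u + k * (2*π)) = h u := by
    have hp : Function.Periodic h (2*π) := hper
    intro k u; exact (hp.int_mul k) u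
  -- Q is nonzero
  have hQ0 : Q ≠ 0 := by
    intro hQ
    apply hne
    have := hQe u₁
    rw [hQ] at this
    simp at this
    exact_mod_cast this
  -- roots are roots of Q
  have hroot : ∀ u : ℝ, W u = 0 → Q.IsRoot (φ u) := by
    intro u hu
    have := hQe u
    rw [hu] at this
    simp only [Complex.ofReal_zero] at this
    have := this.symm
    rcases mul_eq_zero.mp this with h1 | h2
    · exact absurd h1 (Complex.exp_ne_zero _)
    · exact h2
  -- double roots
  have hdroot : ∀ u : ℝ, W u = 0 → (deriv W u = 0) → (Polynomial.derivative Q).IsRoot (φ u) := by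
    intro u hu hdu
    -- F := fun v => exp(-N I v) * Q.eval (exp (I v)) equals (W ·:ℂ)
    have hQroot := hroot u hu
    -- derivative of the complex function
    have hg : HasDerivAt (fun v : ℝ => Complex.exp (Complex.I * v))
        (Complex.I * Complex.exp (Complex.I * u)) u := by
      have h1 : HasDerivAt (fun v : ℝ => (Complex.I * v : ℂ)) Complex.I u := by
        simpa using ((Complex.ofRealCLM.hasDerivAt (x := u)).const_mul Complex.I)
      simpa [mul_comm] using h1.cexp
    have hgexp : HasDerivAt (fun v : ℝ => Complex.exp (-(N:ℂ) * Complex.I * v))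
        (-(N:ℂ) * Complex.I * Complex.exp (-(N:ℂ) * Complex.I * u)) u := by
      have h1 : HasDerivAt (fun v : ℝ => (-(N:ℂ) * Complex.I * v : ℂ)) (-(N:ℂ) * Complex.I) u := by
        simpa using ((Complex.ofRealCLM.hasDerivAt (x := u)).const_mul (-(N:ℂ) * Complex.I))
      simpa [mul_comm] using h1.cexp
    have hpoly : HasDerivAt (fun z : ℂ => Q.eval z) ((Polynomial.derivative Q).eval (φ u)) (φ u) :=
      Q.hasDerivAt (φ u)
    have hcomp : HasDerivAt (fun v : ℝ => Q.eval (Complex.exp (Complex.I * v)))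
        ((Polynomial.derivative Q).eval (φ u) * (Complex.I * Complex.exp (Complex.I * u))) u :=
      HasDerivAt.comp u hpoly hg
    have hF : HasDerivAt (fun v : ℝ => Complex.exp (-(N:ℂ) * Complex.I * v)
          * Q.eval (Complex.exp (Complex.I * v)))
        (-(N:ℂ) * Complex.I * Complex.exp (-(N:ℂ) * Complex.I * u) * Q.eval (φ u)
          + Complex.exp (-(N:ℂ) * Complex.I * u)
            * ((Polynomial.derivative Q).eval (φ u) * (Complex.I * Complex.exp (Complex.I * u)))) u :=
      hgexp.mul hcomp
    -- W as complex function has derivative (deriv W u : ℂ)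
    have hWd : HasDerivAt W (deriv W u) u := by
      apply DifferentiableAt.hasDerivAt
      have h2 : DifferentiableAt ℝ (fun v => h (v + π)) u := by
        exact (hdiff (u + π)).comp u (differentiableAt_id.add_const π)
      exact (hdiff u).mul h2
    have hWc : HasDerivAt (fun v : ℝ => ((W v : ℝ) : ℂ)) ((deriv W u : ℝ) : ℂ) u :=
      hWd.ofReal_comp
    have hfuneq : (fun v : ℝ => ((W v : ℝ) : ℂ))
        = (fun v : ℝ => Complex.exp (-(N:ℂ) * Complex.I * v) * Q.eval (Complex.exp (Complex.I * v))) := by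
      funext v; exact hQe v
    rw [hfuneq] at hWc
    have huniq := hF.unique hWc
    rw [hdu] at huniq
    simp only [Complex.ofReal_zero] at huniq
    rw [Polynomial.IsRoot.def] at hQroot
    rw [hQroot, mul_zero, zero_add] at huniq
    have hzero : (Polynomial.derivative Q).eval (φ u)
        * (Complex.exp (-(N:ℂ) * Complex.I * u) * (Complex.I * Complex.exp (Complex.I * u))) = 0 := by
      rw [← huniq]; ring
    rcases mul_eq_zero.mp hzero with h1 | h2
    · exact h1
    · exfalso
      rcases mul_eq_zero.mp h2 with h3 | h4
      · exact Complex.exp_ne_zero _ h3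
      · rcases mul_eq_zero.mp h4 with h5 | h6
        · exact Complex.I_ne_zero h5
        · exact Complex.exp_ne_zero _ h6
  -- the two image finsets
  set F₁ : Finset ℂ := Z.image φ with hF₁
  set F₂ : Finset ℂ := Z.image (fun z => φ (z + π)) with hF₂
  have hinj₁ : Set.InjOn φ Z := by
    intro z hz z' hz' hzz
    exact exp_inj_on_Ioo (hZsub z hz) (hZsub z' hz') hzz
  have hinj₂ : Set.InjOn (fun z => φ (z + π)) Z := by
    intro z hz z' hz' hzz
    have h1 := exp_inj_on_Ioo (e₀ := e₀ + π) (z := z + π) (z' := z' + π)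
      ⟨by have := (hZsub z hz).1; linarith, by have := (hZsub z hz).2; linarith⟩
      ⟨by have := (hZsub z' hz').1; linarith, by have := (hZsub z' hz').2; linarith⟩ hzz
    linarith
  have hcard₁ : F₁.card = Z.card := Finset.card_image_of_injOn hinj₁
  have hcard₂ : F₂.card = Z.card := Finset.card_image_of_injOn hinj₂
  -- roots from membership
  have hrootF₁ : ∀ ξ ∈ F₁, Q.IsRoot ξ := by
    intro ξ hξ
    obtain ⟨z, hz, rfl⟩ := Finset.mem_image.mp hξ
    exact hroot z (by show h z * _ = 0; rw [hZzero z hz, zero_mul])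
  have hrootF₂ : ∀ ξ ∈ F₂, Q.IsRoot ξ := by
    intro ξ hξ
    obtain ⟨z, hz, rfl⟩ := Finset.mem_image.mp hξ
    refine hroot (z + π) ?_
    show h (z+π) * h (z+π+π) = 0
    have : z + π + π = z + 2*π := by ring
    rw [this, hper z, hZzero z hz, mul_zero]
  have hrootBoth : ∀ ξ ∈ F₁, ξ ∈ F₂ → (Polynomial.derivative Q).IsRoot ξ := by
    intro ξ hξ₁ hξ₂
    obtain ⟨z₁, hz₁, hzeq₁⟩ := Finset.mem_image.mp hξ₁
    obtain ⟨z₂, hz₂, hzeq₂⟩ := Finset.mem_image.mp hξ₂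
    -- φ z₁ = φ (z₂ + π)
    have hee : Complex.exp (Complex.I * (z₁ : ℝ)) = Complex.exp (Complex.I * ((z₂ + π : ℝ) : ℂ)) := by
      have h0 : φ z₁ = φ (z₂ + π) := by simpa using hzeq₁.trans hzeq₂.symm
      exact h0
    obtain ⟨k, hk⟩ := exp_I_eq_exp_I hee
    have hz₁π : h (z₁ + π) = 0 := by
      have heq2 : z₁ + π = z₂ + ((k+1 : ℤ) : ℝ) * (2*π) := by push_cast; linarith
      rw [heq2, hperk (k+1) z₂]
      exact hZzero z₂ hz₂
    have hWz : W z₁ = 0 := by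
      show h z₁ * h (z₁ + π) = 0; rw [hz₁π, mul_zero]
    have hWd : deriv W z₁ = 0 := by
      have hD : HasDerivAt W (deriv h z₁ * h (z₁+π) + h z₁ * (deriv h (z₁+π) * 1)) z₁ := by
        have h2 : HasDerivAt (fun v => h (v + π)) (deriv h (z₁+π) * 1) z₁ :=
          HasDerivAt.comp z₁ ((hdiff (z₁+π)).hasDerivAt) ((hasDerivAt_id z₁).add_const π)
        exact ((hdiff z₁).hasDerivAt).mul h2
      rw [hD.deriv, hz₁π, hZzero z₁ hz₁]
      ring
    have := hdroot z₁ hWz hWd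
    rwa [hzeq₁] at this
  -- counting
  have hkey : ∀ ξ ∈ F₁ ∪ F₂,
      ((if ξ ∈ F₁ then 1 else 0) + (if ξ ∈ F₂ then 1 else 0) : ℕ) ≤ Q.roots.count ξ := by
    intro ξ hξ
    rw [Polynomial.count_roots]
    by_cases h1 : ξ ∈ F₁ <;> by_cases h2 : ξ ∈ F₂ <;> simp [h1, h2]
    · have := (Polynomial.one_lt_rootMultiplicity_iff_isRoot hQ0).mpr
        ⟨hrootF₁ ξ h1, hrootBoth ξ h1 h2⟩
      omega
    · exact (Polynomial.rootMultiplicity_pos hQ0).mpr (hrootF₁ ξ h1)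
    · exact (Polynomial.rootMultiplicity_pos hQ0).mpr (hrootF₂ ξ h2)
  have hsum1 : (∑ ξ ∈ F₁ ∪ F₂, (if ξ ∈ F₁ then (1:ℕ) else 0)) = F₁.card := by
    rw [Finset.sum_ite_mem, Finset.union_inter_cancel_left, Finset.card_eq_sum_ones]
  have hsum2 : (∑ ξ ∈ F₁ ∪ F₂, (if ξ ∈ F₂ then (1:ℕ) else 0)) = F₂.card := by
    rw [Finset.sum_ite_mem, Finset.union_inter_cancel_right, Finset.card_eq_sum_ones]
  have htotal : F₁.card + F₂.card ≤ ∑ ξ ∈ F₁ ∪ F₂, Q.roots.count ξ := by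
    rw [← hsum1, ← hsum2, ← Finset.sum_add_distrib]
    exact Finset.sum_le_sum hkey
  have hfin : ∑ ξ ∈ F₁ ∪ F₂, Q.roots.count ξ ≤ Multiset.card Q.roots :=
    sum_count_le _ _
  have hdeg2 : Multiset.card Q.roots ≤ 2 * N :=
    le_trans (Polynomial.card_roots' Q) hQdeg
  omega

end
noncomputable section

set_option maxHeartbeats 2000000 in
/-- Main comparison lemma. -/
lemma comparison_lemma (n : ℕ) (hn : 1 ≤ n) (M : ℝ) (S : ℝ → ℝ)
    (hSdiff : Differentiable ℝ S)
    (hSb : ∀ u, |S u| ≤ M)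
    (hSper : ∀ u, S (u + 2*π) = S u)
    (hG₁ : IsTP (2*n) (fun u => S u + S (u + π)))
    (hG₂ : IsTP (4*n) (fun u => S u * S (u + π)))
    (u₀ D : ℝ) (hD : HasDerivAt S D u₀) :
    D ≤ 2*n*M := by
  by_contra hcon
  push_neg at hcon
  have hπ := Real.pi_pos
  have hM0 : 0 ≤ M := le_trans (abs_nonneg _) (hSb 0)
  have hn' : (0:ℝ) < n := by exact_mod_cast hn
  set ε : ℝ := (D - 2*n*M) / (4*n) with hεdef
  have hε : 0 < ε := by
    apply div_pos; · linarith
    · linarith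
  set K : ℝ := M + ε with hKdef
  have hK0 : 0 < K := by linarith
  have hKD : 2*n*K < D := by
    have : 2*(n:ℝ)*ε = (D - 2*n*M)/2 := by
      rw [hεdef]; field_simp; ring
    have h2 : 2*(n:ℝ)*K = 2*n*M + 2*n*ε := by ring
    rw [h2, this]; linarith
  have hSu₀ : |S u₀| ≤ M := hSb u₀
  have hratio : S u₀ / K ∈ Set.Ioo (-1 : ℝ) 1 := by
    rw [abs_le] at hSu₀
    constructor
    · rw [lt_div_iff₀ hK0]; linarith
    · rw [div_lt_one hK0]; linarith
  set xs : ℝ := Real.arccos (S u₀ / K) with hxdef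
  have hx1 : 0 < xs := by
    rw [hxdef]; rw [Real.arccos_pos]; exact hratio.2
  have hx2 : xs < π := by
    rw [hxdef, Real.arccos]
    have : -(π/2) < Real.arcsin (S u₀ / K) := Real.neg_pi_div_two_lt_arcsin.mpr hratio.1
    linarith
  have hcosx : Real.cos xs = S u₀ / K :=
    Real.cos_arccos (le_of_lt hratio.1) (le_of_lt hratio.2)
  set m : ℕ := 2*n with hmdef
  have hm' : (0:ℝ) < m := by rw [hmdef]; push_cast; linarith
  set α : ℝ := -xs - m * u₀ with hαdef
  set h : ℝ → ℝ := fun u => K * Real.cos (m*u + α) - S u with hhdef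
  have hhdiff : Differentiable ℝ h := by
    apply Differentiable.sub _ hSdiff
    apply Differentiable.const_mul
    apply Real.differentiable_cos.comp
    exact (differentiable_id.const_mul _).add_const α
  have hhcont : Continuous h := hhdiff.continuous
  -- value and derivative at u₀
  have hargu₀ : m * u₀ + α = -xs := by rw [hαdef]; ring
  have hhu₀ : h u₀ = 0 := by
    rw [hhdef]; simp only
    rw [hargu₀, Real.cos_neg, hcosx]
    field_simp
    ring
  have hhd : HasDerivAt h (K * (-Real.sin (m*u₀ + α) * ((m:ℝ)*1)) - D) u₀ := by
    have h1 : HasDerivAt (fun u : ℝ => (m:ℝ)*u + α) ((m:ℝ)*1) u₀ :=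
      ((hasDerivAt_id u₀).const_mul (m:ℝ)).add_const α
    exact (h1.cos.const_mul K).sub hD
  have hhd0 : K * (-Real.sin (m*u₀ + α) * ((m:ℝ)*1)) - D < 0 := by
    have hs : |Real.sin (m*u₀ + α)| ≤ 1 := Real.abs_sin_le_one _
    rw [abs_le] at hs
    have hmK : (m:ℝ) * K = 2*n*K := by rw [hmdef]; push_cast; ring
    have h1 : K * (-Real.sin ((m:ℝ) * u₀ + α) * ((m:ℝ)*1)) ≤ K * ((m:ℝ)*1) := by
      apply mul_le_mul_of_nonneg_left _ (le_of_lt hK0)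
      have h2 := hs.1
      nlinarith [hm']
    have h3 : K * ((m:ℝ)*1) = 2*n*K := by rw [mul_one, mul_comm]; exact hmK
    linarith
  -- the extreme points
  set e : ℕ → ℝ := fun j => u₀ + (((j:ℝ) - 1) * π + xs) / m with hedef
  have hemono : ∀ {j k : ℕ}, j < k → e j < e k := by
    intro j k hjk
    rw [hedef]; simp only
    apply (add_lt_add_iff_left u₀).mpr
    apply div_lt_div_of_pos_right _ hm'
    have : (j:ℝ) < k := by exact_mod_cast hjk
    nlinarith
  have hemono' : ∀ {j k : ℕ}, j ≤ k → e j ≤ e k := by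
    intro j k hjk
    rcases eq_or_lt_of_le hjk with rfl | hlt
    · exact le_refl _
    · exact le_of_lt (hemono hlt)
  have hcose : ∀ j : ℕ, Real.cos (m * e j + α) = Real.cos (((j:ℝ) - 1) * π) := by
    intro j
    congr 1
    rw [hedef, hαdef]; simp only
    field_simp
    ring
  have hsign_odd : ∀ j : ℕ, Odd j → ε ≤ h (e j) := by
    intro j ⟨l, hl⟩
    have : Real.cos (((j:ℝ) - 1) * π) = 1 := by
      subst hl
      have : ((2*l+1:ℕ):ℝ) - 1 = (l:ℝ) * 2 := by push_cast; ring
      rw [this]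
      have : (l:ℝ) * 2 * π = (l:ℕ) * (2*π) := by push_cast; ring
      rw [this, Real.cos_nat_mul_two_pi]
    rw [hhdef]; simp only
    rw [hcose j, this, mul_one]
    have := hSb (e j)
    rw [abs_le] at this
    rw [hKdef]; linarith [this.2]
  have hsign_even : ∀ j : ℕ, Even j → h (e j) ≤ -ε := by
    intro j hj
    obtain ⟨l, hl⟩ := hj
    have : Real.cos (((j:ℝ) - 1) * π) = -1 := by
      subst hl
      have h1 : ((l + l :ℕ):ℝ) - 1 = (l:ℝ) * 2 - 1 := by push_cast; ring
      rw [h1]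
      have h2 : ((l:ℝ) * 2 - 1) * π = (l:ℤ) * (2*π) - π := by push_cast; ring
      rw [h2, Real.cos_int_mul_two_pi_sub_pi]
    rw [hhdef]; simp only
    rw [hcose j, this]
    have := hSb (e j)
    rw [abs_le] at this
    rw [hKdef]; nlinarith [this.1]
  -- middle zeros
  have hmid : ∀ j : ℕ, ∃ z, z ∈ Set.Ioo (e j) (e (j+1)) ∧ h z = 0 := by
    intro j
    rcases Nat.even_or_odd j with hj | hj
    · -- h (e j) ≤ -ε < 0 < ε ≤ h (e (j+1))
      have h1 := hsign_even j hj
      have h2 := hsign_odd (j+1) (Even.add_one hj)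
      have hsub : Set.Ioo (h (e j)) (h (e (j+1))) ⊆ h '' Set.Ioo (e j) (e (j+1)) :=
        intermediate_value_Ioo (le_of_lt (hemono (Nat.lt_succ_self j))) hhcont.continuousOn
      obtain ⟨z, hz, hz0⟩ := hsub (show (0:ℝ) ∈ Set.Ioo (h (e j)) (h (e (j+1))) from
        ⟨by linarith, by linarith⟩)
      exact ⟨z, hz, hz0⟩
    · have h1 := hsign_odd j hj
      have h2 := hsign_even (j+1) (Odd.add_one hj)
      have hsub : Set.Ioo (h (e (j+1))) (h (e j)) ⊆ h '' Set.Ioo (e j) (e (j+1)) :=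
        intermediate_value_Ioo' (le_of_lt (hemono (Nat.lt_succ_self j))) hhcont.continuousOn
      obtain ⟨z, hz, hz0⟩ := hsub (show (0:ℝ) ∈ Set.Ioo (h (e (j+1))) (h (e j)) from
        ⟨by linarith, by linarith⟩)
      exact ⟨z, hz, hz0⟩
  choose zz hzzmem hzzzero using hmid
  -- e 0 < u₀ < e 1
  have he0 : e 0 < u₀ := by
    rw [hedef]; simp only [Nat.cast_zero]
    have : ((0:ℝ) - 1) * π + xs < 0 := by linarith
    have h2 : (((0:ℝ) - 1) * π + xs)/m < 0 := div_neg_of_neg_of_pos this hm'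
    linarith
  have he1 : u₀ < e 1 := by
    rw [hedef]; simp only [Nat.cast_one]
    have : (0:ℝ) < (((1:ℝ) - 1) * π + xs)/m := by
      apply div_pos _ hm'; simpa using hx1
    linarith
  -- points near u₀ with strict signs
  have hslope : Filter.Tendsto (slope h u₀) (nhdsWithin u₀ {u₀}ᶜ)
      (nhds (K * (-Real.sin (m*u₀ + α) * ((m:ℝ)*1)) - D)) :=
    hasDerivAt_iff_tendsto_slope.mp hhd
  have hslope_neg : ∀ᶠ v in nhdsWithin u₀ {u₀}ᶜ, slope h u₀ v < 0 :=
    hslope.eventually_lt_const hhd0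
  -- right side point
  have hw₂ : ∃ w, u₀ < w ∧ w < e 1 ∧ h w < 0 := by
    have hne : (nhdsWithin u₀ (Set.Ioo u₀ (e 1))).NeBot := by
      apply mem_closure_iff_nhdsWithin_neBot.mp
      rw [closure_Ioo (ne_of_lt he1)]
      exact ⟨le_refl _, le_of_lt he1⟩
    have hev : ∀ᶠ v in nhdsWithin u₀ (Set.Ioo u₀ (e 1)), slope h u₀ v < 0 :=
      hslope_neg.filter_mono (nhdsWithin_mono u₀ (fun x hx => ne_of_gt hx.1))
    obtain ⟨w, hws, hwmem⟩ := (hev.and eventually_mem_nhdsWithin).exists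
    refine ⟨w, hwmem.1, hwmem.2, ?_⟩
    have hpos : 0 < w - u₀ := by linarith [hwmem.1]
    have := hws
    rw [slope_def_field, hhu₀, sub_zero] at this
    rcases div_neg_iff.mp this with ⟨h1, h2⟩ | ⟨h1, h2⟩
    · linarith
    · exact h1
  have hw₁ : ∃ w, e 0 < w ∧ w < u₀ ∧ 0 < h w := by
    have hne : (nhdsWithin u₀ (Set.Ioo (e 0) u₀)).NeBot := by
      apply mem_closure_iff_nhdsWithin_neBot.mp
      rw [closure_Ioo (ne_of_lt he0)]
      exact ⟨le_of_lt he0, le_refl _⟩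
    have hev : ∀ᶠ v in nhdsWithin u₀ (Set.Ioo (e 0) u₀), slope h u₀ v < 0 :=
      hslope_neg.filter_mono (nhdsWithin_mono u₀ (fun x hx => ne_of_lt hx.2))
    obtain ⟨w, hws, hwmem⟩ := (hev.and eventually_mem_nhdsWithin).exists
    refine ⟨w, hwmem.1, hwmem.2, ?_⟩
    have hneg : w - u₀ < 0 := by linarith [hwmem.2]
    have := hws
    rw [slope_def_field, hhu₀, sub_zero] at this
    rcases div_neg_iff.mp this with ⟨h1, h2⟩ | ⟨h1, h2⟩
    · linarith
    · linarith
  obtain ⟨w₂, hw₂1, hw₂2, hw₂3⟩ := hw₂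
  obtain ⟨w₁, hw₁1, hw₁2, hw₁3⟩ := hw₁
  -- zero in (e 0, w₁)
  have hza : ∃ z, z ∈ Set.Ioo (e 0) w₁ ∧ h z = 0 := by
    have h1 := hsign_even 0 (Even.zero)
    have hsub : Set.Ioo (h (e 0)) (h w₁) ⊆ h '' Set.Ioo (e 0) w₁ :=
      intermediate_value_Ioo (le_of_lt hw₁1) hhcont.continuousOn
    obtain ⟨z, hz, hz0⟩ := hsub (show (0:ℝ) ∈ Set.Ioo (h (e 0)) (h w₁) from ⟨by linarith, hw₁3⟩)
    exact ⟨z, hz, hz0⟩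
  have hzc : ∃ z, z ∈ Set.Ioo w₂ (e 1) ∧ h z = 0 := by
    have h1 := hsign_odd 1 (odd_one)
    have hsub : Set.Ioo (h w₂) (h (e 1)) ⊆ h '' Set.Ioo w₂ (e 1) :=
      intermediate_value_Ioo (le_of_lt hw₂2) hhcont.continuousOn
    obtain ⟨z, hz, hz0⟩ := hsub (show (0:ℝ) ∈ Set.Ioo (h w₂) (h (e 1)) from ⟨hw₂3, by linarith⟩)
    exact ⟨z, hz, hz0⟩
  obtain ⟨za, hzamem, hza0⟩ := hza
  obtain ⟨zc, hzcmem, hzc0⟩ := hzc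
  -- assemble the finset of zeros
  classical
  set Z₀ : Finset ℝ := (Finset.Icc 1 (4*n-1)).image zz with hZ₀def
  have hzzlt : ∀ {j k : ℕ}, j < k → zz j < zz k := by
    intro j k hjk
    have h1 := (hzzmem j).2
    have h2 := (hzzmem k).1
    have h3 : e (j+1) ≤ e k := hemono' hjk
    linarith
  have hzzinj : Set.InjOn zz (Finset.Icc 1 (4*n-1)) := by
    intro a _ b _ hab
    rcases lt_trichotomy a b with hlt | heq | hgt
    · exact absurd hab (ne_of_lt (hzzlt hlt))
    · exact heq
    · exact absurd hab.symm (ne_of_lt (hzzlt hgt))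
  have hZ₀card : Z₀.card = 4*n - 1 := by
    rw [hZ₀def, Finset.card_image_of_injOn hzzinj, Nat.card_Icc]
    omega
  have hZ₀lb : ∀ x ∈ Z₀, e 1 < x := by
    intro x hx
    obtain ⟨j, hj, rfl⟩ := Finset.mem_image.mp hx
    rw [Finset.mem_Icc] at hj
    have : e 1 ≤ e j := hemono' hj.1
    linarith [(hzzmem j).1]
  have hzaltu : za < u₀ := lt_trans hzamem.2 hw₁2
  have hultz : u₀ < zc := lt_trans hw₂1 hzcmem.1
  have hzclt : zc < e 1 := hzcmem.2
  set Z : Finset ℝ := insert za (insert u₀ (insert zc Z₀)) with hZdef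
  have hzcnot : zc ∉ Z₀ := fun hmem => absurd (hZ₀lb zc hmem) (by linarith)
  have hu₀not : u₀ ∉ insert zc Z₀ := by
    intro hmem
    rcases Finset.mem_insert.mp hmem with heq | hmem'
    · exact absurd heq (ne_of_lt hultz)
    · exact absurd (hZ₀lb u₀ hmem') (by linarith)
  have hzanot : za ∉ insert u₀ (insert zc Z₀) := by
    intro hmem
    rcases Finset.mem_insert.mp hmem with heq | hmem'
    · exact absurd heq (ne_of_lt hzaltu)
    rcases Finset.mem_insert.mp hmem' with heq | hmem''
    · exact absurd heq (ne_of_lt (lt_trans hzaltu hultz))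
    · exact absurd (hZ₀lb za hmem'') (by linarith)
  have hZcard : Z.card = 4*n + 2 := by
    rw [hZdef, Finset.card_insert_of_notMem hzanot, Finset.card_insert_of_notMem hu₀not,
      Finset.card_insert_of_notMem hzcnot, hZ₀card]
    omega
  -- e (4n) = e 0 + 2π
  have he4n : e (4*n) = e 0 + 2*π := by
    rw [hedef]; simp only [Nat.cast_zero, Nat.cast_mul, Nat.cast_ofNat]
    rw [hmdef]
    push_cast
    field_simp
    ring
  have he1lt : e 1 < e 0 + 2*π := by
    rw [← he4n]; exact hemono (by omega)
  have hZsub : ∀ z ∈ Z, z ∈ Set.Ioo (e 0) (e 0 + 2*π) := by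
    intro z hz
    rw [hZdef] at hz
    rcases Finset.mem_insert.mp hz with rfl | hz
    · exact ⟨hzamem.1, by linarith⟩
    rcases Finset.mem_insert.mp hz with rfl | hz
    · exact ⟨by linarith, by linarith⟩
    rcases Finset.mem_insert.mp hz with rfl | hz
    · exact ⟨by linarith [hzcmem.1], by linarith⟩
    · obtain ⟨j, hj, rfl⟩ := Finset.mem_image.mp hz
      rw [Finset.mem_Icc] at hj
      have hl : e 0 ≤ e j := hemono' (by omega)
      have hr : e (j+1) ≤ e (4*n) := hemono' (by omega)
      refine ⟨by linarith [(hzzmem j).1], by rw [← he4n]; linarith [(hzzmem j).2]⟩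
  have hZzero : ∀ z ∈ Z, h z = 0 := by
    intro z hz
    rw [hZdef] at hz
    rcases Finset.mem_insert.mp hz with rfl | hz
    · exact hza0
    rcases Finset.mem_insert.mp hz with rfl | hz
    · exact hhu₀
    rcases Finset.mem_insert.mp hz with rfl | hz
    · exact hzc0
    · obtain ⟨j, _, rfl⟩ := Finset.mem_image.mp hz
      exact hzzzero j
  -- periodicity of h
  have hhper : ∀ u, h (u + 2*π) = h u := by
    intro u
    rw [hhdef]; simp only
    rw [hSper]
    congr 2
    have : (m:ℝ) * (u + 2*π) + α = ((m:ℝ)*u + α) + (m:ℕ) * (2*π) := by push_cast; ring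
    rw [this, Real.cos_add_nat_mul_two_pi]
  -- cos period by π shift
  have hcosπ : ∀ u : ℝ, Real.cos ((m:ℝ)*(u+π)+α) = Real.cos ((m:ℝ)*u+α) := by
    intro u
    have : (m:ℝ)*(u+π)+α = ((m:ℝ)*u + α) + (n:ℕ) * (2*π) := by
      rw [hmdef]; push_cast; ring
    rw [this, Real.cos_add_nat_mul_two_pi]
  -- W is a trig poly of degree ≤ 4n
  have hWeq : (fun u => h u * h (u+π))
      = (fun u => ((K*K) * (Real.cos ((m:ℝ)*u+α) * Real.cos ((m:ℝ)*u+α))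
          - K * (Real.cos ((m:ℝ)*u+α) * (S u + S (u+π)))) + S u * S (u+π)) := by
    funext u
    rw [hhdef]; simp only
    rw [hcosπ u]
    ring
  have hW : IsTP (4*n) (fun u => h u * h (u+π)) := by
    rw [hWeq]
    have tcos : IsTP m (fun u => Real.cos ((m:ℝ)*u+α)) := IsTP.cos_linear m α
    have hA : IsTP (4*n) (fun u => (K*K) * (Real.cos ((m:ℝ)*u+α) * Real.cos ((m:ℝ)*u+α))) := by
      have := (tcos.mul tcos).const_mul (K*K)
      have hmm : m + m = 4*n := by omega
      rwa [hmm] at this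
    have hB : IsTP (4*n) (fun u => K * (Real.cos ((m:ℝ)*u+α) * (S u + S (u+π)))) := by
      have := (tcos.mul hG₁).const_mul K
      have hmm : m + 2*n = 4*n := by omega
      rwa [hmm] at this
    exact (hA.sub hB).add hG₂
  -- nonvanishing of W at e 1
  have hπshift : ∀ j : ℕ, e (j + 2*n) = e j + π := by
    intro j
    rw [hedef]; simp only
    rw [hmdef]
    push_cast
    field_simp
    ring
  have hne1 : h (e 1) * h (e 1 + π) ≠ 0 := by
    have h1 := hsign_odd 1 odd_one
    have h2 : ε ≤ h (e 1 + π) := by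
      rw [← hπshift 1]
      exact hsign_odd (1 + 2*n) ⟨n, by ring⟩
    have hεpos := hε
    have : 0 < h (e 1) * h (e 1 + π) := mul_pos (by linarith) (by linarith)
    exact ne_of_gt this
  have hfinal := core_count (4*n) h hhdiff hhper hW (e 1) hne1 (e 0) Z hZsub hZzero
  omega

end
noncomputable section

/-- `cos(k · 2 arcsin(ω sin u))` is a trig poly of degree `2k` in `u`. -/
lemma isTP_cosk (ω : ℝ) (hω : |ω| ≤ 1) :
    ∀ k : ℕ, IsTP (2*k) (fun u => Real.cos ((k:ℝ) * (2 * Real.arcsin (ω * Real.sin u)))) := by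
  have hb : ∀ u : ℝ, -1 ≤ ω * Real.sin u ∧ ω * Real.sin u ≤ 1 := by
    intro u
    have h1 : |ω * Real.sin u| ≤ 1 := by
      rw [abs_mul]
      calc |ω| * |Real.sin u| ≤ 1 * 1 :=
            mul_le_mul hω (Real.abs_sin_le_one u) (abs_nonneg _) zero_le_one
        _ = 1 := by ring
    rw [abs_le] at h1; exact h1
  have hC1 : IsTP 2 (fun u => Real.cos (2 * Real.arcsin (ω * Real.sin u))) := by
    have heq : (fun u => Real.cos (2 * Real.arcsin (ω * Real.sin u)))
        = (fun u => (1 - ω^2) + ω^2 * Real.cos (((2:ℕ):ℝ) * u + 0)) := by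
      funext u
      rw [Real.cos_two_mul', Real.cos_sq']
      rw [Real.sin_arcsin (hb u).1 (hb u).2]
      have : Real.cos (((2:ℕ):ℝ) * u + 0) = 1 - 2 * Real.sin u ^ 2 := by
        push_cast
        rw [add_zero, Real.cos_two_mul', Real.cos_sq']
        ring
      rw [this]
      ring
    rw [heq]
    exact (IsTP.const 2 (1 - ω^2)).add ((IsTP.cos_linear 2 0).const_mul (ω^2))
  intro k
  induction k using Nat.strong_induction_on with
  | _ k IH =>
    match k with
    | 0 =>
      have heq : (fun u => Real.cos (((0:ℕ):ℝ) * (2 * Real.arcsin (ω * Real.sin u))))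
          = (fun _ : ℝ => (1:ℝ)) := by
        funext u; simp
      rw [heq]
      exact (IsTP.const 0 1).mono (by omega)
    | 1 =>
      have heq : (fun u => Real.cos (((1:ℕ):ℝ) * (2 * Real.arcsin (ω * Real.sin u))))
          = (fun u => Real.cos (2 * Real.arcsin (ω * Real.sin u))) := by
        funext u; norm_num
      rw [heq]
      exact hC1
    | (k+2) =>
      have h1 := IH (k+1) (by omega)
      have h2 := IH k (by omega)
      have heq : (fun u => Real.cos (((k+2:ℕ):ℝ) * (2 * Real.arcsin (ω * Real.sin u))))
          = (fun u => 2 * (Real.cos (2 * Real.arcsin (ω * Real.sin u))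
              * Real.cos (((k+1:ℕ):ℝ) * (2 * Real.arcsin (ω * Real.sin u))))
            - Real.cos (((k:ℕ):ℝ) * (2 * Real.arcsin (ω * Real.sin u)))) := by
        funext u
        set w : ℝ := 2 * Real.arcsin (ω * Real.sin u)
        have e1 : ((k+2:ℕ):ℝ) * w = (((k+1:ℕ):ℝ) * w) + w := by push_cast; ring
        have e2 : ((k:ℕ):ℝ) * w = (((k+1:ℕ):ℝ) * w) - w := by push_cast; ring
        rw [e1, e2, Real.cos_add, Real.cos_sub]
        ring
      rw [heq]
      have t1 := (hC1.mul h1).const_mul 2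
      have ht1 : 2 + 2*(k+1) = 2*(k+2) := by omega
      rw [ht1] at t1
      exact t1.sub (h2.mono (by omega))

/-- `sin(k·w) sin(l·w)` with `w = 2 arcsin(ω sin u)` is a trig poly of degree `2(k+l)`. -/
lemma isTP_sinksinl (ω : ℝ) (hω : |ω| ≤ 1) (k l : ℕ) :
    IsTP (2*(k+l)) (fun u => Real.sin ((k:ℝ) * (2 * Real.arcsin (ω * Real.sin u)))
      * Real.sin ((l:ℝ) * (2 * Real.arcsin (ω * Real.sin u)))) := by
  have key : ∀ p q : ℕ, q ≤ p → IsTP (2*(p+q))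
      (fun u => Real.sin ((p:ℝ) * (2 * Real.arcsin (ω * Real.sin u)))
        * Real.sin ((q:ℝ) * (2 * Real.arcsin (ω * Real.sin u)))) := by
    intro p q hqp
    have heq : (fun u => Real.sin ((p:ℝ) * (2 * Real.arcsin (ω * Real.sin u)))
        * Real.sin ((q:ℝ) * (2 * Real.arcsin (ω * Real.sin u))))
        = (fun u => (1/2) * Real.cos (((p-q:ℕ):ℝ) * (2 * Real.arcsin (ω * Real.sin u)))
          - (1/2) * Real.cos (((p+q:ℕ):ℝ) * (2 * Real.arcsin (ω * Real.sin u)))) := by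
      funext u
      set w : ℝ := 2 * Real.arcsin (ω * Real.sin u)
      have e1 : ((p-q:ℕ):ℝ) * w = (p:ℝ)*w - (q:ℝ)*w := by
        rw [Nat.cast_sub hqp]; ring
      have e2 : ((p+q:ℕ):ℝ) * w = (p:ℝ)*w + (q:ℝ)*w := by push_cast; ring
      rw [e1, e2, Real.cos_sub, Real.cos_add]
      ring
    rw [heq]
    have t1 := ((isTP_cosk ω hω (p-q)).mono (show 2*(p-q) ≤ 2*(p+q) by omega)).const_mul (1/2)
    have t2 := ((isTP_cosk ω hω (p+q)).mono (le_refl _)).const_mul (1/2)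
    exact t1.sub t2
  rcases le_total l k with hlk | hkl
  · exact key k l hlk
  · have := key l k hkl
    have heq : (fun u => Real.sin ((k:ℝ) * (2 * Real.arcsin (ω * Real.sin u)))
        * Real.sin ((l:ℝ) * (2 * Real.arcsin (ω * Real.sin u))))
        = (fun u => Real.sin ((l:ℝ) * (2 * Real.arcsin (ω * Real.sin u)))
          * Real.sin ((k:ℝ) * (2 * Real.arcsin (ω * Real.sin u)))) := by
      funext u; ring
    rw [heq]
    have hkl2 : 2*(l+k) = 2*(k+l) := by omega
    rwa [hkl2] at this

end
noncomputable section


set_option maxHeartbeats 1000000 in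
/-- Videnskii's inequality: for a trigonometric polynomial `T` of degree at most `n`
and `0 < β < π`, for every `θ ∈ (−β, β)`,
`|T'(θ)| ≤ n · cos(θ/2)/√(sin²(β/2) − sin²(θ/2)) · ‖T‖_{[−β,β]}`. -/
theorem videnskii_inequality (β : ℝ) (hβ : 0 < β) (hβπ : β < Real.pi)
    (n : ℕ) (a b : ℕ → ℝ) (T : ℝ → ℝ)
    (hT : ∀ t : ℝ, T t =
      a 0 + ∑ k ∈ Finset.Icc 1 n, (a k * Real.cos (k * t) + b k * Real.sin (k * t)))
    (θ : ℝ) (hθ : θ ∈ Set.Ioo (-β) β) :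
    |deriv T θ| ≤
      (n : ℝ) * (Real.cos (θ / 2) / Real.sqrt (Real.sin (β / 2) ^ 2 - Real.sin (θ / 2) ^ 2)) *
        ⨆ t : Set.Icc (-β) β, |T ↑t| := by
  have hπ := Real.pi_pos
  have hTfun : T = fun t => a 0 + ∑ k ∈ Finset.Icc 1 n,
      (a k * Real.cos (k * t) + b k * Real.sin (k * t)) := funext hT
  have hTcont : Continuous T := by
    rw [hTfun]; fun_prop
  set M : ℝ := ⨆ t : Set.Icc (-β) β, |T ↑t| with hM
  have hbdd : BddAbove (Set.range fun t : Set.Icc (-β) β => |T ↑t|) := by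
    have himg : (fun x => |T x|) '' (Set.Icc (-β) β)
        = Set.range (fun t : Set.Icc (-β) β => |T ↑t|) := Set.image_eq_range _ _
    rw [← himg]
    exact (isCompact_Icc.image (by fun_prop)).bddAbove
  have hMb : ∀ x ∈ Set.Icc (-β) β, |T x| ≤ M :=
    fun x hx => le_ciSup hbdd (⟨x, hx⟩ : Set.Icc (-β) β)
  rcases Nat.eq_zero_or_pos n with rfl | hn
  · have hconst : T = fun _ => a 0 := by
      rw [hTfun]; funext t; simp
    rw [hconst]
    simp
  -- main case n ≥ 1
  set ω : ℝ := Real.sin (β/2) with hωdef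
  set sθ : ℝ := Real.sin (θ/2) with hsθdef
  set cθ : ℝ := Real.cos (θ/2) with hcθdef
  have hθ1 := hθ.1
  have hθ2 := hθ.2
  have hω0 : 0 < ω := Real.sin_pos_of_pos_of_lt_pi (by linarith) (by linarith)
  have hω1 : ω < 1 := by
    have h1 : Real.sin (β/2) < Real.sin (π/2) :=
      Real.strictMonoOn_sin ⟨by linarith, by linarith⟩ ⟨by linarith, le_refl _⟩ (by linarith)
    rwa [Real.sin_pi_div_two] at h1
  have hωabs : |ω| ≤ 1 := by rw [abs_of_pos hω0]; linarith
  have hcθ0 : 0 < cθ := Real.cos_pos_of_mem_Ioo ⟨by linarith, by linarith⟩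
  have hsθω : |sθ| < ω := by
    have habs2 : |θ/2| < β/2 := by rw [abs_lt]; constructor <;> linarith
    have h1 : Real.sin |θ/2| < ω := by
      apply Real.strictMonoOn_sin ⟨by linarith [abs_nonneg (θ/2)], by linarith [habs2]⟩
        ⟨by linarith, by linarith⟩ habs2
    have h2 : Real.sin |θ/2| = |sθ| := by
      rcases le_or_gt 0 (θ/2) with hc | hc
      · rw [abs_of_nonneg hc, hsθdef,
          abs_of_nonneg (Real.sin_nonneg_of_nonneg_of_le_pi hc (by linarith))]
      · rw [abs_of_neg hc, Real.sin_neg, hsθdef,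
          abs_of_neg (Real.sin_neg_of_neg_of_neg_pi_lt hc (by linarith))]
    linarith [h2 ▸ h1]
  have hωs2 : sθ^2 < ω^2 := by
    have h1 : |sθ|^2 < ω^2 := by
      apply pow_lt_pow_left₀ hsθω (abs_nonneg _)
      norm_num
    rwa [sq_abs] at h1
  set R : ℝ := Real.sqrt (ω^2 - sθ^2) with hRdef
  have hR0 : 0 < R := Real.sqrt_pos.mpr (by linarith)
  -- u₀
  set u₀ : ℝ := Real.arcsin (sθ/ω) with hu₀def
  have hsratio : |sθ/ω| < 1 := by
    rw [abs_div, abs_of_pos hω0, div_lt_one hω0]; exact hsθω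
  have hsr1 : -1 ≤ sθ/ω := by have := abs_lt.mp hsratio; linarith [this.1]
  have hsr2 : sθ/ω ≤ 1 := by have := abs_lt.mp hsratio; linarith [this.2]
  have hsinu₀ : Real.sin u₀ = sθ/ω := Real.sin_arcsin hsr1 hsr2
  have hωsinu₀ : ω * Real.sin u₀ = sθ := by
    rw [hsinu₀]; field_simp
  -- basic bounds on ω * sin u
  have hb : ∀ u : ℝ, |ω * Real.sin u| < 1 := by
    intro u
    rw [abs_mul, abs_of_pos hω0]
    nlinarith [Real.abs_sin_le_one u, abs_nonneg (Real.sin u)]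
  have hbne1 : ∀ u : ℝ, ω * Real.sin u ≠ 1 := by
    intro u hc; have := hb u; rw [hc] at this; norm_num at this
  have hbnem1 : ∀ u : ℝ, ω * Real.sin u ≠ -1 := by
    intro u hc; have := hb u; rw [hc] at this; norm_num at this
  have hble : ∀ u : ℝ, -1 ≤ ω * Real.sin u ∧ ω * Real.sin u ≤ 1 := by
    intro u; have := abs_lt.mp (hb u); exact ⟨le_of_lt this.1, le_of_lt this.2⟩
  -- the substituted function
  set S : ℝ → ℝ := fun u => T (2 * Real.arcsin (ω * Real.sin u)) with hSdef
  have hwmem : ∀ u : ℝ, 2 * Real.arcsin (ω * Real.sin u) ∈ Set.Icc (-β) β := by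
    intro u
    have harcβ : Real.arcsin ω = β/2 := by
      rw [hωdef]; exact Real.arcsin_sin (by linarith) (by linarith)
    have h1 : Real.arcsin (ω * Real.sin u) ≤ β/2 := by
      rw [← harcβ]
      apply Real.monotone_arcsin
      nlinarith [Real.sin_le_one u, hω0]
    have h2 : -(β/2) ≤ Real.arcsin (ω * Real.sin u) := by
      rw [← harcβ, ← Real.arcsin_neg]
      apply Real.monotone_arcsin
      nlinarith [Real.neg_one_le_sin u, hω0]
    constructor <;> [linarith; linarith]
  have hSb : ∀ u : ℝ, |S u| ≤ M := fun u => hMb _ (hwmem u)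
  have hSper : ∀ u : ℝ, S (u + 2*π) = S u := by
    intro u
    rw [hSdef]; simp only
    rw [Real.sin_add_two_pi]
  -- shift by π
  have hwshift : ∀ u : ℝ, 2 * Real.arcsin (ω * Real.sin (u + π))
      = -(2 * Real.arcsin (ω * Real.sin u)) := by
    intro u
    rw [Real.sin_add_pi, mul_neg, Real.arcsin_neg]; ring
  have hSval : ∀ u : ℝ, S u = a 0 + ∑ k ∈ Finset.Icc 1 n,
      (a k * Real.cos ((k:ℝ) * (2 * Real.arcsin (ω * Real.sin u)))
        + b k * Real.sin ((k:ℝ) * (2 * Real.arcsin (ω * Real.sin u)))) := by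
    intro u; exact hT _
  have hSshift : ∀ u : ℝ, S (u + π) = a 0 + ∑ k ∈ Finset.Icc 1 n,
      (a k * Real.cos ((k:ℝ) * (2 * Real.arcsin (ω * Real.sin u)))
        - b k * Real.sin ((k:ℝ) * (2 * Real.arcsin (ω * Real.sin u)))) := by
    intro u
    rw [hSdef]; simp only
    rw [hwshift u, hT]
    congr 1
    apply Finset.sum_congr rfl
    intro k _
    rw [mul_neg, Real.cos_neg, Real.sin_neg]
    ring
  -- G₁
  have hG₁ : IsTP (2*n) (fun u => S u + S (u + π)) := by
    have heq : (fun u => S u + S (u + π)) = (fun u => 2*(a 0) + ∑ k ∈ Finset.Icc 1 n,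
        (2*(a k)) * Real.cos ((k:ℝ) * (2 * Real.arcsin (ω * Real.sin u)))) := by
      funext u
      rw [hSval u, hSshift u]
      have hsum : (∑ k ∈ Finset.Icc 1 n,
          (a k * Real.cos ((k:ℝ) * (2 * Real.arcsin (ω * Real.sin u)))
            + b k * Real.sin ((k:ℝ) * (2 * Real.arcsin (ω * Real.sin u)))))
          + (∑ k ∈ Finset.Icc 1 n,
          (a k * Real.cos ((k:ℝ) * (2 * Real.arcsin (ω * Real.sin u)))
            - b k * Real.sin ((k:ℝ) * (2 * Real.arcsin (ω * Real.sin u)))))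
          = ∑ k ∈ Finset.Icc 1 n,
            (2*(a k)) * Real.cos ((k:ℝ) * (2 * Real.arcsin (ω * Real.sin u))) := by
        rw [← Finset.sum_add_distrib]
        apply Finset.sum_congr rfl
        intro k _; ring
      linarith [hsum]
    rw [heq]
    refine (IsTP.const (2*n) (2*(a 0))).add (IsTP.sum _ _ fun k hk => ?_)
    have hk2n : 2*k ≤ 2*n := by rw [Finset.mem_Icc] at hk; omega
    exact ((isTP_cosk ω hωabs k).mono hk2n).const_mul (2*(a k))
  -- G₂
  have hE : IsTP (2*n) (fun u => a 0 + ∑ k ∈ Finset.Icc 1 n,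
      (a k) * Real.cos ((k:ℝ) * (2 * Real.arcsin (ω * Real.sin u)))) := by
    refine (IsTP.const (2*n) (a 0)).add (IsTP.sum _ _ fun k hk => ?_)
    have hk2n : 2*k ≤ 2*n := by rw [Finset.mem_Icc] at hk; omega
    exact ((isTP_cosk ω hωabs k).mono hk2n).const_mul (a k)
  have hG₂ : IsTP (4*n) (fun u => S u * S (u + π)) := by
    have heq : (fun u => S u * S (u + π)) = (fun u =>
        ((a 0 + ∑ k ∈ Finset.Icc 1 n,
          (a k) * Real.cos ((k:ℝ) * (2 * Real.arcsin (ω * Real.sin u))))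
        * (a 0 + ∑ k ∈ Finset.Icc 1 n,
          (a k) * Real.cos ((k:ℝ) * (2 * Real.arcsin (ω * Real.sin u)))))
        - ∑ k ∈ Finset.Icc 1 n, ∑ l ∈ Finset.Icc 1 n, (b k * b l) *
          (Real.sin ((k:ℝ) * (2 * Real.arcsin (ω * Real.sin u)))
            * Real.sin ((l:ℝ) * (2 * Real.arcsin (ω * Real.sin u))))) := by
      funext u
      rw [hSval u, hSshift u]
      have h1 := Finset.sum_add_distrib (s := Finset.Icc 1 n)
        (f := fun k => a k * Real.cos ((k:ℝ) * (2 * Real.arcsin (ω * Real.sin u))))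
        (g := fun k => b k * Real.sin ((k:ℝ) * (2 * Real.arcsin (ω * Real.sin u))))
      have h2 := Finset.sum_sub_distrib (s := Finset.Icc 1 n)
        (f := fun k => a k * Real.cos ((k:ℝ) * (2 * Real.arcsin (ω * Real.sin u))))
        (g := fun k => b k * Real.sin ((k:ℝ) * (2 * Real.arcsin (ω * Real.sin u))))
      rw [h1, h2]
      have hOsq : (∑ k ∈ Finset.Icc 1 n,
          b k * Real.sin ((k:ℝ) * (2 * Real.arcsin (ω * Real.sin u))))
          * (∑ l ∈ Finset.Icc 1 n,
          b l * Real.sin ((l:ℝ) * (2 * Real.arcsin (ω * Real.sin u))))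
          = ∑ k ∈ Finset.Icc 1 n, ∑ l ∈ Finset.Icc 1 n, (b k * b l) *
          (Real.sin ((k:ℝ) * (2 * Real.arcsin (ω * Real.sin u)))
            * Real.sin ((l:ℝ) * (2 * Real.arcsin (ω * Real.sin u)))) := by
        rw [Finset.sum_mul_sum]
        refine Finset.sum_congr rfl fun k _ => Finset.sum_congr rfl fun l _ => by ring
      rw [← hOsq]
      ring
    rw [heq]
    have hEE := hE.mul hE
    have h4n : 2*n + 2*n = 4*n := by omega
    rw [h4n] at hEE
    refine hEE.sub (IsTP.sum _ _ fun k hk => IsTP.sum _ _ fun l hl => ?_)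
    rw [Finset.mem_Icc] at hk hl
    have hkl : 2*(k+l) ≤ 4*n := by omega
    exact ((isTP_sinksinl ω hωabs k l).mono hkl).const_mul (b k * b l)
  -- differentiability
  have hTdiff : Differentiable ℝ T := by
    rw [hTfun]
    apply Differentiable.const_add
    apply Differentiable.fun_sum
    intro k _
    apply Differentiable.add
    · exact (Real.differentiable_cos.comp ((differentiable_id).const_mul _)).const_mul _
    · exact (Real.differentiable_sin.comp ((differentiable_id).const_mul _)).const_mul _
  have harc : ∀ u : ℝ, HasDerivAt (fun v => 2 * Real.arcsin (ω * Real.sin v))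
      (2 * ((1 / Real.sqrt (1 - (ω * Real.sin u)^2)) * (ω * Real.cos u))) u := by
    intro u
    have h1 : HasDerivAt (fun v => ω * Real.sin v) (ω * Real.cos u) u :=
      (Real.hasDerivAt_sin u).const_mul ω
    have h2 := (Real.hasDerivAt_arcsin (hbnem1 u) (hbne1 u)).comp u h1
    exact h2.const_mul 2
  have hSd : ∀ u : ℝ, HasDerivAt S
      (deriv T (2 * Real.arcsin (ω * Real.sin u))
        * (2 * ((1 / Real.sqrt (1 - (ω * Real.sin u)^2)) * (ω * Real.cos u)))) u := by
    intro u
    exact ((hTdiff _).hasDerivAt).comp u (harc u)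
  have hSdiff : Differentiable ℝ S := fun u => (hSd u).differentiableAt
  -- the inner point at u₀ is θ
  have hiu₀ : 2 * Real.arcsin (ω * Real.sin u₀) = θ := by
    rw [hωsinu₀, hsθdef, Real.arcsin_sin (by linarith) (by linarith)]
    ring
  -- simplify the derivative factor at u₀
  have hcosarc : Real.sqrt (1 - (ω * Real.sin u₀)^2) = cθ := by
    rw [hωsinu₀]
    have h1 : 1 - sθ^2 = cθ^2 := by
      rw [hsθdef, hcθdef, Real.cos_sq']
    rw [h1, Real.sqrt_sq (le_of_lt hcθ0)]
  have hωcosu₀ : ω * Real.cos u₀ = R := by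
    rw [hu₀def, Real.cos_arcsin]
    rw [show (1 - (sθ/ω)^2) = (ω^2 - sθ^2)/ω^2 from by field_simp,
      Real.sqrt_div (by nlinarith : (0:ℝ) ≤ ω^2 - sθ^2),
      Real.sqrt_sq (le_of_lt hω0), hRdef]
    field_simp
  set dT : ℝ := deriv T θ with hdT
  set c : ℝ := 2 * R / cθ with hcdef
  have hc0 : 0 < c := by
    rw [hcdef]; positivity
  have hD : HasDerivAt S (dT * c) u₀ := by
    have := hSd u₀
    rwa [hiu₀, hcosarc, hωcosu₀, show 2 * (1/cθ * R) = c from by rw [hcdef]; ring] at this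
  -- apply the comparison lemma for S and -S
  have hpos := comparison_lemma n hn M S hSdiff hSb hSper hG₁ hG₂ u₀ (dT * c) hD
  have hG₁n : IsTP (2*n) (fun u => (-(S u)) + (-(S (u + π)))) := by
    have := hG₁.neg
    have heq : (fun u => -(S u + S (u+π))) = (fun u => (-(S u)) + (-(S (u + π)))) := by
      funext u; ring
    rwa [heq] at this
  have hG₂n : IsTP (4*n) (fun u => (-(S u)) * (-(S (u + π)))) := by
    have heq : (fun u => S u * S (u+π)) = (fun u => (-(S u)) * (-(S (u + π)))) := by
      funext u; ring
    rwa [heq] at hG₂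
  have hneg := comparison_lemma n hn M (fun u => -(S u)) hSdiff.neg
    (fun u => by rw [abs_neg]; exact hSb u)
    (fun u => by show -(S (u + 2*π)) = -(S u); rw [hSper u])
    hG₁n hG₂n u₀ (-(dT * c)) hD.neg
  -- combine
  have habs : |dT * c| ≤ 2*n*M := abs_le.mpr ⟨by linarith, hpos⟩
  rw [abs_mul, abs_of_pos hc0] at habs
  have hfinal : |dT| ≤ 2*(n:ℝ)*M / c := (le_div_iff₀ hc0).mpr habs
  have hrw : 2*(n:ℝ)*M / c = (n:ℝ) * (cθ / R) * M := by
    rw [hcdef]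
    field_simp
  rw [hrw] at hfinal
  exact hfinal

end
end

section
/- Let P be a real algebraic polynomial of degree at most n ≥ 1. Then for every x ∈ [−1,1], (1−x²)·P'(x)² + n²·P(x)² ≤ n² · (sup_{t∈[−1,1]} |P(t)|)² (the Szegő–Schaake–van der Corput inequality). -/
open Real Set Polynomial

section SzegoAuxiliary
open Polynomial Complex

private lemma re_half {z r : ℂ} (hz : ‖z‖ = 1) (hr : ‖r‖ < 1) :
    (1:ℝ)/2 ≤ (z / (z - r)).re := by
  have hzr : z ≠ r := by
    intro h; rw [h] at hz; exact absurd hz (by linarith)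
  have hd : z - r ≠ 0 := sub_ne_zero.mpr hzr
  have hD : 0 < Complex.normSq (z - r) := Complex.normSq_pos.mpr hd
  have h1 : Complex.normSq z = 1 := by
    rw [← Complex.sq_norm, hz]; norm_num
  have h2 : Complex.normSq r < 1 := by
    rw [← Complex.sq_norm]; nlinarith [norm_nonneg r]
  rw [Complex.div_re, ← add_div, le_div_iff₀ hD]
  simp only [Complex.normSq_apply, Complex.sub_re, Complex.sub_im] at *
  nlinarith [sq_nonneg (z.re - r.re), sq_nonneg (z.im - r.im)]

private lemma aux_prod (z : ℂ) (s : Multiset ℂ) (hz : ∀ r ∈ s, z ≠ r) :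
    z * (Polynomial.derivative ((s.map fun r => X - C r).prod)).eval z
      = ((s.map fun r => X - C r).prod).eval z * (s.map fun r => z / (z - r)).sum := by
  induction s using Multiset.induction with
  | empty => simp
  | cons a t ih =>
    have hza : z - a ≠ 0 := sub_ne_zero.mpr (hz a (Multiset.mem_cons_self a t))
    have ht : ∀ r ∈ t, z ≠ r := fun r hr => hz r (Multiset.mem_cons_of_mem hr)
    simp only [Multiset.map_cons, Multiset.prod_cons, Multiset.sum_cons,
      derivative_mul, derivative_sub, derivative_X, derivative_C, sub_zero, one_mul,
      eval_add, eval_mul, eval_sub, eval_X, eval_C]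
    rw [mul_add, mul_add]
    rw [show z * ((z - a) * (Polynomial.derivative ((t.map fun r => X - C r).prod)).eval z)
        = (z - a) * (z * (Polynomial.derivative ((t.map fun r => X - C r).prod)).eval z) by ring,
      ih ht]
    field_simp

private lemma sublemmaB (F : ℂ[X]) (hF : F ≠ 0)
    (hroots : ∀ r ∈ F.roots, ‖r‖ < 1) {z : ℂ} (hz : ‖z‖ = 1) :
    ‖(F.natDegree : ℂ) * F.eval z - z * (Polynomial.derivative F).eval z‖
      ≤ ‖z * (Polynomial.derivative F).eval z‖ := by
  have hcard : F.roots.card = F.natDegree :=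
    (Polynomial.splits_iff_card_roots).mp (IsAlgClosed.splits F)
  have hzr : ∀ r ∈ F.roots, z ≠ r := by
    intro r hr h
    rw [h] at hz
    exact absurd hz (ne_of_lt (hroots r hr))
  have hfac := Polynomial.C_leadingCoeff_mul_prod_multiset_X_sub_C (p := F) hcard
  set G := (F.roots.map fun r => X - C r).prod with hG
  set A := (F.roots.map fun r => z / (z - r)).sum with hA
  -- eval G z ≠ 0
  have hGz : G.eval z ≠ 0 := by
    rw [hG, Polynomial.eval_multiset_prod]
    refine Multiset.prod_ne_zero ?_
    simp only [Multiset.mem_map]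
    rintro ⟨q, ⟨r, hr, rfl⟩, h0⟩
    simp only [eval_sub, eval_X, eval_C] at h0
    exact hzr r hr (sub_eq_zero.mp h0)
  have hFz : F.eval z ≠ 0 := by
    rw [← hfac]
    simp only [eval_mul, eval_C]
    exact mul_ne_zero (by simpa [leadingCoeff_eq_zero] using hF) hGz
  -- key identity z F' = F * A
  have hkey : z * (Polynomial.derivative F).eval z = F.eval z * A := by
    conv_lhs => rw [← hfac]
    conv_rhs => rw [← hfac]
    rw [derivative_mul, derivative_C, zero_mul, zero_add]
    simp only [eval_mul, eval_C]
    rw [mul_left_comm, aux_prod z F.roots hzr, hA]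
    ring
  -- Re A ≥ d/2
  have hre : (F.natDegree : ℝ) / 2 ≤ A.re := by
    have : A.re = ((F.roots.map fun r => z / (z - r)).map Complex.re).sum := by
      rw [hA]
      exact map_multiset_sum Complex.reAddGroupHom _
    rw [this]
    have hcard2 : ((F.roots.map fun r => z / (z - r)).map Complex.re).card = F.natDegree := by
      simp [hcard]
    have := Multiset.card_nsmul_le_sum
      (s := (F.roots.map fun r => z / (z - r)).map Complex.re) (a := (1:ℝ)/2) ?_
    · rw [hcard2] at this
      calc (F.natDegree : ℝ) / 2 = F.natDegree • ((1:ℝ)/2) := by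
            simp [nsmul_eq_mul]; ring
        _ ≤ _ := this
    · intro x hx
      simp only [Multiset.mem_map] at hx
      obtain ⟨w, ⟨r, hr, rfl⟩, rfl⟩ := hx
      exact re_half hz (hroots r hr)
  -- |d - A| ≤ |A|
  have habs : ‖((F.natDegree : ℂ) - A)‖ ≤ ‖A‖ := by
    have h1 : Complex.normSq ((F.natDegree : ℂ) - A) ≤ Complex.normSq A := by
      simp only [Complex.normSq_apply, Complex.sub_re, Complex.sub_im, Complex.natCast_re,
        Complex.natCast_im]
      have hd0 : (0:ℝ) ≤ (F.natDegree : ℝ) := Nat.cast_nonneg _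
      nlinarith
    rw [Complex.norm_def, Complex.norm_def]
    exact Real.sqrt_le_sqrt h1
  calc ‖(F.natDegree : ℂ) * F.eval z - z * (Polynomial.derivative F).eval z‖
      = ‖F.eval z * ((F.natDegree : ℂ) - A)‖ := by rw [hkey]; ring_nf
    _ ≤ ‖F.eval z * A‖ := by
        rw [norm_mul, norm_mul]
        exact mul_le_mul_of_nonneg_left habs
          (norm_nonneg _)
    _ = ‖z * (Polynomial.derivative F).eval z‖ := by rw [hkey]

private lemma maxmod (R : ℂ[X]) (C : ℝ) (h : ∀ w : ℂ, ‖w‖ = 1 → ‖R.eval w‖ ≤ C)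
    {z : ℂ} (hz : ‖z‖ ≤ 1) : ‖R.eval z‖ ≤ C := by
  have hb : Bornology.IsBounded (Metric.ball (0:ℂ) 1) := Metric.isBounded_ball
  have hd : DiffContOnCl ℂ (fun w => R.eval w) (Metric.ball (0:ℂ) 1) :=
    (R.differentiable).diffContOnCl
  refine Complex.norm_le_of_forall_mem_frontier_norm_le hb hd ?_ ?_
  · intro w hw
    rw [frontier_ball (0:ℂ) one_ne_zero, Metric.mem_sphere, dist_zero_right] at hw
    exact h w hw
  · rw [closure_ball (0:ℂ) one_ne_zero, Metric.mem_closedBall, dist_zero_right]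
    exact hz

private lemma reflect_eval_aux (R : ℂ[X]) (m : ℕ) (hdeg : R.natDegree ≤ m)
    {z : ℂ} (hz0 : z ≠ 0) : (reflect m R).eval z⁻¹ * z ^ m = R.eval z := by
  have : Invertible z := invertibleOfNonzero hz0
  have hrefl := Polynomial.eval₂_reflect_mul_pow (RingHom.id ℂ) z m R hdeg
  rw [invOf_eq_inv] at hrefl
  simpa [Polynomial.eval₂_eq_eval_map, Polynomial.map_id] using hrefl

private lemma growth (R : ℂ[X]) (m : ℕ) (hdeg : R.natDegree ≤ m) (C : ℝ)
    (h : ∀ w : ℂ, ‖w‖ = 1 → ‖R.eval w‖ ≤ C)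
    {z : ℂ} (hz : 1 ≤ ‖z‖) : ‖R.eval z‖ ≤ C * ‖z‖ ^ m := by
  have hz0 : z ≠ 0 := by
    intro h0; rw [h0] at hz; simp at hz; linarith
  have hrev : ∀ w : ℂ, ‖w‖ = 1 → ‖(reflect m R).eval w‖ ≤ C := by
    intro w hw
    have hw0 : w ≠ 0 := by
      intro h0; rw [h0] at hw; simp at hw
    have hwinv0 : w⁻¹ ≠ 0 := inv_ne_zero hw0
    have h2 := reflect_eval_aux R m hdeg hwinv0
    rw [inv_inv] at h2
    have hwinv : ‖w⁻¹‖ = 1 := by rw [norm_inv, hw]; norm_num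
    have h3 := h w⁻¹ hwinv
    rw [← h2, norm_mul, norm_pow] at h3
    simp only [hwinv, one_pow, mul_one] at h3
    simpa using h3
  have h4 := reflect_eval_aux R m hdeg hz0
  have hzinv : ‖z⁻¹‖ ≤ 1 := by
    rw [norm_inv]
    exact inv_le_one_of_one_le₀ hz
  have h5 := maxmod (reflect m R) C hrev hzinv
  rw [← h4, norm_mul, norm_pow]
  exact mul_le_mul_of_nonneg_right h5 (pow_nonneg (norm_nonneg z) m)

private lemma malik (R : ℂ[X]) (m : ℕ) (hm : 1 ≤ m) (hdeg : R.natDegree ≤ m) (M : ℝ)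
    (hM : 0 < M) (hR : ∀ w : ℂ, ‖w‖ = 1 → ‖R.eval w‖ ≤ M)
    (hcoeff : ‖R.coeff m‖ ≤ M) {z : ℂ} (hz : ‖z‖ = 1) :
    ‖(Polynomial.derivative R).eval z‖ + ‖(m:ℂ) * R.eval z - z * (Polynomial.derivative R).eval z‖
      ≤ m * M := by
  set r : ℝ := ‖(Polynomial.derivative R).eval z‖ with hr
  have hr0 : 0 ≤ r := norm_nonneg _
  set u : ℂ := if (Polynomial.derivative R).eval z = 0 then 1
    else (Polynomial.derivative R).eval z / (r:ℂ) with hu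
  have hu1 : ‖u‖ = 1 := by
    rw [hu]
    split_ifs with h
    · simp
    · have hrne : (r:ℂ) ≠ 0 := by
        simp only [ne_eq, Complex.ofReal_eq_zero]
        simpa [hr, norm_eq_zero] using h
      have habs0 : ‖((Polynomial.derivative R).eval z)‖ ≠ 0 := by
        simpa using h
      rw [norm_div, Complex.norm_real, Real.norm_eq_abs, hr,
        _root_.abs_of_nonneg (norm_nonneg _), div_self habs0]
  have hru : (Polynomial.derivative R).eval z = (r:ℂ) * u := by
    rw [hu]
    split_ifs with h
    · simp [h, hr]
    · have hrne : (r:ℂ) ≠ 0 := by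
        simp only [ne_eq, Complex.ofReal_eq_zero]
        simpa [hr, norm_eq_zero] using h
      field_simp
  have hz0 : z ≠ 0 := by
    intro h0; rw [h0] at hz; simp at hz
  have hzm : z ^ (m-1) ≠ 0 := pow_ne_zero _ hz0
  -- key estimate for every ε > 0
  have key : ∀ ε : ℝ, 0 < ε →
      ‖z * (Polynomial.derivative R).eval z - (m:ℂ) * R.eval z‖ ≤ |(1+ε) * m * M - r| := by
    intro ε hε
    set α : ℂ := (1+ε) * u * (z ^ (m-1))⁻¹ with hα
    have hαabs : ‖α‖ = 1 + ε := by
      have hcast : (1:ℂ) + ε = ((1+ε:ℝ):ℂ) := by push_cast; ring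
      rw [hα, hcast, norm_mul, norm_mul, norm_inv, norm_pow, hz, hu1, Complex.norm_real, Real.norm_eq_abs,
        _root_.abs_of_nonneg (by linarith)]
      simp
    set F : ℂ[X] := Polynomial.C (α * M) * X ^ m - R with hF
    have hcm : F.coeff m = α * M - R.coeff m := by
      rw [hF, Polynomial.coeff_sub, Polynomial.coeff_C_mul, Polynomial.coeff_X_pow]
      simp
    have hcmne : F.coeff m ≠ 0 := by
      rw [hcm]
      intro h0
      have : ‖α * (M:ℂ)‖ = ‖R.coeff m‖ := by rw [sub_eq_zero.mp h0]
      rw [norm_mul, hαabs, Complex.norm_real, Real.norm_eq_abs, abs_of_pos hM] at this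
      nlinarith
    have hFdeg : F.natDegree = m := by
      refine le_antisymm ?_ (Polynomial.le_natDegree_of_ne_zero hcmne)
      refine le_trans (Polynomial.natDegree_sub_le _ _) ?_
      simp only [max_le_iff]
      constructor
      · exact le_trans (Polynomial.natDegree_C_mul_le _ _) (by simp)
      · exact hdeg
    have hF0 : F ≠ 0 := fun h0 => hcmne (by simp [h0])
    have hFroots : ∀ ρ ∈ F.roots, ‖ρ‖ < 1 := by
      intro ρ hρ
      by_contra hge
      push_neg at hge
      have hroot : F.eval ρ = 0 := (Polynomial.mem_roots hF0).mp hρ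
      rw [hF] at hroot
      simp only [Polynomial.eval_sub, Polynomial.eval_mul, Polynomial.eval_C,
        Polynomial.eval_pow, Polynomial.eval_X] at hroot
      have heq : α * M * ρ ^ m = R.eval ρ := by linear_combination hroot
      have h1 : ‖R.eval ρ‖ ≤ M * ‖ρ‖ ^ m := growth R m hdeg M hR hge
      have h2 : ‖α * (M:ℂ) * ρ ^ m‖ = (1+ε) * M * ‖ρ‖ ^ m := by
        rw [norm_mul, norm_mul, norm_pow, hαabs, Complex.norm_real, Real.norm_eq_abs,
          abs_of_pos hM]
      rw [heq] at h2
      have h3 : 0 < ‖ρ‖ ^ m := by positivity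
      nlinarith [mul_pos (mul_pos hε hM) h3]
    have hB := sublemmaB F hF0 hFroots hz
    rw [hFdeg] at hB
    -- identities
    have hFd : Polynomial.derivative F
        = Polynomial.C (α * M * m) * X ^ (m-1) - Polynomial.derivative R := by
      rw [hF, Polynomial.derivative_sub, Polynomial.derivative_C_mul_X_pow]
    have hFev : F.eval z = α * M * z ^ m - R.eval z := by
      simp [hF]
    have hFdev : (Polynomial.derivative F).eval z
        = α * M * m * z ^ (m-1) - (Polynomial.derivative R).eval z := by
      simp [hFd]
    have hzm1 : z ^ (m - 1) * z = z ^ m := by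
      rw [← pow_succ, Nat.sub_add_cancel hm]
    have hlhs : (m:ℂ) * F.eval z - z * (Polynomial.derivative F).eval z
        = z * (Polynomial.derivative R).eval z - (m:ℂ) * R.eval z := by
      rw [hFev, hFdev]; ring_nf
      rw [← hzm1]; ring
    have hrhs : ‖z * (Polynomial.derivative F).eval z‖ = |(1+ε) * m * M - r| := by
      rw [norm_mul, hz, one_mul, hFdev, hru, hα]
      have : (1+ε:ℂ) * u * (z ^ (m-1))⁻¹ * M * m * z ^ (m-1) - (r:ℂ) * u
          = (((1+ε) * m * M - r : ℝ) : ℂ) * u := by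
        push_cast
        field_simp
      rw [this, norm_mul, hu1, mul_one, Complex.norm_real, Real.norm_eq_abs]
    rw [hlhs, hrhs] at hB
    exact hB
  -- Step 1 : r ≤ m * M
  have hmM : 0 < (m:ℝ) * M := by
    have : (0:ℝ) < m := by exact_mod_cast hm
    positivity
  have hstep1 : r ≤ m * M := by
    by_contra hgt
    push_neg at hgt
    set ε := (r / (m * M) - 1) / 2 with hε
    have hε0 : 0 < ε := by
      rw [hε]
      have : 1 < r / (m * M) := (one_lt_div hmM).mpr hgt
      linarith
    have h1 := key ε hε0
    have h2 : (1+ε) * m * M = (m * M + r) / 2 := by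
      rw [hε]; field_simp; ring
    rw [h2] at h1
    have h3 : |(m * M + r) / 2 - r| = (r - m * M)/2 := by
      rw [abs_of_nonpos (by linarith)]; ring
    rw [h3] at h1
    have h4 : r - (m:ℝ) * M ≤ ‖z * (Polynomial.derivative R).eval z - (m:ℂ) * R.eval z‖ := by
      have t1 : ‖z * (Polynomial.derivative R).eval z‖ = r := by
        rw [norm_mul, hz, one_mul]
      have t2 : ‖(m:ℂ) * R.eval z‖ ≤ m * M := by
        rw [norm_mul]
        simp only [Complex.norm_natCast]
        exact mul_le_mul_of_nonneg_left (hR z hz) (Nat.cast_nonneg _)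
      calc r - (m:ℝ) * M ≤ ‖z * (Polynomial.derivative R).eval z‖ - ‖(m:ℂ) * R.eval z‖ := by
            rw [t1]; linarith
        _ ≤ _ := norm_sub_norm_le _ _
    linarith
  -- Step 2 : conclude
  have hstep2 : ∀ ε : ℝ, 0 < ε →
      r + ‖(m:ℂ) * R.eval z - z * (Polynomial.derivative R).eval z‖ ≤ m * M + ε * (m * M) := by
    intro ε hε
    have h1 := key ε hε
    have h2 : |(1+ε) * m * M - r| = (1+ε) * m * M - r := by
      rw [_root_.abs_of_nonneg]
      nlinarith
    rw [h2, norm_sub_rev] at h1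
    linarith
  have : r + ‖(m:ℂ) * R.eval z - z * (Polynomial.derivative R).eval z‖ ≤ m * M := by
    refine le_of_forall_pos_le_add ?_
    intro ε hε
    have hε0 : 0 < ε / (m * M) := div_pos hε hmM
    have h6 := hstep2 _ hε0
    have h7 : ε / (m * M) * (m * M) = ε := by field_simp
    rw [h7] at h6
    linarith
  linarith

private noncomputable def Sdef (n : ℕ) (P : Polynomial ℝ) : ℂ[X] :=
  ∑ k ∈ Finset.range (n+1),
    Polynomial.C ((P.coeff k : ℂ) / 2^k) * X ^ (n-k) * (X^2 + 1)^k

private lemma X2add1_monic : (X^2 + 1 : ℂ[X]).Monic := by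
  have : (X^2 + 1 : ℂ[X]) = X^2 + Polynomial.C 1 := by simp
  rw [this]
  exact Polynomial.monic_X_pow_add_C 1 (by norm_num)

private lemma Sdef_term_natDegree (n : ℕ) (P : Polynomial ℝ) (k : ℕ) (hk : k ≤ n) :
    (Polynomial.C ((P.coeff k : ℂ) / 2^k) * X ^ (n-k) * (X^2 + 1)^k).natDegree ≤ n + k := by
  refine le_trans (Polynomial.natDegree_mul_le) ?_
  have h1 : (Polynomial.C ((P.coeff k : ℂ) / 2^k) * X ^ (n-k)).natDegree ≤ n - k :=
    le_trans (Polynomial.natDegree_C_mul_le _ _) (by simp)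
  have h2 : ((X^2 + 1 : ℂ[X])^k).natDegree ≤ 2 * k := by
    refine le_trans (Polynomial.natDegree_pow_le) ?_
    have : (X^2 + 1 : ℂ[X]).natDegree ≤ 2 := by
      refine le_trans (Polynomial.natDegree_add_le _ _) ?_
      simp
    nlinarith
  omega

private lemma Sdef_natDegree (n : ℕ) (P : Polynomial ℝ) : (Sdef n P).natDegree ≤ 2*n := by
  refine le_trans (Polynomial.natDegree_sum_le_of_forall_le _ _ ?_) le_rfl
  intro k hk
  rw [Finset.mem_range] at hk
  have hk' : k ≤ n := by omega
  exact le_trans (Sdef_term_natDegree n P k hk') (by omega)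

private lemma Sdef_coeff (n : ℕ) (P : Polynomial ℝ) :
    (Sdef n P).coeff (2*n) = (P.coeff n : ℂ) / 2^n := by
  rw [Sdef, Finset.sum_range_succ, Polynomial.coeff_add, Polynomial.finset_sum_coeff]
  rw [Finset.sum_eq_zero, zero_add]
  · have hmonic : ((X^2 + 1 : ℂ[X])^n).Monic := X2add1_monic.pow n
    have hdeg : ((X^2 + 1 : ℂ[X])^n).natDegree = 2*n := by
      have h2 : (X^2 + 1 : ℂ[X]).natDegree = 2 := by
        have := Polynomial.natDegree_X_pow_add_C (R := ℂ) (n := 2) (r := 1)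
        simpa using this
      rw [Polynomial.natDegree_pow, h2]
      ring
    have hlead : ((X^2+1 : ℂ[X])^n).coeff (2*n) = 1 := by
      rw [← hdeg]
      exact hmonic
    simp only [Nat.sub_self, pow_zero, mul_one]
    rw [Polynomial.coeff_C_mul, hlead, mul_one]
  · intro k hk
    rw [Finset.mem_range] at hk
    refine Polynomial.coeff_eq_zero_of_natDegree_lt ?_
    exact lt_of_le_of_lt (Sdef_term_natDegree n P k (by omega)) (by omega)

private lemma Sdef_eval_zero (n : ℕ) (hn : 1 ≤ n) (P : Polynomial ℝ) :
    (Sdef n P).eval 0 = (P.coeff n : ℂ) / 2^n := by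
  rw [Sdef, Finset.sum_range_succ, Polynomial.eval_add, Polynomial.eval_finset_sum]
  rw [Finset.sum_eq_zero, zero_add]
  · simp
  · intro k hk
    rw [Finset.mem_range] at hk
    simp [zero_pow (by omega : n - k ≠ 0)]

private lemma Sdef_eval (n : ℕ) (P : Polynomial ℝ) (hPn : P.natDegree ≤ n)
    {z : ℂ} (hz0 : z ≠ 0) :
    (Sdef n P).eval z
      = z^n * (P.map (Complex.ofRealHom)).eval ((z + z⁻¹)/2) := by
  have hQdeg : (P.map (Complex.ofRealHom)).natDegree < n + 1 :=
    lt_of_le_of_lt (le_trans Polynomial.natDegree_map_le hPn) (by omega)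
  rw [Polynomial.eval_eq_sum_range' hQdeg]
  rw [Sdef, Polynomial.eval_finset_sum, Finset.mul_sum]
  refine Finset.sum_congr rfl ?_
  intro k hk
  rw [Finset.mem_range] at hk
  have hk' : k ≤ n := by omega
  simp only [Polynomial.eval_mul, Polynomial.eval_pow, Polynomial.eval_C, Polynomial.eval_X,
    Polynomial.eval_add, Polynomial.eval_one, Polynomial.coeff_map, Complex.ofRealHom_eq_coe]
  have hznk : z ^ n = z ^ (n - k) * z ^ k := by
    rw [← pow_add, Nat.sub_add_cancel hk']
  rw [hznk]
  have h2 : ((z + z⁻¹)/2)^k = (z^2 + 1)^k / (2^k * z^k) := by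
    rw [show z + z⁻¹ = (z^2+1)/z from by field_simp]
    rw [div_div, div_pow, mul_pow, mul_comm (z^k)]
  rw [h2]
  have h2k : (2:ℂ)^k ≠ 0 := pow_ne_zero _ two_ne_zero
  have hzk : z^k ≠ 0 := pow_ne_zero _ hz0
  field_simp

private lemma circle_inv {w : ℂ} (hw : ‖w‖ = 1) : w⁻¹ = (starRingEnd ℂ) w :=
  Complex.inv_eq_conj hw

private lemma circle_half {w : ℂ} (hw : ‖w‖ = 1) : (w + w⁻¹)/2 = (w.re : ℂ) := by
  rw [circle_inv hw, Complex.add_conj]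
  push_cast
  ring

private lemma eval_map_real (P : Polynomial ℝ) (y : ℝ) :
    (P.map Complex.ofRealHom).eval (y : ℂ) = ((P.eval y : ℝ) : ℂ) := by
  rw [Polynomial.eval_map]
  exact Polynomial.eval₂_at_apply _ _

private lemma norm_aux {ζ : ℂ} (hζ : ‖ζ‖ = 1) (a b : ℝ) :
    ‖ζ * ((a:ℂ) + (b:ℂ)*Complex.I)‖^2 = a^2 + b^2 := by
  rw [norm_mul, hζ, one_mul, Complex.sq_norm,
    Complex.normSq_add_mul_I]

end SzegoAuxiliary

open Polynomial Complex in
/-- The Szegő–Schaake–van der Corput inequality: for a real polynomial `P` of degree at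
most `n ≥ 1` and `x ∈ [−1,1]`,
`(1−x²) P'(x)² + n² P(x)² ≤ n² ‖P‖_{[−1,1]}²`. -/
theorem szego_schaake_van_der_corput (n : ℕ) (hn : 1 ≤ n) (P : Polynomial ℝ)
    (hP : P.degree ≤ n) (x : ℝ) (hx : x ∈ Set.Icc (-1 : ℝ) 1) :
    (1 - x ^ 2) * (Polynomial.derivative P).eval x ^ 2 + (n : ℝ) ^ 2 * P.eval x ^ 2 ≤
      (n : ℝ) ^ 2 * (⨆ t : Set.Icc (-1 : ℝ) 1, |P.eval ↑t|) ^ 2 := by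
  by_cases hP0 : P = 0
  · subst hP0
    simp [ciSup_const]
  obtain ⟨hx1, hx2⟩ := hx
  set M := ⨆ t : Set.Icc (-1 : ℝ) 1, |P.eval ↑t| with hM
  have hbdd : BddAbove (Set.range fun t : Set.Icc (-1:ℝ) 1 => |P.eval ↑t|) := by
    have himg : BddAbove ((fun t : ℝ => |P.eval t|) '' Set.Icc (-1:ℝ) 1) :=
      IsCompact.bddAbove_image isCompact_Icc
        ((continuous_abs.comp P.continuous).continuousOn)
    refine himg.mono ?_
    rintro y ⟨t, rfl⟩
    exact ⟨t.1, t.2, rfl⟩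
  have hle : ∀ t : ℝ, t ∈ Set.Icc (-1:ℝ) 1 → |P.eval t| ≤ M := by
    intro t ht
    exact le_ciSup hbdd (⟨t, ht⟩ : Set.Icc (-1:ℝ) 1)
  have hM0 : 0 < M := by
    have hfin : Set.Finite {y : ℝ | P.IsRoot y} := Polynomial.finite_setOf_isRoot hP0
    have hinf : Set.Infinite (Set.Icc (-1:ℝ) 1) := Set.Icc_infinite (by norm_num)
    obtain ⟨t, ht⟩ := (hinf.diff hfin).nonempty
    have ht1 : t ∈ Set.Icc (-1:ℝ) 1 := ht.1
    have ht2 : P.eval t ≠ 0 := ht.2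
    calc (0:ℝ) < |P.eval t| := abs_pos.mpr ht2
      _ ≤ M := hle t ht1
  have hPn : P.natDegree ≤ n := Polynomial.natDegree_le_iff_degree_le.mpr hP
  set Q : ℂ[X] := P.map Complex.ofRealHom with hQ
  set S : ℂ[X] := Sdef n P with hS
  -- the point z on the circle
  set θ := Real.arccos x with hθ
  set z : ℂ := Complex.exp (θ * Complex.I) with hzdef
  have hz : ‖z‖ = 1 := Complex.norm_exp_ofReal_mul_I θ
  have hz0 : z ≠ 0 := by intro h0; rw [h0] at hz; simp at hz
  have hzre : z.re = x := by
    rw [hzdef, Complex.exp_ofReal_mul_I_re, hθ, Real.cos_arccos hx1 hx2]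
  set s := Real.sqrt (1 - x^2) with hsd
  have hx21 : 0 ≤ 1 - x^2 := by nlinarith
  have hs2 : s^2 = 1 - x^2 := Real.sq_sqrt hx21
  have hzim : z.im = s := by
    rw [hzdef, Complex.exp_ofReal_mul_I_im, hθ, Real.sin_arccos, hsd]
  have hw : (z + z⁻¹)/2 = (x : ℂ) := by rw [circle_half hz, hzre]
  have hv : (z - z⁻¹)/2 = (s : ℂ) * Complex.I := by
    rw [circle_inv hz, Complex.sub_conj, hzim]
    push_cast
    ring
  -- sphere bound
  have hsphere : ∀ w : ℂ, ‖w‖ = 1 → ‖S.eval w‖ ≤ M := by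
    intro w hwc
    have hw0 : w ≠ 0 := by intro h0; rw [h0] at hwc; simp at hwc
    rw [hS, Sdef_eval n P hPn hw0, circle_half hwc, eval_map_real P w.re]
    rw [norm_mul, norm_pow, hwc, one_pow, one_mul,
      Complex.norm_real, Real.norm_eq_abs]
    refine hle w.re ?_
    have := Complex.abs_re_le_norm w
    rw [hwc] at this
    constructor <;> [linarith [neg_abs_le w.re]; linarith [le_abs_self w.re]]
  -- coefficient bound
  have hcoeff : ‖S.coeff (2*n)‖ ≤ M := by
    rw [hS, Sdef_coeff, ← Sdef_eval_zero n hn P]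
    exact maxmod _ M (fun w hwc => hsphere w hwc) (by simp)
  -- Malik
  have hmal := malik S (2*n) (by omega) (hS ▸ Sdef_natDegree n P) M hM0 hsphere hcoeff hz
  -- derivative of S at z
  set Px := P.eval x with hPx
  set Dx := (Polynomial.derivative P).eval x with hDx
  have hQx : Q.eval ((x:ℝ):ℂ) = ((Px:ℝ):ℂ) := by
    rw [hQ]; exact eval_map_real P x
  have hQ'x : (Polynomial.derivative Q).eval ((x:ℝ):ℂ) = ((Dx:ℝ):ℂ) := by
    rw [hQ, Polynomial.derivative_map]
    exact eval_map_real _ x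
  have hSz : S.eval z = z^n * ((Px:ℝ):ℂ) := by
    rw [hS, Sdef_eval n P hPn hz0, hw, eval_map_real P x]
  have hDeriv : (Polynomial.derivative S).eval z
      = (n:ℂ) * z^(n-1) * ((Px:ℝ):ℂ)
        + z^n * (((Dx:ℝ):ℂ) * ((1 + -(z^2)⁻¹)/2)) := by
    have hEv : (fun w : ℂ => S.eval w) =ᶠ[nhds z] (fun w => w^n * Q.eval ((w + w⁻¹)/2)) := by
      filter_upwards [IsOpen.mem_nhds isOpen_compl_singleton hz0] with w hwne
      exact hS ▸ Sdef_eval n P hPn hwne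
    have h1 : HasDerivAt (fun w : ℂ => w^n) ((n:ℂ) * z^(n-1)) z := hasDerivAt_pow n z
    have hinv : HasDerivAt (fun w : ℂ => w⁻¹) (-(z^2)⁻¹) z := hasDerivAt_inv hz0
    have hinner : HasDerivAt (fun w : ℂ => (w + w⁻¹)/2) ((1 + -(z^2)⁻¹)/2) z :=
      ((hasDerivAt_id z).add hinv).div_const 2
    have hq : HasDerivAt (fun y : ℂ => Q.eval y)
        ((Polynomial.derivative Q).eval ((z + z⁻¹)/2)) ((z + z⁻¹)/2) := Q.hasDerivAt _
    have hcomp : HasDerivAt (fun w : ℂ => Q.eval ((w + w⁻¹)/2))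
        ((Polynomial.derivative Q).eval ((z + z⁻¹)/2) * ((1 + -(z^2)⁻¹)/2)) z :=
      by have := HasDerivAt.comp z hq hinner; exact this
    have hg : HasDerivAt (fun w : ℂ => w^n * Q.eval ((w + w⁻¹)/2)) _ z := h1.mul hcomp
    have hd1 : (Polynomial.derivative S).eval z = deriv (fun w : ℂ => S.eval w) z :=
      (Polynomial.deriv (p := S) (x := z)).symm
    rw [hd1, Filter.EventuallyEq.deriv_eq hEv, hg.deriv, hw, hQx, hQ'x]
  -- z * S'
  have hzz : z ^ (n-1) * z = z ^ n := by rw [← pow_succ, Nat.sub_add_cancel hn]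
  have hz2 : z * ((1 + -(z^2)⁻¹)/2) = (s:ℂ) * Complex.I := by
    rw [← hv]
    field_simp
    ring
  have hzs : z * (Polynomial.derivative S).eval z
      = z^n * (((n * Px : ℝ):ℂ) + ((s * Dx : ℝ):ℂ) * Complex.I) := by
    rw [hDeriv]
    have expand : z * ((n:ℂ) * z^(n-1) * ((Px:ℝ):ℂ)
        + z^n * (((Dx:ℝ):ℂ) * ((1 + -(z^2)⁻¹)/2)))
        = (n:ℂ) * (z^(n-1) * z) * ((Px:ℝ):ℂ)
          + z^n * (((Dx:ℝ):ℂ) * (z * ((1 + -(z^2)⁻¹)/2))) := by ring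
    rw [expand, hzz, hz2]
    push_cast
    ring
  have h2nS : ((2*n : ℕ):ℂ) * S.eval z - z * (Polynomial.derivative S).eval z
      = z^n * (((n * Px : ℝ):ℂ) + ((-(s * Dx) : ℝ):ℂ) * Complex.I) := by
    rw [hSz, hzs]
    push_cast
    ring
  -- norms
  have hzn : ‖(z^n)‖ = 1 := by rw [norm_pow, hz, one_pow]
  have hN1 : ‖z * (Polynomial.derivative S).eval z‖^2 = (n*Px)^2 + (s*Dx)^2 := by
    rw [hzs]; exact norm_aux hzn _ _
  have hN2 : ‖((2*n : ℕ):ℂ) * S.eval z - z * (Polynomial.derivative S).eval z‖^2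
      = (n*Px)^2 + (s*Dx)^2 := by
    rw [h2nS, norm_aux hzn]
    ring
  have hNz : ‖z * (Polynomial.derivative S).eval z‖ = ‖(Polynomial.derivative S).eval z‖ := by
    rw [norm_mul, hz, one_mul]
  have hNeq : ‖((2*n : ℕ):ℂ) * S.eval z - z * (Polynomial.derivative S).eval z‖
      = ‖(Polynomial.derivative S).eval z‖ := by
    have h := hN2.trans hN1.symm
    rw [hNz] at h
    have := congrArg Real.sqrt h
    rwa [Real.sqrt_sq (norm_nonneg _), Real.sqrt_sq (norm_nonneg _)] at this
  rw [hNeq] at hmal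
  have hNle : ‖(Polynomial.derivative S).eval z‖ ≤ n * M := by
    have : ((2*n : ℕ):ℝ) * M = 2 * (n * M) := by push_cast; ring
    rw [this] at hmal
    linarith
  have hfin : (1 - x ^ 2) * Dx ^ 2 + (n : ℝ) ^ 2 * Px ^ 2
      = ‖(Polynomial.derivative S).eval z‖^2 := by
    rw [← hNz, hN1, ← hs2]
    ring
  rw [hfin]
  have hnM0 : 0 ≤ (n:ℝ) * M := by positivity
  calc ‖(Polynomial.derivative S).eval z‖^2 ≤ ((n:ℝ) * M)^2 := by
        nlinarith [norm_nonneg ((Polynomial.derivative S).eval z)]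
    _ = (n:ℝ)^2 * M^2 := by ring
end

section
/- Let P be a complex algebraic polynomial of degree at most n ≥ 1. Then for every z ∈ ℂ with |z| = 1, |P'(z)| ≤ n · sup_{|w|=1} |P(w)| (M. Riesz's inequality on the unit circle). -/
open Complex Polynomial
open Finset

lemma ortho (N : ℕ) {ω : ℂ} (hω : IsPrimitiveRoot ω N) (t : ℤ)
    (ht : t.natAbs < N) :
    ∑ j ∈ Finset.range N, (ω ^ t) ^ j = if t = 0 then (N : ℂ) else 0 := by
  split_ifs with h
  · subst h; simp
  · have hne : ω ^ t ≠ 1 := by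
      intro hh
      have hdvd := (hω.zpow_eq_one_iff_dvd t).mp hh
      have := Int.eq_zero_of_dvd_of_natAbs_lt_natAbs hdvd (by simpa using ht)
      exact h this
    rw [geom_sum_eq hne]
    have hpow : (ω ^ t) ^ N = 1 := by
      rw [← zpow_natCast, ← zpow_mul, mul_comm, zpow_mul, zpow_natCast, hω.pow_eq_one, one_zpow]
    simp [hpow]

lemma count (n m : ℕ) (hm : m ≤ n) (c : ℂ) :
    ∑ k ∈ range n, ∑ k' ∈ range n, (if (m:ℤ) + k - n - k' = 0 then c else 0)
      = (m : ℂ) * c := by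
  rw [Finset.sum_comm]
  have step1 : ∀ k' ∈ range n, (∑ k ∈ range n, if (m:ℤ) + k - n - k' = 0 then c else 0)
      = if k' + (n - m) ∈ range n then c else 0 := by
    intro k' hk'
    rw [← Finset.sum_ite_eq' (range n) (k' + (n - m)) (fun _ => c)]
    refine Finset.sum_congr rfl fun k hk => ?_
    refine if_congr ?_ rfl rfl
    simp only [mem_range] at hk hk'
    constructor <;> intro h <;> omega
  rw [Finset.sum_congr rfl step1]
  have : ∀ k' ∈ range n, (if k' + (n - m) ∈ range n then c else 0)
      = if k' ∈ range m then c else 0 := by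
    intro k' hk'
    refine if_congr ?_ rfl rfl
    simp only [mem_range]; omega
  rw [Finset.sum_congr rfl this]
  rw [Finset.sum_ite_mem]
  have hi : range m ∩ range n = range m := by
    ext x; simp only [Finset.mem_inter, mem_range]; omega
  rw [Finset.inter_comm, hi]
  simp [mul_comm]

lemma core (n : ℕ) {ω : ℂ} (hω : IsPrimitiveRoot ω (2*n+1)) (hωa : ‖ω‖ = 1)
    (a : ℕ → ℂ) (z : ℂ) :
    ∑ j ∈ range (2*n+1), (∑ m ∈ range (n+1), a m * (z * ω^j)^m) * (starRingEnd ℂ) (ω^j) ^ n *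
        ((∑ k ∈ range n, (ω^j)^k) * (starRingEnd ℂ) (∑ k ∈ range n, (ω^j)^k))
      = (2*n+1 : ℂ) * ∑ m ∈ range (n+1), (m : ℂ) * a m * z^m := by
  have hne : ω ≠ 0 := by intro h; simp [h] at hωa
  have hconj : (starRingEnd ℂ) ω = ω⁻¹ := (Complex.inv_eq_conj hωa).symm
  have term : ∀ j m k k' : ℕ,
      a m * (z * ω^j)^m * (starRingEnd ℂ) (ω^j) ^ n * ((ω^j)^k * (starRingEnd ℂ) ((ω^j)^k'))
        = a m * z^m * (ω ^ ((m:ℤ) + k - n - k')) ^ j := by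
    intro j m k k'
    have h1 : (ω ^ ((m:ℤ) + k - n - k')) ^ j
        = ω^(j*m) * ω^(j*k) * (ω^(j*n) * ω^(j*k'))⁻¹ := by
      rw [← zpow_natCast _ j, ← zpow_mul,
        show ((m:ℤ)+k-n-k') * j = ((j*m + j*k : ℕ) : ℤ) - ((j*n + j*k' : ℕ) : ℤ) by push_cast; ring,
        zpow_sub₀ hne, zpow_natCast, zpow_natCast, pow_add, pow_add, div_eq_mul_inv]
    simp only [map_pow, hconj, mul_pow, inv_pow, ← pow_mul]
    rw [h1]
    field_simp
  calc ∑ j ∈ range (2*n+1), (∑ m ∈ range (n+1), a m * (z * ω^j)^m) * (starRingEnd ℂ) (ω^j) ^ n *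
        ((∑ k ∈ range n, (ω^j)^k) * (starRingEnd ℂ) (∑ k ∈ range n, (ω^j)^k))
      = ∑ j ∈ range (2*n+1), ∑ m ∈ range (n+1), ∑ k ∈ range n, ∑ k' ∈ range n,
          a m * z^m * (ω ^ ((m:ℤ) + k - n - k')) ^ j := by
        refine Finset.sum_congr rfl fun j _ => ?_
        rw [map_sum]
        rw [Finset.sum_mul, Finset.sum_mul]
        refine Finset.sum_congr rfl fun m _ => ?_
        rw [Finset.sum_mul_sum, Finset.mul_sum]
        refine Finset.sum_congr rfl fun k _ => ?_
        rw [Finset.mul_sum]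
        refine Finset.sum_congr rfl fun k' _ => ?_
        rw [← term j m k k']
    _ = ∑ m ∈ range (n+1), ∑ k ∈ range n, ∑ k' ∈ range n,
          a m * z^m * ∑ j ∈ range (2*n+1), (ω ^ ((m:ℤ) + k - n - k')) ^ j := by
        rw [Finset.sum_comm]
        refine Finset.sum_congr rfl fun m _ => ?_
        rw [Finset.sum_comm]
        refine Finset.sum_congr rfl fun k _ => ?_
        rw [Finset.sum_comm]
        refine Finset.sum_congr rfl fun k' _ => ?_
        rw [Finset.mul_sum]
    _ = ∑ m ∈ range (n+1), ∑ k ∈ range n, ∑ k' ∈ range n,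
          a m * z^m * (if ((m:ℤ) + k - n - k') = 0 then ((2*n+1 : ℕ) : ℂ) else 0) := by
        refine Finset.sum_congr rfl fun m hm => Finset.sum_congr rfl fun k hk =>
          Finset.sum_congr rfl fun k' hk' => ?_
        simp only [mem_range] at hm hk hk'
        rw [ortho (2*n+1) hω _ (by omega)]
    _ = ∑ m ∈ range (n+1), a m * z^m * ((m:ℂ) * ((2*n+1 : ℕ) : ℂ)) := by
        refine Finset.sum_congr rfl fun m hm => ?_
        simp only [mem_range] at hm
        simp only [← Finset.mul_sum]
        congr 1
        exact count n m (by omega) _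
    _ = (2*n+1 : ℂ) * ∑ m ∈ range (n+1), (m : ℂ) * a m * z^m := by
        rw [Finset.mul_sum]
        refine Finset.sum_congr rfl fun m _ => ?_
        push_cast
        ring


/-- M. Riesz's inequality on the unit circle: for a complex polynomial `P` of degree at
most `n ≥ 1` and `|z| = 1`, `|P'(z)| ≤ n · ‖P‖_{C₁}`. -/
theorem riesz_inequality_unit_circle (n : ℕ) (hn : 1 ≤ n) (P : Polynomial ℂ)
    (hP : P.degree ≤ n) (z : ℂ) (hz : ‖z‖ = 1) :
    ‖(Polynomial.derivative P).eval z‖ ≤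
      (n : ℝ) * ⨆ w : {w : ℂ // ‖w‖ = 1}, ‖P.eval ↑w‖ := by
  set N : ℕ := 2 * n + 1 with hN
  have hNpos : (0:ℝ) < N := by positivity
  set ω : ℂ := Complex.exp (2 * Real.pi * Complex.I / N) with hωdef
  have hω : IsPrimitiveRoot ω N := Complex.isPrimitiveRoot_exp N (by omega)
  have hωa : ‖ω‖ = 1 := by
    exact Complex.norm_eq_one_of_pow_eq_one hω.pow_eq_one (by omega)
  set M : ℝ := ⨆ w : {w : ℂ // ‖w‖ = 1}, ‖P.eval ↑w‖ with hM
  -- boundedness of the sup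
  have hbdd : BddAbove (Set.range fun w : {w : ℂ // ‖w‖ = 1} =>
      ‖P.eval ↑w‖) := by
    have hset : {w : ℂ | ‖w‖ = 1} = Metric.sphere (0:ℂ) 1 := by
      ext w; simp [Complex.dist_eq]
    have hcomp : IsCompact (Metric.sphere (0:ℂ) 1) := isCompact_sphere 0 1
    have hcont : Continuous fun w : ℂ => ‖P.eval w‖ :=
      continuous_norm.comp P.continuous
    have : Set.range (fun w : {w : ℂ // ‖w‖ = 1} => ‖P.eval ↑w‖)
        = (fun w : ℂ => ‖P.eval w‖) '' (Metric.sphere (0:ℂ) 1) := by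
      rw [← hset,
        show {w : ℂ | ‖w‖ = 1}
          = Set.range (Subtype.val : {w : ℂ // ‖w‖ = 1} → ℂ) from
            Subtype.range_coe.symm, ← Set.range_comp]
      rfl
    rw [this]
    exact (hcomp.image hcont).bddAbove
  have hMle : ∀ w : ℂ, ‖w‖ = 1 → ‖P.eval w‖ ≤ M :=
    fun w hw => le_ciSup hbdd (⟨w, hw⟩ : {w : ℂ // ‖w‖ = 1})
  have hM0 : (0:ℝ) ≤ M := le_trans (norm_nonneg _) (hMle 1 (by simp))
  -- eval expansions
  have hnd : P.natDegree ≤ n := Polynomial.natDegree_le_iff_degree_le.mpr hP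
  have hevalP : ∀ y : ℂ, P.eval y = ∑ m ∈ range (n+1), P.coeff m * y ^ m :=
    fun y => Polynomial.eval_eq_sum_range' (by omega) y
  have hevalD : z * (Polynomial.derivative P).eval z
      = ∑ m ∈ range (n+1), (m : ℂ) * P.coeff m * z ^ m := by
    have hd : (Polynomial.derivative P).natDegree < n := by
      have := Polynomial.natDegree_derivative_le P
      omega
    rw [Polynomial.eval_eq_sum_range' hd z, Finset.sum_range_succ' _ n, Finset.mul_sum]
    simp only [Polynomial.coeff_derivative]
    push_cast
    rw [zero_mul, zero_mul, add_zero]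
    refine Finset.sum_congr rfl fun m _ => ?_
    ring
  set S : ℕ → ℂ := fun j => ∑ k ∈ range n, (ω ^ j) ^ k with hS
  -- key identity
  have key : ∑ j ∈ range N, P.eval (z * ω ^ j) * (starRingEnd ℂ) (ω ^ j) ^ n
        * (S j * (starRingEnd ℂ) (S j))
      = (N : ℂ) * (z * (Polynomial.derivative P).eval z) := by
    have h := core n hω hωa P.coeff z
    rw [hevalD]
    calc ∑ j ∈ range N, P.eval (z * ω ^ j) * (starRingEnd ℂ) (ω ^ j) ^ n
          * (S j * (starRingEnd ℂ) (S j))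
        = ∑ j ∈ range (2*n+1), (∑ m ∈ range (n+1), P.coeff m * (z * ω ^ j) ^ m)
            * (starRingEnd ℂ) (ω ^ j) ^ n
            * ((∑ k ∈ range n, (ω ^ j) ^ k) * (starRingEnd ℂ) (∑ k ∈ range n, (ω ^ j) ^ k)) := by
          refine Finset.sum_congr rfl fun j _ => ?_
          rw [← hevalP]
      _ = (2*n+1 : ℂ) * ∑ m ∈ range (n+1), (m : ℂ) * P.coeff m * z ^ m := h
      _ = (N : ℂ) * ∑ m ∈ range (n+1), (m : ℂ) * P.coeff m * z ^ m := by rw [hN]; push_cast; ring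
  -- Parseval: sum of normSq of S
  have keyII : ∑ j ∈ range N, Complex.normSq (S j) = (N : ℝ) * n := by
    simp only [hN]
    have h := core n hω hωa (fun m => if m = n then 1 else 0) 1
    simp only [ite_mul, zero_mul, one_mul, Finset.sum_ite_eq' (range (n+1))] at h
    simp only [Finset.self_mem_range_succ, if_true] at h
    have hsimp : ∀ j ∈ range (2*n+1), (ω ^ j) ^ n
          * (starRingEnd ℂ) (ω ^ j) ^ n
          * ((∑ k ∈ range n, (ω ^ j) ^ k) * (starRingEnd ℂ) (∑ k ∈ range n, (ω ^ j) ^ k))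
        = (Complex.normSq (S j) : ℂ) := by
      intro j _
      rw [Complex.mul_conj]
      have : (ω ^ j) ^ n * (starRingEnd ℂ) (ω ^ j) ^ n
          = ((ω ^ j) * (starRingEnd ℂ) (ω ^ j)) ^ n := by ring
      rw [this, Complex.mul_conj]
      have habs : Complex.normSq (ω ^ j) = 1 := by
        have : ‖ω ^ j‖ = 1 := by
          rw [norm_pow, hωa, one_pow]
        rw [← Complex.sq_norm, this, one_pow]
      rw [habs]
      simp
      rfl
    rw [Finset.sum_congr rfl hsimp] at h
    have hrhs : ∑ m ∈ range (n+1), (m : ℂ) * (if m = n then (1:ℂ) else 0) * 1 ^ m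
        = (n : ℂ) := by
      rw [Finset.sum_eq_single n]
      · simp
      · intro b _ hb; simp [hb]
      · intro hmem; exfalso; exact hmem (by simp)
    rw [hrhs] at h
    have h2 : ((∑ j ∈ range (2*n+1), Complex.normSq (S j) : ℝ) : ℂ)
        = ((((2*n+1 : ℕ) : ℝ) * n : ℝ) : ℂ) := by
      push_cast
      rw [h]
    exact_mod_cast h2
  -- the bound
  have habsω : ∀ j : ℕ, ‖ω ^ j‖ = 1 := by
    intro j; rw [norm_pow, hωa, one_pow]
  have hbound : (N : ℝ) * ‖z * (Polynomial.derivative P).eval z‖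
      ≤ M * ((N : ℝ) * n) := by
    have h1 : (N : ℝ) * ‖z * (Polynomial.derivative P).eval z‖
        = ‖(N : ℂ) * (z * (Polynomial.derivative P).eval z)‖ := by
      rw [norm_mul]; simp
    rw [h1, ← key]
    refine le_trans (norm_sum_le _ _) ?_
    have hterm : ∀ j ∈ range N,
        ‖P.eval (z * ω ^ j) * (starRingEnd ℂ) (ω ^ j) ^ n
          * (S j * (starRingEnd ℂ) (S j))‖
        ≤ M * Complex.normSq (S j) := by
      intro j _
      rw [norm_mul, norm_mul, Complex.mul_conj]
      rw [norm_pow, Complex.norm_conj, habsω j, one_pow, mul_one]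
      have h2 : ‖((Complex.normSq (S j) : ℝ) : ℂ)‖ = Complex.normSq (S j) := by
        rw [Complex.norm_real, Real.norm_eq_abs, _root_.abs_of_nonneg (Complex.normSq_nonneg _)]
      rw [h2]
      have h3 : ‖P.eval (z * ω ^ j)‖ ≤ M := by
        refine hMle _ ?_
        rw [norm_mul, hz, habsω j, one_mul]
      exact mul_le_mul_of_nonneg_right h3 (Complex.normSq_nonneg _)
    refine le_trans (Finset.sum_le_sum hterm) ?_
    rw [← Finset.mul_sum, keyII]
  have hfin : ‖(Polynomial.derivative P).eval z‖
      = ‖z * (Polynomial.derivative P).eval z‖ := by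
    rw [norm_mul, hz, one_mul]
  rw [hfin]
  nlinarith [hbound, hNpos, norm_nonneg (z * (Polynomial.derivative P).eval z)]
end

section
/- Let T_n(x) = cos(n·arccos x) be the Chebyshev polynomial of degree n and let 1 ≤ k ≤ n. Then sup_{x∈[−1,1]} |T_n^{(k)}(x)| = n²(n²−1²)(n²−2²)···(n²−(k−1)²) / (1·3·5···(2k−1)), while sup_{x∈[−1,1]} |T_n(x)| = 1; that is, the Chebyshev polynomial attains equality in V. A. Markov's inequality. -/
open Real Set Polynomial Finset

open Polynomial.Chebyshev in
private theorem cheb_ode0 (n : ℤ) :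
    (1 - X ^ 2) * derivative (derivative (T ℝ n)) =
      X * derivative (T ℝ n) - (n : ℝ[X]) ^ 2 * T ℝ n := by
  have h1 := T_derivative_eq_U (R := ℝ) n
  have h1' := congr_arg derivative h1
  simp only [derivative_mul, derivative_intCast, zero_mul, zero_add] at h1'
  have h2 := add_one_mul_T_eq_poly_in_U (R := ℝ) (n - 1)
  rw [sub_add_cancel] at h2
  linear_combination (norm := (push_cast; ring_nf))
    ((1 : ℝ[X]) - X ^ 2) * h1' - X * h1 + (n : ℝ[X]) * h2

open Polynomial.Chebyshev in
private theorem cheb_odek (n : ℤ) (k : ℕ) :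
    (1 - X ^ 2) * derivative^[k + 2] (T ℝ n) =
      (2 * (k : ℝ[X]) + 1) * (X * derivative^[k + 1] (T ℝ n)) -
        ((n : ℝ[X]) ^ 2 - (k : ℝ[X]) ^ 2) * derivative^[k] (T ℝ n) := by
  have i1 : ∀ (m : ℕ) (p : ℝ[X]), derivative^[m + 1] p = derivative (derivative^[m] p) :=
    fun m p => Function.iterate_succ_apply' _ _ _
  induction k with
  | zero => simpa using cheb_ode0 n
  | succ k ih =>
    rw [show k + 1 + 2 = k + 2 + 1 from rfl, i1, i1, i1] at *
    have h := congr_arg derivative ih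
    set p := derivative^[k] (T ℝ n) with hp
    simp only [derivative_mul, derivative_sub, derivative_add, derivative_one,
      derivative_X, derivative_X_pow, derivative_natCast, derivative_intCast, derivative_ofNat,
      derivative_pow, C_eq_natCast, mul_zero, zero_mul, sub_zero, add_zero, zero_add] at h
    push_cast at h ⊢
    linear_combination (norm := ring_nf) h

open Polynomial.Chebyshev in
private theorem cheb_T_eval_one (n : ℤ) : (T ℝ n).eval 1 = 1 := by
  have h := T_real_cos (θ := 0) n
  simpa using h

open Polynomial.Chebyshev in
private theorem cheb_comp_neg (m : ℕ) :
    (T ℝ (m : ℤ)).comp (-X) = C ((-1 : ℝ)) ^ m * T ℝ (m : ℤ) := by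
  induction m using Nat.twoStepInduction with
  | zero => simp
  | one => simp [T_one]
  | more m ih2 ih1 =>
    have e : ((m : ℤ) + 2) = ((m + 2 : ℕ) : ℤ) := by push_cast; ring
    have e1 : ((m : ℤ) + 1) = ((m + 1 : ℕ) : ℤ) := by push_cast; ring
    have h := T_add_two ℝ (m : ℤ)
    rw [e, e1] at h
    rw [h]
    simp only [sub_comp, mul_comp, X_comp, ofNat_comp]
    rw [ih1, ih2, ← e1]
    simp only [map_neg, map_one]
    push_cast
    ring

open Polynomial.Chebyshev in
private theorem cheb_natDegree_T_le (m : ℕ) : (T ℝ (m : ℤ)).natDegree ≤ m := by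
  induction m using Nat.twoStepInduction with
  | zero => simp
  | one => simpa [T_one] using natDegree_X_le
  | more m ih2 ih1 =>
    have e : ((m : ℤ) + 2) = ((m + 2 : ℕ) : ℤ) := by push_cast; ring
    have e1 : ((m : ℤ) + 1) = ((m + 1 : ℕ) : ℤ) := by push_cast; ring
    have h := T_add_two ℝ (m : ℤ)
    rw [e, e1] at h
    rw [h]
    refine (natDegree_sub_le _ _).trans ?_
    have h2x : (2 * X : ℝ[X]).natDegree ≤ 1 :=
      (natDegree_mul_le).trans (by simpa using natDegree_X_le)
    have h1 : (2 * X * T ℝ ((m + 1 : ℕ) : ℤ)).natDegree ≤ m + 2 := by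
      refine (natDegree_mul_le).trans ?_
      omega
    omega

open Polynomial.Chebyshev in
private theorem cheb_eval_one_rec (n : ℤ) (k : ℕ) :
    (2 * (k : ℝ) + 1) * (derivative^[k + 1] (T ℝ n)).eval 1 =
      ((n : ℝ) ^ 2 - (k : ℝ) ^ 2) * (derivative^[k] (T ℝ n)).eval 1 := by
  have h := congr_arg (Polynomial.eval (1 : ℝ)) (cheb_odek n k)
  simp only [eval_mul, eval_sub, eval_add, eval_one, eval_pow, eval_X, eval_ofNat,
    eval_natCast, eval_intCast] at h
  linarith [h]

open Polynomial.Chebyshev in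
private theorem cheb_eval_one_formula (n : ℤ) (k : ℕ) :
    ((2 * k - 1).doubleFactorial : ℝ) * (derivative^[k] (T ℝ n)).eval 1 =
      ∏ i ∈ Finset.range k, ((n : ℝ) ^ 2 - (i : ℝ) ^ 2) := by
  induction k with
  | zero => simpa using cheb_T_eval_one n
  | succ k ih =>
    have hdf : ((2 * (k + 1) - 1).doubleFactorial : ℝ) =
        (2 * (k : ℝ) + 1) * ((2 * k - 1).doubleFactorial : ℝ) := by
      cases k with
      | zero => simp [Nat.doubleFactorial]
      | succ k =>
        have e : 2 * (k + 1 + 1) - 1 = (2 * (k + 1) - 1) + 2 := by omega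
        rw [e, Nat.doubleFactorial_add_two]
        push_cast [Nat.cast_sub (by omega : 1 ≤ 2 * (k + 1))]
        ring
    rw [Finset.prod_range_succ, ← ih, hdf]
    have := cheb_eval_one_rec n k
    nlinarith [this]

open Polynomial.Chebyshev in
private theorem iter_deriv_comp_neg (k : ℕ) (p : ℝ[X]) :
    derivative^[k] (p.comp (-X)) = C ((-1 : ℝ)) ^ k * ((derivative^[k] p).comp (-X)) := by
  induction k generalizing p with
  | zero => simp
  | succ k ih =>
    rw [Function.iterate_succ_apply, Function.iterate_succ_apply]
    have hd : derivative (p.comp (-X)) = -((derivative p).comp (-X)) := by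
      simp [derivative_comp]
    rw [hd, iterate_derivative_neg, ih]
    simp only [map_neg, map_one]
    ring

open Polynomial.Chebyshev in
private theorem cheb_eval_neg_one_sq (n k : ℕ) :
    ((derivative^[k] (T ℝ (n : ℤ))).eval (-1)) ^ 2 =
      ((derivative^[k] (T ℝ (n : ℤ))).eval 1) ^ 2 := by
  have h : derivative^[k] ((T ℝ (n : ℤ)).comp (-X)) =
      derivative^[k] (C ((-1 : ℝ) ^ n) * T ℝ (n : ℤ)) := by
    rw [cheb_comp_neg, map_pow]
  rw [iterate_derivative_C_mul, iter_deriv_comp_neg] at h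
  have h2 := congr_arg (Polynomial.eval (1 : ℝ)) h
  simp only [eval_mul, eval_pow, eval_comp, eval_neg, eval_X, eval_C] at h2
  have hk : ((-1 : ℝ) ^ k) ^ 2 = 1 := by
    rw [← pow_mul, mul_comm, pow_mul]; norm_num
  have hn : ((-1 : ℝ) ^ n) ^ 2 = 1 := by
    rw [← pow_mul, mul_comm, pow_mul]; norm_num
  have h3 := congr_arg (fun y : ℝ => y ^ 2) h2
  simp only [mul_pow, hk, hn, one_mul] at h3
  exact h3

open Polynomial.Chebyshev in
private theorem cheb_sq_bound (n k : ℕ) (hkn : k < n) (x : ℝ)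
    (hx : x ∈ Set.Icc (-1 : ℝ) 1) :
    ((derivative^[k] (T ℝ (n : ℤ))).eval x) ^ 2 ≤
      ((derivative^[k] (T ℝ (n : ℤ))).eval 1) ^ 2 := by
  set f : ℕ → ℝ[X] := fun j => derivative^[j] (T ℝ (n : ℤ)) with hf
  set E : ℝ[X] := (((n : ℤ) : ℝ[X]) ^ 2 - ((k : ℕ) : ℝ[X]) ^ 2) * f k ^ 2
      + (1 - X ^ 2) * f (k + 1) ^ 2 with hE
  have i1 : ∀ (m : ℕ) (p : ℝ[X]), derivative^[m + 1] p = derivative (derivative^[m] p) :=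
    fun m p => Function.iterate_succ_apply' _ _ _
  have hfd : ∀ m, derivative (f m) = f (m + 1) := fun m => (i1 m _).symm
  have hE' : derivative E = (4 * (k : ℝ[X])) * (X * f (k + 1) ^ 2) := by
    have h : (1 - X ^ 2) * derivative (derivative (f k)) =
        (2 * (k : ℝ[X]) + 1) * (X * derivative (f k)) -
          (((n : ℤ) : ℝ[X]) ^ 2 - ((k : ℕ) : ℝ[X]) ^ 2) * f k := by
      have h0 := cheb_odek (n : ℤ) k
      rw [show k + 2 = k + 1 + 1 from rfl, i1, i1] at h0
      exact h0
    rw [hE]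
    simp only [derivative_add, derivative_mul, derivative_sub, derivative_pow,
      derivative_one, derivative_X, derivative_intCast, derivative_natCast, C_eq_natCast,
      hfd, zero_mul, mul_zero, zero_sub, sub_zero, zero_add, add_zero, map_ofNat]
    have e1 : f (k + 1) = derivative (f k) := (hfd k).symm
    have e2 : f (k + 1 + 1) = derivative (derivative (f k)) := by rw [← hfd, ← hfd]
    rw [e2, e1]
    linear_combination (norm := (push_cast; ring_nf)) 2 * derivative (f k) * h
  have hEeval : ∀ y : ℝ, E.eval y =
      ((n : ℝ) ^ 2 - (k : ℝ) ^ 2) * ((f k).eval y) ^ 2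
        + (1 - y ^ 2) * ((f (k + 1)).eval y) ^ 2 := by
    intro y
    simp [hE, eval_mul, eval_add, eval_sub, eval_pow, eval_one, eval_X]
  have hderiv : ∀ y : ℝ, deriv (fun t => E.eval t) y =
      4 * (k : ℝ) * (y * ((f (k + 1)).eval y) ^ 2) := by
    intro y
    rw [Polynomial.deriv, hE']
    simp [eval_mul, eval_pow, eval_X]
  have hcont : ∀ s : Set ℝ, ContinuousOn (fun t => E.eval t) s :=
    fun s => (Polynomial.continuous E).continuousOn
  have hdiff : ∀ s : Set ℝ, DifferentiableOn ℝ (fun t => E.eval t) s :=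
    fun s y _ => (E.hasDerivAt y).differentiableAt.differentiableWithinAt
  have hmono : MonotoneOn (fun t => E.eval t) (Set.Icc 0 1) := by
    apply monotoneOn_of_deriv_nonneg (convex_Icc 0 1) (hcont _) (hdiff _)
    intro y hy
    rw [interior_Icc] at hy
    rw [hderiv]
    have : (0 : ℝ) ≤ y := hy.1.le
    have h2 : (0 : ℝ) ≤ ((f (k + 1)).eval y) ^ 2 := sq_nonneg _
    positivity
  have hanti : AntitoneOn (fun t => E.eval t) (Set.Icc (-1) 0) := by
    apply antitoneOn_of_deriv_nonpos (convex_Icc (-1) 0) (hcont _) (hdiff _)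
    intro y hy
    rw [interior_Icc] at hy
    rw [hderiv]
    have hy0 : y ≤ 0 := hy.2.le
    have h2 : (0 : ℝ) ≤ ((f (k + 1)).eval y) ^ 2 := sq_nonneg _
    have : y * ((f (k + 1)).eval y) ^ 2 ≤ 0 := mul_nonpos_of_nonpos_of_nonneg hy0 h2
    nlinarith [Nat.cast_nonneg (α := ℝ) k]
  have hE1 : E.eval 1 = ((n : ℝ) ^ 2 - (k : ℝ) ^ 2) * ((f k).eval 1) ^ 2 := by
    rw [hEeval]; ring
  have hEneg1 : E.eval (-1) = ((n : ℝ) ^ 2 - (k : ℝ) ^ 2) * ((f k).eval 1) ^ 2 := by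
    rw [hEeval, cheb_eval_neg_one_sq]; ring
  have hEx : E.eval x ≤ ((n : ℝ) ^ 2 - (k : ℝ) ^ 2) * ((f k).eval 1) ^ 2 := by
    rcases le_or_gt 0 x with h0 | h0
    · have := hmono (Set.mem_Icc.mpr ⟨h0, hx.2⟩) (Set.mem_Icc.mpr ⟨zero_le_one, le_refl 1⟩) hx.2
      simpa [hE1] using this
    · have := hanti (Set.mem_Icc.mpr ⟨le_refl (-1 : ℝ), by norm_num⟩)
        (Set.mem_Icc.mpr ⟨hx.1, h0.le⟩) hx.1
      simpa [hEneg1] using this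
  have hlow : ((n : ℝ) ^ 2 - (k : ℝ) ^ 2) * ((f k).eval x) ^ 2 ≤ E.eval x := by
    rw [hEeval]
    have hx2 : x ^ 2 ≤ 1 := by nlinarith [hx.1, hx.2]
    nlinarith [sq_nonneg ((f (k + 1)).eval x)]
  have hpos : (0 : ℝ) < (n : ℝ) ^ 2 - (k : ℝ) ^ 2 := by
    have : (k : ℝ) < (n : ℝ) := by exact_mod_cast hkn
    have hk0 : (0 : ℝ) ≤ (k : ℝ) := Nat.cast_nonneg k
    nlinarith
  nlinarith [hlow, hEx]

open Polynomial.Chebyshev in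
private theorem cheb_sq_bound' (n k : ℕ) (hkn : k ≤ n) (x : ℝ)
    (hx : x ∈ Set.Icc (-1 : ℝ) 1) :
    ((derivative^[k] (T ℝ (n : ℤ))).eval x) ^ 2 ≤
      ((derivative^[k] (T ℝ (n : ℤ))).eval 1) ^ 2 := by
  rcases lt_or_eq_of_le hkn with h | h
  · exact cheb_sq_bound n k h x hx
  · subst h
    have hz : derivative (derivative^[k] (T ℝ (k : ℤ))) = 0 := by
      have h0 : derivative^[k + 1] (T ℝ (k : ℤ)) = 0 :=
        iterate_derivative_eq_zero (lt_of_le_of_lt (cheb_natDegree_T_le k) (by omega))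
      rw [Function.iterate_succ_apply'] at h0
      exact h0
    have hdeg : (derivative^[k] (T ℝ (k : ℤ))).natDegree = 0 :=
      natDegree_eq_zero_of_derivative_eq_zero hz
    have hC := eq_C_of_natDegree_eq_zero hdeg
    rw [hC]
    simp

/-- The Chebyshev polynomial `T_n(x) = cos(n arccos x)` attains equality in
V. A. Markov's inequality: for `1 ≤ k ≤ n`,
`‖T_n⁽ᵏ⁾‖_{[−1,1]} = n²(n²−1²)⋯(n²−(k−1)²)/(2k−1)!!` while `‖T_n‖_{[−1,1]} = 1`. -/
theorem chebyshev_attains_va_markov (n k : ℕ) (hk : 1 ≤ k) (hkn : k ≤ n) :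
    (⨆ x : Set.Icc (-1 : ℝ) 1,
        |((Polynomial.derivative)^[k] (Polynomial.Chebyshev.T ℝ (n : ℤ))).eval ↑x|) =
      (∏ i ∈ Finset.range k, ((n : ℝ) ^ 2 - (i : ℝ) ^ 2)) /
        (Nat.doubleFactorial (2 * k - 1) : ℝ) ∧
    (⨆ x : Set.Icc (-1 : ℝ) 1, |(Polynomial.Chebyshev.T ℝ (n : ℤ)).eval ↑x|) = 1 := by
  haveI : Nonempty (Set.Icc (-1 : ℝ) 1) := ⟨⟨1, by norm_num⟩⟩
  set p : ℝ[X] := derivative^[k] (Polynomial.Chebyshev.T ℝ (n : ℤ)) with hp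
  set prd : ℝ := ∏ i ∈ Finset.range k, ((n : ℝ) ^ 2 - (i : ℝ) ^ 2) with hprd
  set D : ℝ := (Nat.doubleFactorial (2 * k - 1) : ℝ) with hD
  have hDpos : (0 : ℝ) < D := by
    rw [hD]; exact_mod_cast Nat.doubleFactorial_pos _
  have hprdpos : (0 : ℝ) < prd := by
    rw [hprd]
    apply Finset.prod_pos
    intro i hi
    have hi' : i < k := Finset.mem_range.mp hi
    have : (i : ℝ) < (n : ℝ) := by exact_mod_cast lt_of_lt_of_le hi' hkn
    have : (0 : ℝ) ≤ (i : ℝ) := Nat.cast_nonneg i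
    nlinarith
  have hform : D * p.eval 1 = prd := by
    have := cheb_eval_one_formula (n : ℤ) k
    rw [hp, hprd, hD]
    push_cast at this ⊢
    convert this using 2
  have hM : p.eval 1 = prd / D := by
    field_simp
    linarith [hform]
  have hMpos : 0 < p.eval 1 := by
    rw [hM]; positivity
  have hbound : ∀ x : Set.Icc (-1 : ℝ) 1, |p.eval ↑x| ≤ prd / D := by
    intro x
    have h := cheb_sq_bound' n k hkn x x.2
    rw [← hp] at h
    have : |p.eval ↑x| ≤ |p.eval 1| := by
      nlinarith [abs_nonneg (p.eval (x : ℝ)), abs_nonneg (p.eval 1),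
        sq_abs (p.eval (x : ℝ)), sq_abs (p.eval 1)]
    rw [abs_of_pos hMpos, hM] at this
    exact this
  constructor
  · refine le_antisymm (ciSup_le hbound) ?_
    have hb : BddAbove (Set.range fun x : Set.Icc (-1 : ℝ) 1 => |p.eval ↑x|) := by
      refine ⟨prd / D, ?_⟩
      rintro y ⟨x, rfl⟩
      exact hbound x
    have h1 := le_ciSup hb (⟨1, by norm_num⟩ : Set.Icc (-1 : ℝ) 1)
    have h2 : prd / D = |p.eval ((⟨1, by norm_num⟩ : Set.Icc (-1 : ℝ) 1) : ℝ)| := by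
      rw [show ((⟨1, by norm_num⟩ : Set.Icc (-1 : ℝ) 1) : ℝ) = (1 : ℝ) from rfl,
        abs_of_pos hMpos, hM]
    rw [h2]
    exact h1
  · have hb1 : ∀ x : Set.Icc (-1 : ℝ) 1, |(Polynomial.Chebyshev.T ℝ (n : ℤ)).eval ↑x| ≤ 1 := by
      intro x
      have hx := x.2
      have hc : (x : ℝ) = Real.cos (Real.arccos x) := (Real.cos_arccos hx.1 hx.2).symm
      rw [hc, Polynomial.Chebyshev.T_real_cos]
      exact abs_le.mpr ⟨neg_one_le_cos _, cos_le_one _⟩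
    refine le_antisymm (ciSup_le hb1) ?_
    have hb : BddAbove (Set.range fun x : Set.Icc (-1 : ℝ) 1 =>
        |(Polynomial.Chebyshev.T ℝ (n : ℤ)).eval ↑x|) := by
      refine ⟨1, ?_⟩
      rintro y ⟨x, rfl⟩
      exact hb1 x
    have h1 := le_ciSup hb (⟨1, by norm_num⟩ : Set.Icc (-1 : ℝ) 1)
    simpa [cheb_T_eval_one] using h1
end
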